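/- arXiv:1511.09259 — 10 statements merged into one kernel-verified Lean document; each statement's English description precedes it below -/
import Mathlib

section
/- Let T > 0 and 0 < q ≤ 1, and let (x'_1, y'_1), …, (x'_n, y'_n) be pairs of positive reals such that each pair is a (q,T)-pair (i.e., x'_i ≤ T, y'_i ≤ T, and |x'_i − y'_i| ≤ qT) and Σ_{i=1}^n x'_i = Σ_{i=1}^n y'_i. Then there exists a permutation ρ of {1,…,n} such that the alternating sequence x'_{ρ(1)}, y'_{ρ(1)}, x'_{ρ(2)}, y'_{ρ(2)}, …, x'_{ρ(n)}, y'_{ρ(n)} has all prefix sums nonnegative and every prefix sum strictly less than (1+q)T. -/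
private lemma qT_sum_nonpos : ∀ l : List ℝ, (∀ z ∈ l, z ≤ 0) → l.sum ≤ 0
  | [], _ => by simp
  | a :: l, h => by
    simp only [List.sum_cons]
    have h1 := h a (by simp)
    have h2 := qT_sum_nonpos l (fun z hz => h z (List.mem_cons_of_mem a hz))
    linarith

private lemma qT_key {α : Type*} (c : ℝ) (hc : 0 < c) (v : α → ℝ) (hv : ∀ a, |v a| ≤ c) :
    ∀ (m : ℕ) (L : List α), L.length ≤ m → ∀ S : ℝ, 0 ≤ S → S < c →
      S + (L.map v).sum = 0 →
      ∃ L' : List α, L'.Perm L ∧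
        (∀ k, 0 ≤ S + ((L'.take k).map v).sum) ∧
        (∀ k < L'.length,
          S + ((L'.take k).map v).sum < c ∨ S + ((L'.take (k + 1)).map v).sum < c) := by
  intro m
  induction m with
  | zero =>
    intro L hL S hS0 hSc _
    have hLnil : L = [] := List.length_eq_zero_iff.mp (Nat.le_zero.mp hL)
    subst hLnil
    exact ⟨[], List.Perm.refl _, by intro k; simpa using hS0, by intro k hk; simp at hk⟩
  | succ m ih =>
    intro L hL S hS0 hSc hsum
    rcases eq_or_ne L [] with rfl | hne
    · exact ⟨[], List.Perm.refl _, by intro k; simpa using hS0, by intro k hk; simp at hk⟩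
    by_cases hA : ∃ a ∈ L, 0 ≤ S + v a ∧ S + v a < c
    · -- Case A : one step stays in [0, c)
      obtain ⟨a, haL, ha0, hac⟩ := hA
      obtain ⟨L₁, L₂, rfl⟩ := List.append_of_mem haL
      have hperm : (a :: (L₁ ++ L₂)).Perm (L₁ ++ a :: L₂) := List.perm_middle.symm
      have hlenR : (L₁ ++ L₂).length ≤ m := by
        simp only [List.length_append, List.length_cons] at hL ⊢; omega
      have hsumR : (S + v a) + ((L₁ ++ L₂).map v).sum = 0 := by
        have e : ((L₁ ++ a :: L₂).map v).sum = v a + ((L₁ ++ L₂).map v).sum := by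
          simp only [List.map_append, List.sum_append, List.map_cons, List.sum_cons]; ring
        rw [e] at hsum; linarith
      obtain ⟨L'', hp'', h1'', h2''⟩ := ih (L₁ ++ L₂) hlenR (S + v a) ha0 hac hsumR
      have epre : ∀ k, S + (((a :: L'').take (k + 1)).map v).sum
          = (S + v a) + ((L''.take k).map v).sum := by
        intro k
        simp only [List.take_succ_cons, List.map_cons, List.sum_cons]; ring
      refine ⟨a :: L'', (hp''.cons a).trans hperm, ?_, ?_⟩
      · intro k
        cases k with
        | zero => simpa using hS0
        | succ k => rw [epre k]; exact h1'' k
      · intro k hk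
        cases k with
        | zero => left; simpa using hSc
        | succ k =>
          have hk' : k < L''.length := by simpa using hk
          rcases h2'' k hk' with h | h
          · left; rw [epre k]; exact h
          · right; rw [epre (k + 1)]; exact h
    · -- Case B : forced excursion above c, then immediate return
      push_neg at hA
      have hex : ∃ a ∈ L, -S ≤ v a := by
        by_contra h
        push_neg at h
        obtain ⟨b, L₀, rfl⟩ := List.exists_cons_of_ne_nil hne
        have h1 : v b < -S := h b (by simp)
        have h2 : (L₀.map v).sum ≤ 0 := by
          apply qT_sum_nonpos
          intro z hz
          obtain ⟨w, hw, rfl⟩ := List.mem_map.mp hz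
          have := h w (by simp [hw])
          linarith
        simp only [List.map_cons, List.sum_cons] at hsum
        linarith
      obtain ⟨a, haL, haS⟩ := hex
      have haB : c ≤ S + v a := hA a haL (by linarith)
      obtain ⟨L₁, L₂, rfl⟩ := List.append_of_mem haL
      have hsumR : (S + v a) + ((L₁ ++ L₂).map v).sum = 0 := by
        have e : ((L₁ ++ a :: L₂).map v).sum = v a + ((L₁ ++ L₂).map v).sum := by
          simp only [List.map_append, List.sum_append, List.map_cons, List.sum_cons]; ring
        rw [e] at hsum; linarith
      have hRne : (L₁ ++ L₂) ≠ [] := by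
        intro h; rw [h] at hsumR; simp at hsumR; linarith
      have hexb : ∃ b ∈ L₁ ++ L₂, S + v a + v b < c := by
        by_contra h
        push_neg at h
        have hpos : ∀ z ∈ (L₁ ++ L₂).map v, c - S ≤ z := by
          intro z hz
          obtain ⟨b, hbR, rfl⟩ := List.mem_map.mp hz
          have h1 : c ≤ S + v a + v b := h b hbR
          have h2 : v a ≤ c := le_of_abs_le (hv a)
          have hbL : b ∈ L₁ ++ a :: L₂ := by
            rcases List.mem_append.mp hbR with hb | hb
            · exact List.mem_append.mpr (Or.inl hb)
            · exact List.mem_append.mpr (Or.inr (List.mem_cons_of_mem a hb))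
          have h3 : c ≤ S + v b := hA b hbL (by linarith)
          linarith
        obtain ⟨z0, Z, hZ⟩ := List.exists_cons_of_ne_nil
          (fun h' => hRne (List.map_eq_nil_iff.mp h'))
        have h4 : c - S ≤ z0 := hpos z0 (by rw [hZ]; simp)
        have h5 : 0 ≤ Z.sum := by
          apply List.sum_nonneg
          intro z hz
          have := hpos z (by rw [hZ]; exact List.mem_cons_of_mem z0 hz)
          linarith
        have h6 : ((L₁ ++ L₂).map v).sum = z0 + Z.sum := by rw [hZ]; simp
        linarith
      obtain ⟨b, hbR, hbc⟩ := hexb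
      have hb0 : 0 ≤ S + v a + v b := by
        have := neg_le_of_abs_le (hv b); linarith
      obtain ⟨R₁, R₂, hRd⟩ := List.append_of_mem hbR
      have hlenR' : (R₁ ++ R₂).length ≤ m := by
        have : (L₁ ++ L₂).length = (R₁ ++ R₂).length + 1 := by
          rw [hRd]; simp only [List.length_append, List.length_cons]; omega
        simp only [List.length_append, List.length_cons] at hL this ⊢; omega
      have hsumR' : (S + v a + v b) + ((R₁ ++ R₂).map v).sum = 0 := by
        have e : ((L₁ ++ L₂).map v).sum = v b + ((R₁ ++ R₂).map v).sum := by
          rw [hRd]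
          simp only [List.map_append, List.sum_append, List.map_cons, List.sum_cons]; ring
        rw [e] at hsumR; linarith
      obtain ⟨L'', hp'', h1'', h2''⟩ := ih (R₁ ++ R₂) hlenR' (S + v a + v b) hb0 hbc hsumR'
      have hperm : (a :: b :: L'').Perm (L₁ ++ a :: L₂) := by
        have p1 : (b :: L'').Perm (L₁ ++ L₂) := by
          refine (hp''.cons b).trans ?_
          rw [hRd]; exact List.perm_middle.symm
        exact (p1.cons a).trans List.perm_middle.symm
      have epre : ∀ k, S + (((a :: b :: L'').take (k + 2)).map v).sum
          = (S + v a + v b) + ((L''.take k).map v).sum := by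
        intro k
        simp only [List.take_succ_cons, List.map_cons, List.sum_cons]; ring
      refine ⟨a :: b :: L'', hperm, ?_, ?_⟩
      · intro k
        match k with
        | 0 => simpa using hS0
        | 1 =>
          have : S + (((a :: b :: L'').take 1).map v).sum = S + v a := by simp
          rw [this]; linarith
        | (k + 2) => rw [epre k]; exact h1'' k
      · intro k hk
        match k with
        | 0 => left; simpa using hSc
        | 1 =>
          right
          have : S + (((a :: b :: L'').take 2).map v).sum = S + v a + v b := by
            simp; ring
          rw [this]; exact hbc
        | (k + 2) =>
          have hk' : k < L''.length := by
            simp only [List.length_cons] at hk; omega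
          rcases h2'' k hk' with h | h
          · left; rw [epre k]; exact h
          · right; rw [epre (k + 1)]; exact h

private lemma fin_filter_sum {n : ℕ} (G : ℕ → ℝ) (j : ℕ) (hj : j ≤ n) :
    ∑ i ∈ Finset.univ.filter (fun i : Fin n => i.val < j), G i.val
      = ∑ k ∈ Finset.range j, G k := by
  refine Finset.sum_bij' (fun i _ => i.val) (fun k hk => ⟨k, ?_⟩) ?_ ?_ ?_ ?_ ?_
  · exact lt_of_lt_of_le (Finset.mem_range.mp hk) hj
  · intro i hi
    simp only [Finset.mem_filter] at hi
    exact Finset.mem_range.mpr hi.2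
  · intro k hk
    simp only [Finset.mem_filter, Finset.mem_univ, true_and]
    exact Finset.mem_range.mp hk
  · intro i _; rfl
  · intro k _; rfl
  · intro i _; rfl

/-- **Sequencing (q,T)-pairs.**
Given `n` pairs `(x'_i, y'_i)` of positive reals, each a `(q,T)`-pair
(`x'_i ≤ T`, `y'_i ≤ T`, `|x'_i − y'_i| ≤ qT`), with equal total sums,
there is a permutation `ρ` such that the alternating sequence
`x'_{ρ(1)}, y'_{ρ(1)}, …, x'_{ρ(n)}, y'_{ρ(n)}` has all prefix sums nonnegative
and strictly below `(1+q)T`. -/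
theorem qT_pairs_sequencing
    (n : ℕ) (T q : ℝ) (hT : 0 < T) (hq0 : 0 < q) (hq1 : q ≤ 1)
    (x y : Fin n → ℝ)
    (hxpos : ∀ i, 0 < x i) (hypos : ∀ i, 0 < y i)
    (hxT : ∀ i, x i ≤ T) (hyT : ∀ i, y i ≤ T)
    (hqT : ∀ i, |x i - y i| ≤ q * T)
    (hsum : ∑ i, x i = ∑ i, y i) :
    ∃ ρ : Equiv.Perm (Fin n),
      ∀ t : Fin n,
        (0 ≤ (∑ i ∈ Finset.univ.filter (· < t), (x (ρ i) - y (ρ i))) + x (ρ t)) ∧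
        (0 ≤ ∑ i ∈ Finset.univ.filter (· ≤ t), (x (ρ i) - y (ρ i))) ∧
        ((∑ i ∈ Finset.univ.filter (· < t), (x (ρ i) - y (ρ i))) + x (ρ t) < (1 + q) * T) ∧
        (∑ i ∈ Finset.univ.filter (· ≤ t), (x (ρ i) - y (ρ i)) < (1 + q) * T) := by
  have hc : (0:ℝ) < q * T := mul_pos hq0 hT
  have hsum0 : (0:ℝ) + ((List.finRange n).map (fun i => x i - y i)).sum = 0 := by
    rw [zero_add, ← Fin.sum_univ_def (fun i => x i - y i)]
    simp only [Finset.sum_sub_distrib]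
    rw [hsum]; ring
  obtain ⟨L, hperm, h1, h2⟩ := qT_key (q * T) hc (fun i => x i - y i) hqT n
    (List.finRange n) (by simp) 0 le_rfl hc hsum0
  have hlen : L.length = n := by
    rw [hperm.length_eq, List.length_finRange]
  have hnodup : L.Nodup := hperm.nodup_iff.mpr (List.nodup_finRange n)
  have hgl : ∀ t : Fin n, (t : ℕ) < L.length := fun t => by rw [hlen]; exact t.isLt
  let g : Fin n → Fin n := fun t => L.get ⟨t.val, hgl t⟩
  have hginj : Function.Injective g := by
    intro s t hst
    have h' : (s : ℕ) = (t : ℕ) := by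
      have := List.nodup_iff_injective_get.mp hnodup hst
      simpa using this
    exact Fin.ext h'
  have hgbij : Function.Bijective g := Finite.injective_iff_bijective.mp hginj
  refine ⟨Equiv.ofBijective g hgbij, ?_⟩
  intro t
  have hρ : ∀ i, (Equiv.ofBijective g hgbij) i = g i := fun i => rfl
  let P : ℕ → ℝ := fun k => ((L.take k).map (fun i => x i - y i)).sum
  have step : ∀ i : Fin n, P (i.val + 1) = P i.val + (x (g i) - y (g i)) := by
    intro i
    have hi : i.val < (L.map (fun i => x i - y i)).length := by
      rw [List.length_map]; exact hgl i
    have e := List.sum_take_succ (L.map (fun i => x i - y i)) i.val hi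
    show ((L.take (i.val + 1)).map (fun i => x i - y i)).sum
        = ((L.take i.val).map (fun i => x i - y i)).sum + (x (g i) - y (g i))
    rw [List.map_take, List.map_take, e, List.getElem_map]
    rfl
  have e2 : ∀ i : Fin n, x (g i) - y (g i) = (fun k => P (k + 1) - P k) i.val := by
    intro i
    have h := step i
    simp only
    linarith
  have tele : ∀ j : ℕ, ∑ k ∈ Finset.range j, (fun k => P (k + 1) - P k) k = P j := by
    intro j
    rw [Finset.sum_range_sub P]
    have : P 0 = 0 := by simp [P]
    rw [this, sub_zero]
  have hfl : ∑ i ∈ Finset.univ.filter (· < t), (x (g i) - y (g i)) = P t.val := by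
    have e1 : Finset.univ.filter (· < t)
        = Finset.univ.filter (fun i : Fin n => i.val < t.val) := by
      exact Finset.filter_congr (fun i _ => Iff.rfl)
    rw [e1, Finset.sum_congr rfl (fun i _ => e2 i),
      fin_filter_sum (fun k => P (k + 1) - P k) t.val t.isLt.le, tele]
  have hfle : ∑ i ∈ Finset.univ.filter (· ≤ t), (x (g i) - y (g i)) = P (t.val + 1) := by
    have e1 : Finset.univ.filter (· ≤ t)
        = Finset.univ.filter (fun i : Fin n => i.val < t.val + 1) := by
      exact Finset.filter_congr (fun i _ => by rw [Nat.lt_succ_iff]; exact Iff.rfl)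
    rw [e1, Finset.sum_congr rfl (fun i _ => e2 i),
      fin_filter_sum (fun k => P (k + 1) - P k) (t.val + 1) t.isLt, tele]
  have hP0 : ∀ k, 0 ≤ P k := by intro k; have := h1 k; linarith
  have hPlt : P t.val < q * T ∨ P (t.val + 1) < q * T := by
    rcases h2 t.val (hgl t) with h | h
    · left; linarith
    · right; linarith
  have hstep := step t
  have hvb := abs_le.mp (hqT (g t))
  have hxb := hxT (g t)
  have hyb := hyT (g t)
  have hxp := hxpos (g t)
  have hyp := hypos (g t)
  have hqTT : q * T ≤ T := by nlinarith
  simp only [hρ, hfl, hfle]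
  refine ⟨?_, ?_, ?_, ?_⟩
  · have := hP0 t.val; linarith
  · exact hP0 (t.val + 1)
  · rcases hPlt with h | h
    · linarith
    · linarith
  · rcases hPlt with h | h
    · nlinarith
    · linarith
end

section
/- Let x_1 ≥ x_2 ≥ … ≥ x_n and y_1 ≥ y_2 ≥ … ≥ y_n be positive reals with Σ_{i=1}^n x_i = Σ_{i=1}^n y_i, let μ = max(x_1, y_1), and let D = max_{1≤i≤n} |x_i − y_i|. Then there exists a feasible alternating ordering whose value is at most μ + D; in particular, since D ≤ μ, there always exists a feasible alternating ordering of value at most 2μ. -/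
namespace AltStock

variable {ι : Type*}

private lemma list_sum_nonpos : ∀ l : List ℝ, (∀ a ∈ l, a ≤ 0) → l.sum ≤ 0 := by
  intro l
  induction l with
  | nil => simp
  | cons a l ih =>
      intro h
      have h1 := h a (by simp)
      have h2 := ih (fun b hb => h b (by simp [hb]))
      simp only [List.sum_cons]
      linarith

/-- Merge: take the next negative pair whenever the stock allows it,
otherwise the next nonnegative pair. -/
noncomputable def merge (x y : ι → ℝ) : List ι → List ι → ℝ → List ι
  | P, [], _ => P
  | [], j :: N, s => j :: merge x y [] N (s + (x j - y j))
  | p :: P, j :: N, s =>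
      if 0 ≤ s + (x j - y j) then j :: merge x y (p :: P) N (s + (x j - y j))
      else p :: merge x y P (j :: N) (s + (x p - y p))
  termination_by P N _ => P.length + N.length

theorem merge_perm (x y : ι → ℝ) (P N : List ι) (s : ℝ) :
    (merge x y P N s).Perm (P ++ N) := by
  induction P, N, s using merge.induct x y with
  | case1 P s => rw [merge.eq_1]; simp
  | case2 j N s ih =>
      rw [merge.eq_2]
      simpa using ih.cons j
  | case3 p P j N s hc ih =>
      rw [merge.eq_3, if_pos hc]
      exact (ih.cons j).trans List.perm_middle.symm
  | case4 p P j N s hc ih =>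
      rw [merge.eq_3, if_neg hc]
      exact ih.cons p

private lemma sum_map_sub (x y : ι → ℝ) (l : List ι) :
    (l.map (fun k => x k - y k)).sum = (l.map x).sum - (l.map y).sum := by
  induction l with
  | nil => simp
  | cons a l ih => simp [ih]; ring

theorem merge_spec (x y : ι → ℝ) (μ D : ℝ)
    (hxμ : ∀ i, x i ≤ μ) (hyμ : ∀ i, y i ≤ μ) (hD0 : 0 ≤ D)
    (hDu : ∀ i, x i - y i ≤ D) (hDl : ∀ i, y i - x i ≤ D)
    (P N : List ι) (s : ℝ) :
    (∀ p ∈ P, 0 ≤ x p - y p) →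
    (∀ j ∈ N, x j - y j < 0) →
    N.Pairwise (fun a b => x b ≤ x a) →
    0 ≤ s →
    s + (((P ++ N).map (fun i => x i - y i)).sum) = 0 →
    (∀ j ∈ N.head?, s + x j ≤ μ + D) →
    ∀ (t1 : List ι) (i : ι) (t2 : List ι),
      merge x y P N s = t1 ++ i :: t2 →
      0 ≤ s + ((t1.map fun k => x k - y k).sum + (x i - y i)) ∧
      s + (t1.map fun k => x k - y k).sum + x i ≤ μ + D := by
  induction P, N, s using merge.induct x y with
  | case1 P s =>
      intro hP _ _ hs htot _ t1 i t2 heq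
      rw [merge.eq_1] at heq
      subst heq
      have ht1 : ∀ k ∈ t1, 0 ≤ x k - y k := fun k hk => hP k (by simp [hk])
      have hi : 0 ≤ x i - y i := hP i (by simp)
      have ht2 : ∀ k ∈ t2, 0 ≤ x k - y k := fun k hk => hP k (by simp [hk])
      have h1 : 0 ≤ (t1.map fun k => x k - y k).sum :=
        List.sum_nonneg (by simpa using ht1)
      have h2 : 0 ≤ (t2.map fun k => x k - y k).sum :=
        List.sum_nonneg (by simpa using ht2)
      simp only [List.map_append, List.sum_append, List.map_cons, List.sum_cons,
        List.map_nil, List.sum_nil, List.append_nil] at htot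
      constructor
      · linarith
      · have := hxμ i
        linarith
  | case2 j N s ih =>
      intro hP hN hpair hs htot hhead t1 i t2 heq
      rw [merge.eq_2] at heq
      have hzj : x j - y j < 0 := hN j (by simp)
      have hNsum : ((N.map fun k => x k - y k)).sum ≤ 0 := by
        apply list_sum_nonpos
        intro a ha
        obtain ⟨b, hb, rfl⟩ := List.mem_map.mp ha
        exact le_of_lt (hN b (by simp [hb]))
      simp only [List.nil_append, List.map_cons, List.sum_cons] at htot
      have hs' : 0 ≤ s + (x j - y j) := by linarith
      have hxNj : ∀ b ∈ N, x b ≤ x j := (List.pairwise_cons.mp hpair).1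
      cases t1 with
      | nil =>
        simp only [List.nil_append] at heq
        injection heq with h1 h2
        subst h1
        refine ⟨by simpa using hs', ?_⟩
        simpa using hhead j (by simp)
      | cons a t1' =>
        simp only [List.cons_append] at heq
        injection heq with h1 heq'
        subst h1
        have hrec := ih (by simp) (fun b hb => hN b (by simp [hb]))
          (List.Pairwise.of_cons hpair) hs'
          (by simp only [List.nil_append]; linarith)
          (by
            intro b hb
            have hbN : b ∈ N := List.mem_of_mem_head? hb
            have h1 : x b ≤ x j := hxNj b hbN
            have h2 := hhead j (by simp)
            linarith)
          t1' i t2 heq'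
        simp only [List.map_cons, List.sum_cons]
        constructor
        · have := hrec.1; linarith
        · have := hrec.2; linarith
  | case3 p P j N s hc ih =>
      intro hP hN hpair hs htot hhead t1 i t2 heq
      rw [merge.eq_3, if_pos hc] at heq
      have hzj : x j - y j < 0 := hN j (by simp)
      have hxNj : ∀ b ∈ N, x b ≤ x j := (List.pairwise_cons.mp hpair).1
      simp only [List.map_append, List.sum_append, List.map_cons, List.sum_cons] at htot
      cases t1 with
      | nil =>
        simp only [List.nil_append] at heq
        injection heq with h1 h2
        subst h1
        refine ⟨by simpa using hc, ?_⟩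
        simpa using hhead j (by simp)
      | cons a t1' =>
        simp only [List.cons_append] at heq
        injection heq with h1 heq'
        subst h1
        have hrec := ih hP (fun b hb => hN b (by simp [hb]))
          (List.Pairwise.of_cons hpair) hc
          (by
            simp only [List.cons_append, List.map_cons, List.map_append,
              List.sum_cons, List.sum_append]
            linarith)
          (by
            intro b hb
            have hbN : b ∈ N := List.mem_of_mem_head? hb
            have h1 : x b ≤ x j := hxNj b hbN
            have h2 := hhead j (by simp)
            linarith)
          t1' i t2 heq'
        simp only [List.map_cons, List.sum_cons]
        constructor
        · have := hrec.1; linarith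
        · have := hrec.2; linarith
  | case4 p P j N s hc ih =>
      intro hP hN hpair hs htot hhead t1 i t2 heq
      rw [merge.eq_3, if_neg hc] at heq
      push_neg at hc
      have hzp : 0 ≤ x p - y p := hP p (by simp)
      have hyjD : y j - x j ≤ D := hDl j
      simp only [List.map_append, List.sum_append, List.map_cons, List.sum_cons] at htot
      cases t1 with
      | nil =>
        simp only [List.nil_append] at heq
        injection heq with h1 h2
        subst h1
        constructor
        · simp only [List.map_nil, List.sum_nil]
          linarith
        · have := hxμ p
          simp only [List.map_nil, List.sum_nil]
          linarith
      | cons a t1' =>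
        simp only [List.cons_append] at heq
        injection heq with h1 heq'
        subst h1
        have hrec := ih (fun b hb => hP b (by simp [hb])) hN hpair
          (by linarith)
          (by
            simp only [List.map_append, List.sum_append, List.map_cons, List.sum_cons]
            linarith)
          (by
            intro b hb
            obtain rfl : j = b := by simpa using hb
            have h1 := hyμ j
            have h2 := hDu p
            linarith)
          t1' i t2 heq'
        simp only [List.map_cons, List.sum_cons]
        constructor
        · have := hrec.1; linarith
        · have := hrec.2; linarith

private lemma sum_filter_val_lt {n : ℕ} (L : List (Fin n)) (hlen : L.length = n)
    (g : Fin n → ℝ) : ∀ m : ℕ, m ≤ n →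
    ∑ i ∈ Finset.univ.filter (fun i : Fin n => (i : ℕ) < m),
      g (L.get (Fin.cast hlen.symm i)) = ((L.map g).take m).sum := by
  intro m
  induction m with
  | zero => simp
  | succ m ihm =>
      intro hm
      have hmn : m < n := hm
      have hset : Finset.univ.filter (fun i : Fin n => (i : ℕ) < m + 1)
          = insert (⟨m, hmn⟩ : Fin n)
              (Finset.univ.filter (fun i : Fin n => (i : ℕ) < m)) := by
        ext i
        simp only [Finset.mem_filter, Finset.mem_univ, true_and, Finset.mem_insert,
          Fin.ext_iff]
        omega
      rw [hset, Finset.sum_insert (by simp)]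
      rw [ihm (le_of_lt hmn)]
      have hmL : m < (L.map g).length := by simpa [hlen] using hmn
      rw [List.sum_take_succ _ m hmL]
      have hgm : (L.map g)[m] = g (L.get (Fin.cast hlen.symm ⟨m, hmn⟩)) := by
        simp [List.get_eq_getElem]
      rw [hgm]
      ring

end AltStock



/-- **2-approximation bound for the alternating stock size problem.**
For nonincreasing positive sequences `x, y` with equal sums, with `μ = max(x₁, y₁)`
and `D = max_i |x_i − y_i|`, there is a feasible alternating ordering whose value
(maximum prefix `∑_{i≤t} x_{σ(i)} − ∑_{i<t} y_{ν(i)}`) is at most `μ + D`;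
in particular at most `2μ`. -/
theorem alternating_stock_size_two_approx
    (n : ℕ) (hn : 0 < n) (x y : Fin n → ℝ)
    (hx : Antitone x) (hy : Antitone y)
    (hxpos : ∀ i, 0 < x i) (hypos : ∀ i, 0 < y i)
    (hsum : ∑ i, x i = ∑ i, y i)
    (μ D : ℝ)
    (hμ : μ = max (x ⟨0, hn⟩) (y ⟨0, hn⟩))
    (hD : D = Finset.univ.sup' ⟨⟨0, hn⟩, Finset.mem_univ _⟩ (fun i => |x i - y i|)) :
    ∃ σ ν : Equiv.Perm (Fin n),
      (∀ t : Fin n, 0 ≤ ∑ i ∈ Finset.univ.filter (· ≤ t), (x (σ i) - y (ν i))) ∧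
      (∀ t : Fin n,
        (∑ i ∈ Finset.univ.filter (· ≤ t), x (σ i))
          - (∑ i ∈ Finset.univ.filter (· < t), y (ν i)) ≤ μ + D) ∧
      (∀ t : Fin n,
        (∑ i ∈ Finset.univ.filter (· ≤ t), x (σ i))
          - (∑ i ∈ Finset.univ.filter (· < t), y (ν i)) ≤ 2 * μ) := by
  classical
  have hxμ : ∀ i, x i ≤ μ := by
    intro i
    have : x i ≤ x ⟨0, hn⟩ := hx (by simp [Fin.le_def])
    rw [hμ]; exact this.trans (le_max_left _ _)
  have hyμ : ∀ i, y i ≤ μ := by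
    intro i
    have : y i ≤ y ⟨0, hn⟩ := hy (by simp [Fin.le_def])
    rw [hμ]; exact this.trans (le_max_right _ _)
  have habsD : ∀ i, |x i - y i| ≤ D := by
    intro i
    rw [hD]
    exact Finset.le_sup' (fun i => |x i - y i|) (Finset.mem_univ i)
  have hD0 : 0 ≤ D := le_trans (abs_nonneg _) (habsD ⟨0, hn⟩)
  have hDu : ∀ i, x i - y i ≤ D := fun i => le_trans (le_abs_self _) (habsD i)
  have hDl : ∀ i, y i - x i ≤ D := by
    intro i
    have h1 : |y i - x i| ≤ D := by rw [abs_sub_comm]; exact habsD i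
    exact le_trans (le_abs_self _) h1
  have hDμ : D ≤ μ := by
    rw [hD]
    apply Finset.sup'_le
    intro i _
    rw [abs_le]
    constructor
    · have := hxpos i; have := hypos i; have := hxμ i; have := hyμ i; linarith
    · have := hxpos i; have := hypos i; have := hxμ i; have := hyμ i; linarith
  -- the two lists of indices
  set P0 : List (Fin n) := (List.finRange n).filter (fun i => decide (0 ≤ x i - y i))
    with hP0def
  set N0 : List (Fin n) := (List.finRange n).filter (fun i => !decide (0 ≤ x i - y i))
    with hN0def
  have hP0 : ∀ p ∈ P0, 0 ≤ x p - y p := by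
    intro p hp
    have := (List.mem_filter.mp hp).2
    simpa using this
  have hN0 : ∀ j ∈ N0, x j - y j < 0 := by
    intro j hj
    have := (List.mem_filter.mp hj).2
    simp only [Bool.not_eq_true', decide_eq_false_iff_not, not_le] at this
    linarith
  have hpair : N0.Pairwise (fun a b => x b ≤ x a) := by
    refine List.Pairwise.imp ?_ ((List.pairwise_lt_finRange n).filter _)
    intro a b hab
    exact hx hab.le
  have hperm0 : (P0 ++ N0).Perm (List.finRange n) :=
    List.filter_append_perm _ _
  have hzsum : ∑ i, (x i - y i) = 0 := by
    simp only [Finset.sum_sub_distrib, hsum, sub_self]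
  have htot0 : (0 : ℝ) + (((P0 ++ N0).map (fun i => x i - y i)).sum) = 0 := by
    rw [zero_add]
    rw [(hperm0.map (fun i => x i - y i)).sum_eq, ← Fin.sum_univ_def, hzsum]
  -- the merged order
  set L : List (Fin n) := AltStock.merge x y P0 N0 0 with hLdef
  have hLperm : L.Perm (List.finRange n) :=
    (AltStock.merge_perm x y P0 N0 0).trans hperm0
  have hlen : L.length = n := by simpa using hLperm.length_eq
  have hnodup : L.Nodup := hLperm.nodup_iff.mpr (List.nodup_finRange n)
  have hinj : Function.Injective (fun t : Fin n => L.get (Fin.cast hlen.symm t)) := by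
    intro a b hab
    have := (hnodup.get_inj_iff).mp hab
    simpa [Fin.ext_iff] using this
  let σ : Equiv.Perm (Fin n) :=
    Equiv.ofBijective _ (Finite.injective_iff_bijective.mp hinj)
  have hσ : ∀ t : Fin n, σ t = L.get (Fin.cast hlen.symm t) := fun t => rfl
  refine ⟨σ, σ, ?_⟩
  -- sum conversion
  have hconv : ∀ (g : Fin n → ℝ) (m : ℕ), m ≤ n →
      ∑ i ∈ Finset.univ.filter (fun i : Fin n => (i : ℕ) < m), g (σ i)
        = ((L.map g).take m).sum := by
    intro g m hm
    rw [← AltStock.sum_filter_val_lt L hlen g m hm]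
    apply Finset.sum_congr rfl
    intro i _
    rw [hσ]
  -- main spec applied at each t
  have hmain : ∀ t : Fin n,
      0 ≤ ((L.take (t : ℕ)).map (fun k => x k - y k)).sum
            + (x (L.get (Fin.cast hlen.symm t)) - y (L.get (Fin.cast hlen.symm t))) ∧
      ((L.take (t : ℕ)).map (fun k => x k - y k)).sum
            + x (L.get (Fin.cast hlen.symm t)) ≤ μ + D := by
    intro t
    have hmL : (t : ℕ) < L.length := by rw [hlen]; exact t.isLt
    have hdecomp : L = L.take (t : ℕ) ++ L[(t : ℕ)] :: L.drop ((t : ℕ) + 1) := by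
      conv_lhs => rw [← List.take_append_drop (t : ℕ) L]
      rw [List.drop_eq_getElem_cons hmL]
    have hres := AltStock.merge_spec x y μ D hxμ hyμ hD0 hDu hDl P0 N0 0
      hP0 hN0 hpair le_rfl htot0
      (by
        intro j hj
        have := hxμ j
        rw [zero_add]
        linarith)
      (L.take (t : ℕ)) (L[(t : ℕ)]) (L.drop ((t : ℕ) + 1)) (by rw [← hLdef]; exact hdecomp)
    have hget : L.get (Fin.cast hlen.symm t) = L[(t : ℕ)] := by
      simp [List.get_eq_getElem]
    rw [hget]
    constructor
    · have := hres.1; rw [zero_add] at this; linarith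
    · have := hres.2; rw [zero_add] at this; linarith
  -- translate filters
  have hfilter_le : ∀ t : Fin n, Finset.univ.filter (· ≤ t)
      = Finset.univ.filter (fun i : Fin n => (i : ℕ) < (t : ℕ) + 1) := by
    intro t
    ext i
    simp only [Finset.mem_filter, Finset.mem_univ, true_and, Fin.le_def]
    omega
  have hfilter_lt : ∀ t : Fin n, Finset.univ.filter (· < t)
      = Finset.univ.filter (fun i : Fin n => (i : ℕ) < (t : ℕ)) := by
    intro t
    ext i
    simp only [Finset.mem_filter, Finset.mem_univ, true_and, Fin.lt_def]
  have key : ∀ t : Fin n,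
      (0 ≤ ∑ i ∈ Finset.univ.filter (· ≤ t), (x (σ i) - y (σ i))) ∧
      ((∑ i ∈ Finset.univ.filter (· ≤ t), x (σ i))
          - (∑ i ∈ Finset.univ.filter (· < t), y (σ i)) ≤ μ + D) := by
    intro t
    have hmL : (t : ℕ) < (L.map (fun k => x k - y k)).length := by simp [hlen]
    have hmLx : (t : ℕ) < (L.map x).length := by simp [hlen]
    have hsucc : (t : ℕ) + 1 ≤ n := t.isLt
    have hget : L.get (Fin.cast hlen.symm t) = L[(t : ℕ)] := by
      simp [List.get_eq_getElem]
    have h1 : ∑ i ∈ Finset.univ.filter (· ≤ t), (x (σ i) - y (σ i))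
        = ((L.take (t : ℕ)).map (fun k => x k - y k)).sum
            + (x (L.get (Fin.cast hlen.symm t)) - y (L.get (Fin.cast hlen.symm t))) := by
      rw [hfilter_le t, hconv (fun k => x k - y k) ((t : ℕ) + 1) hsucc,
        List.sum_take_succ _ _ hmL]
      congr 1
      · rw [List.map_take]
      · rw [hget]; simp only [List.getElem_map]
    have h2 : ∑ i ∈ Finset.univ.filter (· ≤ t), x (σ i)
        = ((L.take (t : ℕ)).map x).sum + x (L.get (Fin.cast hlen.symm t)) := by
      rw [hfilter_le t, hconv x ((t : ℕ) + 1) hsucc, List.sum_take_succ _ _ hmLx]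
      congr 1
      · rw [List.map_take]
      · rw [hget]; simp only [List.getElem_map]
    have h3 : ∑ i ∈ Finset.univ.filter (· < t), y (σ i)
        = ((L.take (t : ℕ)).map y).sum := by
      rw [hfilter_lt t, hconv y (t : ℕ) (le_of_lt t.isLt), List.map_take]
    have hsub := AltStock.sum_map_sub x y (L.take (t : ℕ))
    obtain ⟨hA, hB⟩ := hmain t
    constructor
    · rw [h1]; exact hA
    · rw [h2, h3]
      linarith
  refine ⟨fun t => (key t).1, fun t => (key t).2, fun t => ?_⟩
  have := (key t).2
  linarith
end

section
/- Let x'_1, …, x'_ℓ and y'_1, …, y'_ℓ be positive reals satisfying: (i) Σ_{i=1}^ℓ x'_i − Σ_{i=1}^ℓ y'_i ≥ 0; (ii) x'_1 − y'_1 ≥ 0; (iii) x'_i − y'_i ≤ 0 for 2 ≤ i ≤ ℓ; (iv) y'_1 ≥ y'_2 ≥ … ≥ y'_ℓ. Then the alternating sequence x'_1, y'_1, x'_2, y'_2, …, x'_ℓ, y'_ℓ has all prefix sums nonnegative, and every prefix sum is at most x'_1. -/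
/-- **Sequencing a large alternating batch.**
If positive reals `x'_1,…,x'_ℓ, y'_1,…,y'_ℓ` satisfy
(i) `Σ x'_i − Σ y'_i ≥ 0`, (ii) `x'_1 ≥ y'_1`, (iii) `x'_i ≤ y'_i` for `i ≥ 2`,
(iv) `y'` nonincreasing, then the alternating sequence
`x'_1, y'_1, …, x'_ℓ, y'_ℓ` has all prefix sums in `[0, x'_1]`. -/
theorem alternating_batch_sequencing
    (ℓ : ℕ) (hℓ : 1 ≤ ℓ) (x' y' : ℕ → ℝ)
    (hxpos : ∀ i, 1 ≤ i → i ≤ ℓ → 0 < x' i)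
    (hypos : ∀ i, 1 ≤ i → i ≤ ℓ → 0 < y' i)
    (h1 : 0 ≤ ∑ i ∈ Finset.Icc 1 ℓ, x' i - ∑ i ∈ Finset.Icc 1 ℓ, y' i)
    (h2 : 0 ≤ x' 1 - y' 1)
    (h3 : ∀ i, 2 ≤ i → i ≤ ℓ → x' i - y' i ≤ 0)
    (h4 : ∀ i j, 1 ≤ i → i ≤ j → j ≤ ℓ → y' j ≤ y' i) :
    ∀ t, 1 ≤ t → t ≤ ℓ →
      (0 ≤ (∑ i ∈ Finset.Icc 1 t, x' i) - ∑ i ∈ Finset.Icc 1 (t - 1), y' i) ∧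
      ((∑ i ∈ Finset.Icc 1 t, x' i) - (∑ i ∈ Finset.Icc 1 (t - 1), y' i) ≤ x' 1) ∧
      (0 ≤ (∑ i ∈ Finset.Icc 1 t, x' i) - ∑ i ∈ Finset.Icc 1 t, y' i) ∧
      ((∑ i ∈ Finset.Icc 1 t, x' i) - (∑ i ∈ Finset.Icc 1 t, y' i) ≤ x' 1) := by
  -- S_t ≥ 0 for all 1 ≤ t ≤ ℓ
  have hS : ∀ t, 1 ≤ t → t ≤ ℓ →
      0 ≤ (∑ i ∈ Finset.Icc 1 t, x' i) - ∑ i ∈ Finset.Icc 1 t, y' i := by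
    intro t ht htℓ
    have hsplit : ∀ f : ℕ → ℝ,
        ∑ i ∈ Finset.Icc 1 ℓ, f i
          = (∑ i ∈ Finset.Icc 1 t, f i) + ∑ i ∈ Finset.Icc (t+1) ℓ, f i := by
      intro f
      have h0 : Finset.Icc 1 ℓ = Finset.Ioc 0 ℓ := by
        rw [← Finset.Icc_add_one_left_eq_Ioc, zero_add]
      have h1' : Finset.Icc 1 t = Finset.Ioc 0 t := by
        rw [← Finset.Icc_add_one_left_eq_Ioc, zero_add]
      have h2' : Finset.Icc (t+1) ℓ = Finset.Ioc t ℓ := by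
        rw [← Finset.Icc_add_one_left_eq_Ioc]
      rw [h0, h1', h2', ← Finset.sum_Ioc_consecutive f (Nat.zero_le t) htℓ]
    have htail : ∑ i ∈ Finset.Icc (t+1) ℓ, (x' i - y' i) ≤ 0 := by
      apply Finset.sum_nonpos
      intro i hi
      simp only [Finset.mem_Icc] at hi
      exact h3 i (le_trans (by omega) hi.1) hi.2
    have := h1
    rw [hsplit x', hsplit y'] at this
    rw [Finset.sum_sub_distrib] at htail
    linarith
  -- A_t ≤ x' 1 for all 1 ≤ t ≤ ℓ
  have hA : ∀ t, 1 ≤ t → t ≤ ℓ →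
      (∑ i ∈ Finset.Icc 1 t, x' i) - ∑ i ∈ Finset.Icc 1 (t - 1), y' i ≤ x' 1 := by
    intro t
    induction t with
    | zero => omega
    | succ n ih =>
      intro _ hnl
      rcases Nat.eq_or_lt_of_le (show 1 ≤ n + 1 by omega) with h | h
      · simp [← h]
      · have hn1 : 1 ≤ n := by omega
        have hnℓ : n ≤ ℓ := by omega
        have ihn := ih hn1 hnℓ
        have hx : ∑ i ∈ Finset.Icc 1 (n+1), x' i
            = (∑ i ∈ Finset.Icc 1 n, x' i) + x' (n+1) :=
          Finset.sum_Icc_succ_top (by omega) x'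
        have hy : ∑ i ∈ Finset.Icc 1 (n+1-1), y' i
            = (∑ i ∈ Finset.Icc 1 (n-1), y' i) + y' n := by
          have e1 : n + 1 - 1 = (n - 1) + 1 := by omega
          have e2 : (n - 1) + 1 = n := by omega
          rw [e1, Finset.sum_Icc_succ_top (show 1 ≤ (n-1)+1 by omega) y', e2]
        have hstep : x' (n+1) ≤ y' n := by
          have := h3 (n+1) (by omega) hnl
          have := h4 n (n+1) hn1 (by omega) hnl
          linarith
        rw [hx, hy]
        linarith
  intro t ht htℓ
  have hSt := hS t ht htℓ
  have hAt := hA t ht htℓ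
  have hyt := hypos t ht htℓ
  have hrel : ∑ i ∈ Finset.Icc 1 t, y' i
      = (∑ i ∈ Finset.Icc 1 (t-1), y' i) + y' t := by
    have h : t = (t - 1) + 1 := by omega
    rw [h, Finset.sum_Icc_succ_top (by omega) y']
    congr 2 <;> omega
  refine ⟨by rw [hrel] at hSt; linarith, hAt, hSt, by rw [hrel]; linarith⟩
end

section
/- With the barrier notation below for C = (1−ε)μ, suppose n_a > n_b and let s be the smallest index in {1,…,n_a−n_b} with w'_s < εμ (assumed to exist). Define β'_i = w_i − v_i for i ∈ {1,…,h} and LB = (1/(n_a−n_b−s+1)) · ( 2·Σ_{i=s}^{n_a−n_b} a'_i − Σ_{i=s}^{n_a−n_b} w'_i + Σ_{i=1}^{h} (v_i − w_i) ). If LB < 2μ/(2−ε) and 2(1−ε) − 2/(2−ε) > 2ε, then Σ_{i=1}^{h} β'_i + Σ_{i=s}^{n_a−n_b} w'_i > 2εμ·(n_a−n_b−s+1). -/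
/-- **Key inequality for constructing alternating batches.**
With barrier `C = (1−ε)μ`, `n_a > n_b`, `s` the smallest index in `{1,…,n_a−n_b}`
with `w'_s < εμ`, `β'_i = w_i − v_i`, and
`LB = (2·Σ_{i=s}^{na−nb} a'_i − Σ_{i=s}^{na−nb} w'_i + Σ_{i=1}^h (v_i − w_i))/(na−nb−s+1)`:
if `LB < 2μ/(2−ε)` and `2(1−ε) − 2/(2−ε) > 2ε`, then
`Σ_{i=1}^h β'_i + Σ_{i=s}^{na−nb} w'_i > 2εμ(na−nb−s+1)`.
(Here, 1-indexed, `a'_i = x (nb+i)`, `w'_i = y (nb+i)`, `v_j = x (n+1−j)`,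
`w_j = y (na+j)`.) -/
theorem batch_construction_key_inequality
    (n : ℕ) (hn : 1 ≤ n) (x y : ℕ → ℝ) (ε : ℝ) (hε0 : 0 < ε) (hε1 : ε < 1)
    (hxpos : ∀ i, 1 ≤ i → i ≤ n → 0 < x i)
    (hypos : ∀ i, 1 ≤ i → i ≤ n → 0 < y i)
    (hxsort : ∀ i j, 1 ≤ i → i ≤ j → j ≤ n → x j ≤ x i)
    (hysort : ∀ i j, 1 ≤ i → i ≤ j → j ≤ n → y j ≤ y i)
    (hsum : ∑ i ∈ Finset.Icc 1 n, x i = ∑ i ∈ Finset.Icc 1 n, y i)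
    (μ C : ℝ) (hμ : μ = max (x 1) (y 1)) (hC : C = (1 - ε) * μ)
    (na nb k : ℕ) (hnan : na ≤ n) (hnbna : nb < na) (hk : k = n - na)
    (hna : ∀ i, 1 ≤ i → i ≤ n → (C ≤ x i ↔ i ≤ na))
    (hnb : ∀ i, 1 ≤ i → i ≤ n → (C ≤ y i ↔ i ≤ nb))
    (h : ℕ) (hhk : h ≤ k)
    (hh1 : ∀ j, 1 ≤ j → j ≤ h → x (n + 1 - j) < y (na + j))
    (hh2 : ∀ j, h < j → j ≤ k → y (na + j) ≤ x (n + 1 - j))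
    (s : ℕ) (hs1 : 1 ≤ s) (hs2 : s ≤ na - nb)
    (hws : y (nb + s) < ε * μ)
    (hsmin : ∀ i, 1 ≤ i → i < s → ε * μ ≤ y (nb + i))
    (hLB : (2 * ∑ i ∈ Finset.Icc s (na - nb), x (nb + i)
        - ∑ i ∈ Finset.Icc s (na - nb), y (nb + i)
        + ∑ i ∈ Finset.Icc 1 h, (x (n + 1 - i) - y (na + i)))
        / ((na : ℝ) - (nb : ℝ) - (s : ℝ) + 1) < 2 * μ / (2 - ε))
    (hcond : 2 * (1 - ε) - 2 / (2 - ε) > 2 * ε) :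
    2 * ε * μ * ((na : ℝ) - (nb : ℝ) - (s : ℝ) + 1) <
      (∑ i ∈ Finset.Icc 1 h, (y (na + i) - x (n + 1 - i)))
        + ∑ i ∈ Finset.Icc s (na - nb), y (nb + i) := by
  have hμpos : 0 < μ := by
    have h1 := hxpos 1 le_rfl hn
    have h2 : x 1 ≤ μ := hμ ▸ le_max_left _ _
    linarith
  have h2ε : (0:ℝ) < 2 - ε := by linarith
  set m : ℝ := (na : ℝ) - (nb : ℝ) - (s : ℝ) + 1 with hmdef
  clear_value m
  have hnbna' : nb ≤ na := le_of_lt hnbna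
  have hm1 : (1:ℝ) ≤ m := by
    have hcast : ((s:ℝ)) ≤ ((na - nb : ℕ) : ℝ) := Nat.cast_le.mpr hs2
    rw [Nat.cast_sub hnbna'] at hcast
    simp only [hmdef]; linarith
  have hmpos : (0:ℝ) < m := by linarith
  have hcard : ((Finset.Icc s (na - nb)).card : ℝ) = m := by
    have h1 : (Finset.Icc s (na - nb)).card = na - nb - s + 1 := by
      rw [Nat.card_Icc]; omega
    rw [h1]
    have : na - nb - s + 1 = na - (nb + s) + 1 := by omega
    rw [this, Nat.cast_add, Nat.cast_sub (by omega : nb + s ≤ na)]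
    push_cast
    simp only [hmdef]; ring
  have hA : m * ((1 - ε) * μ) ≤ ∑ i ∈ Finset.Icc s (na - nb), x (nb + i) := by
    have hterm : ∀ i ∈ Finset.Icc s (na - nb), (1 - ε) * μ ≤ x (nb + i) := by
      intro i hi
      rw [Finset.mem_Icc] at hi
      have h1 : 1 ≤ nb + i := by omega
      have h2 : nb + i ≤ n := by omega
      have := (hna (nb + i) h1 h2).mpr (by omega)
      rw [hC] at this
      exact this
    calc m * ((1 - ε) * μ) = ((Finset.Icc s (na - nb)).card : ℝ) * ((1 - ε) * μ) := by
          rw [hcard]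
      _ = ∑ _i ∈ Finset.Icc s (na - nb), (1 - ε) * μ := by
          rw [Finset.sum_const, nsmul_eq_mul]
      _ ≤ _ := Finset.sum_le_sum hterm
  have hLB' : 2 * ∑ i ∈ Finset.Icc s (na - nb), x (nb + i)
      - ∑ i ∈ Finset.Icc s (na - nb), y (nb + i)
      + ∑ i ∈ Finset.Icc 1 h, (x (n + 1 - i) - y (na + i))
      < 2 * μ / (2 - ε) * m := (div_lt_iff₀ hmpos).mp hLB
  have hneg : ∑ i ∈ Finset.Icc 1 h, (y (na + i) - x (n + 1 - i))
      = - ∑ i ∈ Finset.Icc 1 h, (x (n + 1 - i) - y (na + i)) := by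
    rw [← Finset.sum_neg_distrib]
    exact Finset.sum_congr rfl fun i _ => (neg_sub _ _).symm
  rw [hneg]
  have hkey : m * μ * (2 * ε) < m * μ * (2 * (1 - ε) - 2 / (2 - ε)) :=
    mul_lt_mul_of_pos_left hcond (by positivity)
  have he1 : 2 * μ / (2 - ε) * m = m * μ * (2 / (2 - ε)) := by ring
  have he2 : 2 * (m * ((1 - ε) * μ)) = m * μ * (2 * (1 - ε)) := by ring
  have he3 : 2 * ε * μ * m = m * μ * (2 * ε) := by ring
  have he4 : m * μ * (2 * (1 - ε) - 2 / (2 - ε))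
      = m * μ * (2 * (1 - ε)) - m * μ * (2 / (2 - ε)) := by ring
  linarith
end

section
/- Let ε = 0.21, let μ > 0 and d ≥ 1 be an integer. Let a'_1, …, a'_d be reals in [(1−ε)μ, μ], let w'_1, …, w'_d be reals in [0, εμ), and let β'_1, …, β'_h be reals in (0, εμ] such that Σ_{j=1}^{h} β'_j + Σ_{p=1}^{d} w'_p > 2εμ·d. Then there exist pairwise disjoint subsets S_1, …, S_d of {1,…,h} such that for every p ∈ {1,…,d}: 0 ≤ a'_p − w'_p − Σ_{j∈S_p} β'_j ≤ (1−ε)μ. -/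
/-- Greedy selection: from a pool of small positive values we can pick a subset
bringing `t` down into the window `((1-2ε)μ, (1-ε)μ]`. -/
lemma greedy_pick (μ : ℝ) (β : ℕ → ℝ) :
    ∀ (T : Finset ℕ) (t : ℝ),
      (∀ j ∈ T, 0 < β j ∧ β j ≤ 0.21 * μ) →
      (1 - 2 * 0.21) * μ < t →
      t - (1 - 0.21) * μ ≤ ∑ j ∈ T, β j →
      ∃ S ⊆ T, (1 - 2 * 0.21) * μ < t - ∑ j ∈ S, β j ∧
        t - ∑ j ∈ S, β j ≤ (1 - 0.21) * μ := by
  intro T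
  induction T using Finset.strongInduction with
  | _ T ih =>
    intro t hβ hlow hsum
    by_cases hle : t ≤ (1 - 0.21) * μ
    · exact ⟨∅, Finset.empty_subset _, by simpa, by simpa⟩
    · push_neg at hle
      have hT : T.Nonempty := by
        by_contra hne
        rw [Finset.not_nonempty_iff_eq_empty] at hne
        subst hne
        simp only [Finset.sum_empty] at hsum
        nlinarith
      obtain ⟨j, hj⟩ := hT
      obtain ⟨hβj0, hβjle⟩ := hβ j hj
      have hsplit : ∑ k ∈ T.erase j, β k = (∑ k ∈ T, β k) - β j :=
        Finset.sum_erase_eq_sub hj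
      obtain ⟨S, hS, h1, h2⟩ := ih (T.erase j) (Finset.erase_ssubset hj) (t - β j)
        (fun k hk => hβ k (Finset.mem_of_mem_erase hk))
        (by nlinarith)
        (by rw [hsplit]; linarith)
      have hjS : j ∉ S := fun hmem => (Finset.mem_erase.mp (hS hmem)).1 rfl
      refine ⟨insert j S, ?_, ?_, ?_⟩
      · exact Finset.insert_subset hj (hS.trans (Finset.erase_subset _ _))
      · rw [Finset.sum_insert hjS]; linarith
      · rw [Finset.sum_insert hjS]; linarith

/-- Inductive distribution lemma with an arbitrary pool `T`. -/
lemma distribute_aux (μ : ℝ) (hμ : 0 < μ) (β' : ℕ → ℝ) :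
    ∀ (d : ℕ) (T : Finset ℕ) (a' w' : ℕ → ℝ),
      (∀ p, 1 ≤ p → p ≤ d → (1 - 0.21) * μ ≤ a' p ∧ a' p ≤ μ) →
      (∀ p, 1 ≤ p → p ≤ d → 0 ≤ w' p ∧ w' p < 0.21 * μ) →
      (∀ j ∈ T, 0 < β' j ∧ β' j ≤ 0.21 * μ) →
      (2 * 0.21 * μ * (d : ℝ) <
        (∑ j ∈ T, β' j) + ∑ p ∈ Finset.Icc 1 d, w' p) →
      ∃ S : ℕ → Finset ℕ,
        (∀ p, 1 ≤ p → p ≤ d → S p ⊆ T) ∧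
        (∀ p q, 1 ≤ p → p ≤ d → 1 ≤ q → q ≤ d → p ≠ q → Disjoint (S p) (S q)) ∧
        (∀ p, 1 ≤ p → p ≤ d →
          0 ≤ a' p - w' p - ∑ j ∈ S p, β' j ∧
          a' p - w' p - ∑ j ∈ S p, β' j ≤ (1 - 0.21) * μ) := by
  intro d
  induction d with
  | zero =>
    intro T a' w' _ _ _ _
    exact ⟨fun _ => ∅, fun p hp hp0 => absurd (hp.trans hp0) (by omega),
      fun p q hp hp0 _ _ _ => absurd (hp.trans hp0) (by omega),
      fun p hp hp0 => absurd (hp.trans hp0) (by omega)⟩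
  | succ d ihd =>
    intro T a' w' ha hw hβ hsum
    have hd1 : 1 ≤ d + 1 := by omega
    obtain ⟨ha1, ha2⟩ := ha (d + 1) hd1 le_rfl
    obtain ⟨hw1, hw2⟩ := hw (d + 1) hd1 le_rfl
    -- the w-sum over Icc 1 (d+1) splits
    have hIcc : Finset.Icc 1 (d + 1) = insert (d + 1) (Finset.Icc 1 d) := by
      ext x; simp [Finset.mem_Icc]; omega
    have hwsplit : ∑ p ∈ Finset.Icc 1 (d + 1), w' p
        = w' (d + 1) + ∑ p ∈ Finset.Icc 1 d, w' p := by
      rw [hIcc, Finset.sum_insert (by simp)]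
    -- bound the w-sum
    have hwbound : ∑ p ∈ Finset.Icc 1 (d + 1), w' p ≤ 0.21 * μ * (d + 1 : ℝ) := by
      calc ∑ p ∈ Finset.Icc 1 (d + 1), w' p
          ≤ ∑ _p ∈ Finset.Icc 1 (d + 1), 0.21 * μ :=
            Finset.sum_le_sum (fun p hp => by
              have := Finset.mem_Icc.mp hp
              exact (hw p this.1 this.2).2.le)
        _ = 0.21 * μ * (d + 1 : ℝ) := by
            rw [Finset.sum_const, Nat.card_Icc]
            push_cast
            ring_nf
    have hsumT : (a' (d + 1) - w' (d + 1)) - (1 - 0.21) * μ ≤ ∑ j ∈ T, β' j := by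
      have hcast : ((d + 1 : ℕ) : ℝ) = (d : ℝ) + 1 := by push_cast; ring
      have hd0 : (0 : ℝ) ≤ (d : ℝ) := Nat.cast_nonneg d
      nlinarith [hsum, hwbound, hcast]
    obtain ⟨Sd, hSdT, hSd1, hSd2⟩ := greedy_pick μ β' T (a' (d + 1) - w' (d + 1))
      hβ (by nlinarith) hsumT
    -- leftover pool
    have hsdiff : ∑ j ∈ T \ Sd, β' j = (∑ j ∈ T, β' j) - ∑ j ∈ Sd, β' j :=
      Finset.sum_sdiff_eq_sub hSdT
    obtain ⟨S', hS'T, hS'disj, hS'val⟩ := ihd (T \ Sd) a' w'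
      (fun p hp hp' => ha p hp (by omega))
      (fun p hp hp' => hw p hp (by omega))
      (fun j hj => hβ j (Finset.mem_sdiff.mp hj).1)
      (by
        rw [hsdiff]
        have hcast : ((d + 1 : ℕ) : ℝ) = (d : ℝ) + 1 := by push_cast; ring
        rw [hcast, hwsplit] at hsum
        nlinarith)
    refine ⟨fun p => if p ≤ d then S' p else Sd, ?_, ?_, ?_⟩
    · intro p hp hp'
      by_cases hpd : p ≤ d
      · simp only [hpd, if_true]
        exact (hS'T p hp hpd).trans (Finset.sdiff_subset)
      · simp only [hpd, if_false]; exact hSdT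
    · intro p q hp hp' hq hq' hpq
      by_cases hpd : p ≤ d <;> by_cases hqd : q ≤ d
      · simpa [hpd, hqd] using hS'disj p q hp hpd hq hqd hpq
      · simp only [hpd, hqd, if_true, if_false]
        exact Finset.disjoint_left.mpr (fun x hx =>
          (Finset.mem_sdiff.mp (hS'T p hp hpd hx)).2)
      · simp only [hpd, hqd, if_true, if_false]
        exact (Finset.disjoint_left.mpr (fun x hx =>
          (Finset.mem_sdiff.mp (hS'T q hq hqd hx)).2)).symm
      · omega
    · intro p hp hp'
      by_cases hpd : p ≤ d
      · simpa [hpd] using hS'val p hp hpd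
      · have : p = d + 1 := by omega
        subst this
        simp only [hpd, if_false]
        constructor <;> nlinarith

/-- **Distributing small pairs among large pairs (ε = 0.21).**
Given `μ > 0`, `d ≥ 1`, values `a'_p ∈ [(1−ε)μ, μ]`, `w'_p ∈ [0, εμ)` for
`p ∈ {1,…,d}`, and `β'_j ∈ (0, εμ]` for `j ∈ {1,…,h}` with
`Σ β'_j + Σ w'_p > 2εμd`, there exist pairwise disjoint subsets
`S_1,…,S_d ⊆ {1,…,h}` with `0 ≤ a'_p − w'_p − Σ_{j∈S_p} β'_j ≤ (1−ε)μ` for all `p`. -/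
theorem distribute_small_pairs
    (μ : ℝ) (hμ : 0 < μ) (d h : ℕ) (hd : 1 ≤ d)
    (a' w' β' : ℕ → ℝ)
    (ha : ∀ p, 1 ≤ p → p ≤ d → (1 - 0.21) * μ ≤ a' p ∧ a' p ≤ μ)
    (hw : ∀ p, 1 ≤ p → p ≤ d → 0 ≤ w' p ∧ w' p < 0.21 * μ)
    (hβ : ∀ j, 1 ≤ j → j ≤ h → 0 < β' j ∧ β' j ≤ 0.21 * μ)
    (hsum : 2 * 0.21 * μ * (d : ℝ) <
      (∑ j ∈ Finset.Icc 1 h, β' j) + ∑ p ∈ Finset.Icc 1 d, w' p) :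
    ∃ S : ℕ → Finset ℕ,
      (∀ p, 1 ≤ p → p ≤ d → S p ⊆ Finset.Icc 1 h) ∧
      (∀ p q, 1 ≤ p → p ≤ d → 1 ≤ q → q ≤ d → p ≠ q → Disjoint (S p) (S q)) ∧
      (∀ p, 1 ≤ p → p ≤ d →
        0 ≤ a' p - w' p - ∑ j ∈ S p, β' j ∧
        a' p - w' p - ∑ j ∈ S p, β' j ≤ (1 - 0.21) * μ) := by
  exact distribute_aux μ hμ β' d (Finset.Icc 1 h) a' w' ha hw
    (fun j hj => hβ j (Finset.mem_Icc.mp hj).1 (Finset.mem_Icc.mp hj).2) hsum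
end

section
/- (Correctness of the NP-hardness reduction.) Let k ≥ 1, n = 3k, and let z_1, …, z_n be rationals with 1/4 < z_i < 1/2 for all i and Σ_{i=1}^n z_i = k. Consider the alternating stock size instance with x-values x_1 = … = x_{n+k} = 1 and y-values y_i = 1 − z_i for i ∈ {1,…,n} and y_i = 2 for i ∈ {n+1,…,n+k}. Then {1,…,n} can be partitioned into k triples each with z-sum exactly 1 if and only if there exists a feasible alternating ordering of this instance with value at most 2. -/
lemma sum_filter_le_eq {n : ℕ} (t : Fin n) (h : Fin n → ℚ) :
    ∑ i ∈ Finset.univ.filter (fun i : Fin n => i ≤ t), h i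
      = ∑ j ∈ Finset.range (t.val + 1), (if hj : j < n then h ⟨j, hj⟩ else 0) := by
  have ht := t.isLt
  set G : ℕ → ℚ := fun j => if hj : j < n then (if j ≤ t.val then h ⟨j, hj⟩ else 0) else 0 with hG
  have e1 : ∀ i : Fin n, (if i ≤ t then h i else 0) = G i.val := by
    intro i
    simp only [hG, dif_pos i.isLt, Fin.eta, Fin.le_def]
  rw [Finset.sum_filter, Finset.sum_congr rfl (fun i _ => e1 i),
    Fin.sum_univ_eq_sum_range G n,
    ← Finset.sum_subset (Finset.range_subset_range.2 (by omega : t.val + 1 ≤ n))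
      (fun x hxn hx => by
        simp only [Finset.mem_range] at hx hxn
        simp only [hG]
        rw [dif_pos (by omega : x < n), if_neg (by omega)])]
  apply Finset.sum_congr rfl
  intro j hj
  simp only [Finset.mem_range] at hj
  simp only [hG]
  rw [dif_pos (by omega : j < n), if_pos (by omega), dif_pos (by omega : j < n)]

lemma sum_filter_lt_eq {n : ℕ} (t : Fin n) (h : Fin n → ℚ) :
    ∑ i ∈ Finset.univ.filter (fun i : Fin n => i < t), h i
      = ∑ j ∈ Finset.range t.val, (if hj : j < n then h ⟨j, hj⟩ else 0) := by
  have ht := t.isLt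
  set G : ℕ → ℚ := fun j => if hj : j < n then (if j < t.val then h ⟨j, hj⟩ else 0) else 0 with hG
  have e1 : ∀ i : Fin n, (if i < t then h i else 0) = G i.val := by
    intro i
    simp only [hG, dif_pos i.isLt, Fin.eta, Fin.lt_def]
  rw [Finset.sum_filter, Finset.sum_congr rfl (fun i _ => e1 i),
    Fin.sum_univ_eq_sum_range G n,
    ← Finset.sum_subset (Finset.range_subset_range.2 (by omega : t.val ≤ n))
      (fun x hxn hx => by
        simp only [Finset.mem_range] at hx hxn
        simp only [hG]
        rw [dif_pos (by omega : x < n), if_neg (by omega)])]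
  apply Finset.sum_congr rfl
  intro j hj
  simp only [Finset.mem_range] at hj
  simp only [hG]
  rw [dif_pos (by omega : j < n), if_pos (by omega), dif_pos (by omega : j < n)]

lemma sum_range_shift (m : ℕ) (z : ℕ → ℚ) :
    ∑ j ∈ Finset.range m, z (j + 1) = ∑ i ∈ Finset.Icc 1 m, z i := by
  rw [← Finset.Ico_add_one_right_eq_Icc, Finset.sum_Ico_eq_sum_range]
  simp [add_comm]

def gfun (k : ℕ) (Y : Fin (4*k) → ℚ) (F : Fin (4*k) → Fin (4*k)) (j : ℕ) : ℚ :=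
  if hj : j < 4*k then 1 - Y (F ⟨j, hj⟩) else 0

def Sfun (k : ℕ) (Y : Fin (4*k) → ℚ) (F : Fin (4*k) → Fin (4*k)) (m : ℕ) : ℚ :=
  ∑ j ∈ Finset.range m, gfun k Y F j

lemma Sfun_succ (k : ℕ) (Y : Fin (4*k) → ℚ) (F : Fin (4*k) → Fin (4*k)) (m : ℕ) :
    Sfun k Y F (m+1) = Sfun k Y F m + gfun k Y F m :=
  Finset.sum_range_succ _ _

def Fmap (k : ℕ) (w : ℕ → ℕ → ℕ)
    (hw : ∀ a r, a < k → r < 3 → 1 ≤ w a r ∧ w a r ≤ 3 * k)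
    (p : Fin (4 * k)) : Fin (4 * k) :=
  if h : p.val % 4 < 3 then
    ⟨w (p.val / 4) (p.val % 4) - 1, by
      have hp := p.isLt
      have := hw (p.val / 4) (p.val % 4) (by omega) h
      omega⟩
  else ⟨3 * k + p.val / 4, by have hp := p.isLt; omega⟩

lemma Fmap_val_lt (k : ℕ) (w : ℕ → ℕ → ℕ) (hw : ∀ a r, a < k → r < 3 → 1 ≤ w a r ∧ w a r ≤ 3 * k)
    (p : Fin (4*k)) (h : p.val % 4 < 3) :
    (Fmap k w hw p).val = w (p.val / 4) (p.val % 4) - 1 := by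
  simp [Fmap, h]

lemma Fmap_val_ge (k : ℕ) (w : ℕ → ℕ → ℕ) (hw : ∀ a r, a < k → r < 3 → 1 ≤ w a r ∧ w a r ≤ 3 * k)
    (p : Fin (4*k)) (h : ¬ p.val % 4 < 3) :
    (Fmap k w hw p).val = 3 * k + p.val / 4 := by
  simp [Fmap, h]

def vfun (k : ℕ) (F : Fin (4*k) → Fin (4*k)) (q : ℕ) : ℕ :=
  if h : q < 4*k then (F ⟨q, h⟩).val else 0

def Rfun (k : ℕ) (F : Fin (4*k) → Fin (4*k)) (p : ℕ) : ℕ :=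
  ((Finset.range p).filter (fun q => 3*k ≤ vfun k F q)).card

lemma Rfun_mono (k : ℕ) (F : Fin (4*k) → Fin (4*k)) : Monotone (Rfun k F) :=
  fun _ _ h => Finset.card_le_card (Finset.filter_subset_filter _ (Finset.range_subset_range.2 h))

lemma Rfun_succ (k : ℕ) (F : Fin (4*k) → Fin (4*k)) (p : ℕ) :
    Rfun k F (p+1) = Rfun k F p + (if 3*k ≤ vfun k F p then 1 else 0) := by
  unfold Rfun
  rw [Finset.range_add_one, Finset.filter_insert]
  split_ifs with h
  · rw [Finset.card_insert_of_notMem (by simp)]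
  · simp

/-- **Correctness of the NP-hardness reduction from 3-partition.**
Given rationals `z_1,…,z_{3k} ∈ (1/4, 1/2)` summing to `k`, consider the
alternating stock size instance with `4k` x-values all equal to `1` and y-values
`y_i = 1 − z_i` for `i ≤ 3k` and `y_i = 2` otherwise.  Then `{1,…,3k}` can be
partitioned into `k` triples each of z-sum `1` iff there is a feasible
alternating ordering of value at most `2`. -/
theorem three_partition_reduction
    (k : ℕ) (hk : 1 ≤ k) (z : ℕ → ℚ)
    (hz : ∀ i, 1 ≤ i → i ≤ 3 * k → 1 / 4 < z i ∧ z i < 1 / 2)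
    (hzsum : ∑ i ∈ Finset.Icc 1 (3 * k), z i = (k : ℚ))
    (X Y : Fin (4 * k) → ℚ)
    (hX : ∀ i, X i = 1)
    (hY : ∀ i : Fin (4 * k),
      Y i = if (i : ℕ) < 3 * k then 1 - z ((i : ℕ) + 1) else 2) :
    (∃ P : Fin k → Finset ℕ,
        (∀ a b : Fin k, a ≠ b → Disjoint (P a) (P b)) ∧
        Finset.univ.biUnion P = Finset.Icc 1 (3 * k) ∧
        (∀ a, (P a).card = 3) ∧
        (∀ a, ∑ i ∈ P a, z i = 1)) ↔
    (∃ σ ν : Equiv.Perm (Fin (4 * k)),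
        (∀ t : Fin (4 * k),
          0 ≤ ∑ i ∈ Finset.univ.filter (· ≤ t), (X (σ i) - Y (ν i))) ∧
        (∀ t : Fin (4 * k),
          (∑ i ∈ Finset.univ.filter (· ≤ t), X (σ i))
            - (∑ i ∈ Finset.univ.filter (· < t), Y (ν i)) ≤ 2)) := by
  constructor
  · rintro ⟨P, hdisj, hunion, hcard, hsum⟩
    have hPsub : ∀ a, P a ⊆ Finset.Icc 1 (3*k) := by
      intro a
      rw [← hunion]
      exact Finset.subset_biUnion_of_mem P (Finset.mem_univ a)
    have hex : ∀ a : Fin k, ∃ e : Fin 3 → ℕ,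
        (∀ j, e j ∈ P a) ∧ Function.Injective e ∧ z (e 0) + z (e 1) + z (e 2) = 1 := by
      intro a
      obtain ⟨x, y, v, hxy, hxv, hyv, hPa⟩ := Finset.card_eq_three.mp (hcard a)
      refine ⟨![x, y, v], ?_, ?_, ?_⟩
      · intro j; fin_cases j <;> simp [hPa]
      · intro j j' hjj'
        fin_cases j <;> fin_cases j' <;> simp_all
      · have h1 : ∑ i ∈ P a, z i = z x + (z y + z v) := by
          rw [hPa, Finset.sum_insert (by simp [hxy, hxv]),
            Finset.sum_insert (by simp [hyv]), Finset.sum_singleton]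
        have h2 := hsum a
        rw [h1] at h2
        simpa using by linarith
    choose e hemem heinj hesum using hex
    have hebnd : ∀ (a : Fin k) (j : Fin 3), 1 ≤ e a j ∧ e a j ≤ 3*k :=
      fun a j => Finset.mem_Icc.mp (hPsub a (hemem a j))
    have hzbnd : ∀ (a : Fin k) (j : Fin 3), 1/4 < z (e a j) ∧ z (e a j) < 1/2 :=
      fun a j => hz _ (hebnd a j).1 (hebnd a j).2
    obtain ⟨w, hwval, hwbnd⟩ : ∃ w : ℕ → ℕ → ℕ,
        (∀ a r (ha : a < k) (hr : r < 3), w a r = e ⟨a, ha⟩ ⟨r, hr⟩) ∧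
        (∀ a r, a < k → r < 3 → 1 ≤ w a r ∧ w a r ≤ 3*k) := by
      refine ⟨fun a r => if h : a < k ∧ r < 3 then e ⟨a, h.1⟩ ⟨r, h.2⟩ else 1, ?_, ?_⟩
      · intro a r ha hr
        show (if h : a < k ∧ r < 3 then e ⟨a, h.1⟩ ⟨r, h.2⟩ else 1) = e ⟨a, ha⟩ ⟨r, hr⟩
        rw [dif_pos ⟨ha, hr⟩]
      · intro a r ha hr
        show 1 ≤ (if h : a < k ∧ r < 3 then e ⟨a, h.1⟩ ⟨r, h.2⟩ else 1) ∧
          (if h : a < k ∧ r < 3 then e ⟨a, h.1⟩ ⟨r, h.2⟩ else 1) ≤ 3*k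
        rw [dif_pos ⟨ha, hr⟩]
        exact hebnd _ _
    have hFinj : Function.Injective (Fmap k w hwbnd) := by
      intro p q hpq
      have hp := p.isLt; have hq := q.isLt
      have hap : p.val / 4 < k := by omega
      have haq : q.val / 4 < k := by omega
      have hval : (Fmap k w hwbnd p).val = (Fmap k w hwbnd q).val := by rw [hpq]
      by_cases h1 : p.val % 4 < 3 <;> by_cases h2 : q.val % 4 < 3
      · rw [Fmap_val_lt _ _ _ _ h1, Fmap_val_lt _ _ _ _ h2,
          hwval _ _ hap h1, hwval _ _ haq h2] at hval
        have hb1 := hebnd ⟨p.val/4, hap⟩ ⟨p.val%4, h1⟩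
        have hb2 := hebnd ⟨q.val/4, haq⟩ ⟨q.val%4, h2⟩
        have heq : e ⟨p.val/4, hap⟩ ⟨p.val%4, h1⟩ = e ⟨q.val/4, haq⟩ ⟨q.val%4, h2⟩ := by omega
        have haa : p.val / 4 = q.val / 4 := by
          by_contra hne
          have hd := hdisj ⟨p.val/4, hap⟩ ⟨q.val/4, haq⟩ (by simpa [Fin.ext_iff] using hne)
          refine (Finset.disjoint_left.mp hd (hemem ⟨p.val/4, hap⟩ ⟨p.val%4, h1⟩)) ?_
          rw [heq]; exact hemem _ _
        have hfa : (⟨p.val/4, hap⟩ : Fin k) = ⟨q.val/4, haq⟩ := Fin.ext haa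
        rw [hfa] at heq
        have hrr : p.val % 4 = q.val % 4 := by
          have := heinj _ heq
          simpa [Fin.ext_iff] using this
        exact Fin.ext (by omega)
      · rw [Fmap_val_lt _ _ _ _ h1, Fmap_val_ge _ _ _ _ h2, hwval _ _ hap h1] at hval
        have hb1 := hebnd ⟨p.val/4, hap⟩ ⟨p.val%4, h1⟩
        omega
      · rw [Fmap_val_ge _ _ _ _ h1, Fmap_val_lt _ _ _ _ h2, hwval _ _ haq h2] at hval
        have hb2 := hebnd ⟨q.val/4, haq⟩ ⟨q.val%4, h2⟩
        omega
      · rw [Fmap_val_ge _ _ _ _ h1, Fmap_val_ge _ _ _ _ h2] at hval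
        exact Fin.ext (by omega)
    have hgz : ∀ (a : ℕ) (ha : a < k) (j : Fin 3),
        gfun k Y (Fmap k w hwbnd) (4*a + j.val) = z (e ⟨a, ha⟩ j) := by
      intro a ha j
      have hj3 := j.isLt
      have hlt : 4*a + j.val < 4*k := by omega
      have hb := hebnd ⟨a, ha⟩ j
      have hvv : (Fmap k w hwbnd ⟨4*a + j.val, hlt⟩).val = e ⟨a, ha⟩ j - 1 := by
        rw [Fmap_val_lt _ _ _ _ (by simpa using by omega)]
        have hmod : (4*a + j.val) % 4 = j.val := by omega
        have hdiv : (4*a + j.val) / 4 = a := by omega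
        simp only
        rw [hmod, hdiv, hwval a j.val ha hj3]
      simp only [gfun, dif_pos hlt]
      rw [hY, if_pos (by rw [hvv]; omega), hvv,
        show e ⟨a, ha⟩ j - 1 + 1 = e ⟨a, ha⟩ j from by omega]
      ring
    have hgm : ∀ (a : ℕ), a < k → gfun k Y (Fmap k w hwbnd) (4*a + 3) = -1 := by
      intro a ha
      have hlt : 4*a + 3 < 4*k := by omega
      have hvv : (Fmap k w hwbnd ⟨4*a + 3, hlt⟩).val = 3*k + a := by
        rw [Fmap_val_ge _ _ _ _ (by simp only; omega)]
        simp only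
        congr 1
        omega
      simp only [gfun, dif_pos hlt]
      rw [hY, if_neg (by rw [hvv]; omega)]
      ring
    have hS4 : ∀ a, a ≤ k → Sfun k Y (Fmap k w hwbnd) (4*a) = 0 := by
      intro a
      induction a with
      | zero => intro _; simp [Sfun]
      | succ a ih =>
        intro ha
        have ha' : a < k := by omega
        have g0 : gfun k Y (Fmap k w hwbnd) (4*a) = z (e ⟨a, ha'⟩ 0) := by
          simpa using hgz a ha' 0
        have g1 : gfun k Y (Fmap k w hwbnd) (4*a + 1) = z (e ⟨a, ha'⟩ 1) := by
          simpa using hgz a ha' 1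
        have g2 : gfun k Y (Fmap k w hwbnd) (4*a + 2) = z (e ⟨a, ha'⟩ 2) := by
          simpa using hgz a ha' 2
        have g3 := hgm a ha'
        have hes := hesum ⟨a, ha'⟩
        have e4 : 4*(a+1) = (4*a+3)+1 := by ring
        rw [e4, Sfun_succ, show 4*a+3 = (4*a+2)+1 from rfl, Sfun_succ,
          show 4*a+2 = (4*a+1)+1 from rfl, Sfun_succ,
          show 4*a+1 = (4*a)+1 from rfl, Sfun_succ, ih (by omega),
          g0, g1, g2, g3]
        linarith
    have hSb : ∀ m, m ≤ 4*k → 0 ≤ Sfun k Y (Fmap k w hwbnd) m ∧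
        Sfun k Y (Fmap k w hwbnd) m ≤ 1 := by
      intro m hm
      obtain ⟨a, r, hr4, rfl⟩ : ∃ a r, r < 4 ∧ m = 4*a + r := ⟨m/4, m%4, by omega, by omega⟩
      interval_cases r
      · rw [show 4*a+0 = 4*a from rfl, hS4 a (by omega)]
        norm_num
      · have ha : a < k := by omega
        have g0 : gfun k Y (Fmap k w hwbnd) (4*a) = z (e ⟨a, ha⟩ 0) := by
          simpa using hgz a ha 0
        have hb := hzbnd ⟨a, ha⟩ 0
        rw [show 4*a+1 = (4*a)+1 from rfl, Sfun_succ, hS4 a (by omega), g0]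
        constructor <;> linarith
      · have ha : a < k := by omega
        have g0 : gfun k Y (Fmap k w hwbnd) (4*a) = z (e ⟨a, ha⟩ 0) := by
          simpa using hgz a ha 0
        have g1 : gfun k Y (Fmap k w hwbnd) (4*a + 1) = z (e ⟨a, ha⟩ 1) := by
          simpa using hgz a ha 1
        have hb0 := hzbnd ⟨a, ha⟩ 0
        have hb1 := hzbnd ⟨a, ha⟩ 1
        rw [show 4*a+2 = (4*a+1)+1 from rfl, Sfun_succ,
          show 4*a+1 = (4*a)+1 from rfl, Sfun_succ, hS4 a (by omega), g0, g1]
        constructor <;> linarith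
      · have ha : a < k := by omega
        have g0 : gfun k Y (Fmap k w hwbnd) (4*a) = z (e ⟨a, ha⟩ 0) := by
          simpa using hgz a ha 0
        have g1 : gfun k Y (Fmap k w hwbnd) (4*a + 1) = z (e ⟨a, ha⟩ 1) := by
          simpa using hgz a ha 1
        have g2 : gfun k Y (Fmap k w hwbnd) (4*a + 2) = z (e ⟨a, ha⟩ 2) := by
          simpa using hgz a ha 2
        have hes := hesum ⟨a, ha⟩
        have hb0 := hzbnd ⟨a, ha⟩ 0
        rw [show 4*a+3 = (4*a+2)+1 from rfl, Sfun_succ,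
          show 4*a+2 = (4*a+1)+1 from rfl, Sfun_succ,
          show 4*a+1 = (4*a)+1 from rfl, Sfun_succ, hS4 a (by omega), g0, g1, g2]
        constructor <;> linarith
    refine ⟨Equiv.refl _, Equiv.ofBijective _ ((Finite.injective_iff_bijective).mp hFinj), ?_, ?_⟩
    · intro t
      rw [sum_filter_le_eq t (fun i => X ((Equiv.refl _) i) - Y ((Equiv.ofBijective _ ((Finite.injective_iff_bijective).mp hFinj)) i))]
      have hcg : ∀ j ∈ Finset.range (t.val + 1),
          (if hj : j < 4*k then X ((Equiv.refl _) ⟨j, hj⟩) -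
            Y ((Equiv.ofBijective _ ((Finite.injective_iff_bijective).mp hFinj)) ⟨j, hj⟩) else 0)
          = gfun k Y (Fmap k w hwbnd) j := by
        intro j hj
        simp only [Finset.mem_range] at hj
        have hjk : j < 4*k := by have := t.isLt; omega
        rw [dif_pos hjk]
        simp only [gfun, dif_pos hjk, Equiv.refl_apply, Equiv.ofBijective_apply, hX]
      rw [Finset.sum_congr rfl hcg]
      exact (hSb (t.val+1) (by have := t.isLt; omega)).1
    · intro t
      have ht := t.isLt
      rw [sum_filter_le_eq t (fun i => X ((Equiv.refl _) i)),
        sum_filter_lt_eq t (fun i => Y ((Equiv.ofBijective _ ((Finite.injective_iff_bijective).mp hFinj)) i))]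
      have hc1 : ∀ j ∈ Finset.range (t.val + 1),
          (if hj : j < 4*k then X ((Equiv.refl _) ⟨j, hj⟩) else 0) = (1:ℚ) := by
        intro j hj
        simp only [Finset.mem_range] at hj
        rw [dif_pos (by omega : j < 4*k)]
        simp [hX]
      have hc2 : ∀ j ∈ Finset.range t.val,
          (if hj : j < 4*k then
            Y ((Equiv.ofBijective _ ((Finite.injective_iff_bijective).mp hFinj)) ⟨j, hj⟩) else 0)
          = 1 - gfun k Y (Fmap k w hwbnd) j := by
        intro j hj
        simp only [Finset.mem_range] at hj
        have hjk : j < 4*k := by omega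
        rw [dif_pos hjk]
        simp only [gfun, dif_pos hjk, Equiv.ofBijective_apply]
        ring
      rw [Finset.sum_congr rfl hc1, Finset.sum_congr rfl hc2,
        Finset.sum_sub_distrib, Finset.sum_const, Finset.sum_const]
      have hSt := hSb t.val (by omega)
      simp only [Finset.card_range, nsmul_eq_mul, mul_one]
      have : ∑ j ∈ Finset.range t.val, gfun k Y (Fmap k w hwbnd) j
          = Sfun k Y (Fmap k w hwbnd) t.val := rfl
      rw [this]
      push_cast
      linarith [hSt.2]
  · rintro ⟨σ, ν, hfeas, hval⟩
    have hg_eq : ∀ (j : ℕ) (hj : j < 4*k), gfun k Y ⇑ν j = 1 - Y (ν ⟨j, hj⟩) :=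
      fun j hj => dif_pos hj
    have hv_eq : ∀ (j : ℕ) (hj : j < 4*k), vfun k ⇑ν j = (ν ⟨j, hj⟩).val :=
      fun j hj => dif_pos hj
    have hgz : ∀ q, q < 4*k → vfun k ⇑ν q < 3*k →
        gfun k Y ⇑ν q = z (vfun k ⇑ν q + 1) := by
      intro q hq hvq
      rw [hg_eq q hq, hY, if_pos (by rw [← hv_eq q hq]; exact hvq), ← hv_eq q hq]
      ring
    have hzq : ∀ q, q < 4*k → vfun k ⇑ν q < 3*k →
        1/4 < gfun k Y ⇑ν q ∧ gfun k Y ⇑ν q < 1/2 := by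
      intro q hq hvq
      rw [hgz q hq hvq]
      exact hz _ (by omega) (by omega)
    have hgr : ∀ q, q < 4*k → 3*k ≤ vfun k ⇑ν q → gfun k Y ⇑ν q = -1 := by
      intro q hq hvq
      rw [hg_eq q hq, hY, if_neg (by rw [← hv_eq q hq]; omega)]
      ring
    have hS0 : ∀ m, m ≤ 4*k → 0 ≤ Sfun k Y ⇑ν m := by
      intro m hm
      rcases Nat.eq_zero_or_pos m with h0 | h0
      · subst h0; simp [Sfun]
      · have hthis := hfeas ⟨m-1, by omega⟩
        rw [sum_filter_le_eq ⟨m-1, by omega⟩ (fun i => X (σ i) - Y (ν i))] at hthis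
        have hc : ∀ j ∈ Finset.range ((⟨m-1, by omega⟩ : Fin (4*k)).val + 1),
            (if hj : j < 4*k then X (σ ⟨j, hj⟩) - Y (ν ⟨j, hj⟩) else 0)
              = gfun k Y ⇑ν j := by
          intro j hj
          simp only [Finset.mem_range] at hj
          have hjk : j < 4*k := by omega
          rw [dif_pos hjk, hg_eq j hjk, hX]
        rw [Finset.sum_congr rfl hc] at hthis
        have h' : 0 ≤ Sfun k Y ⇑ν (m-1+1) := hthis
        rwa [show m-1+1 = m from by omega] at h'
    have hS1 : ∀ m, m < 4*k → Sfun k Y ⇑ν m ≤ 1 := by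
      intro m hm
      have hthis := hval ⟨m, hm⟩
      rw [sum_filter_le_eq ⟨m, hm⟩ (fun i => X (σ i)),
        sum_filter_lt_eq ⟨m, hm⟩ (fun i => Y (ν i))] at hthis
      have hc1 : ∀ j ∈ Finset.range ((⟨m, hm⟩ : Fin (4*k)).val + 1),
          (if hj : j < 4*k then X (σ ⟨j, hj⟩) else 0) = (1:ℚ) := by
        intro j hj
        simp only [Finset.mem_range] at hj
        rw [dif_pos (by omega : j < 4*k), hX]
      have hc2 : ∀ j ∈ Finset.range ((⟨m, hm⟩ : Fin (4*k)).val),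
          (if hj : j < 4*k then Y (ν ⟨j, hj⟩) else 0) = 1 - gfun k Y ⇑ν j := by
        intro j hj
        simp only [Finset.mem_range] at hj
        have hjk : j < 4*k := by omega
        rw [dif_pos hjk, hg_eq j hjk]
        ring
      rw [Finset.sum_congr rfl hc1, Finset.sum_congr rfl hc2,
        Finset.sum_sub_distrib, Finset.sum_const, Finset.sum_const] at hthis
      have hS : ∑ j ∈ Finset.range ((⟨m, hm⟩ : Fin (4*k)).val), gfun k Y ⇑ν j
          = Sfun k Y ⇑ν m := rfl
      rw [hS] at hthis
      simp only [Finset.card_range, nsmul_eq_mul, mul_one] at hthis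
      have hmv : ((⟨m, hm⟩ : Fin (4*k)).val : ℚ) = (m : ℚ) := rfl
      rw [hmv] at hthis
      push_cast at hthis
      linarith
    have hStot : Sfun k Y ⇑ν (4*k) = 0 := by
      have h1 : Sfun k Y ⇑ν (4*k) = ∑ i : Fin (4*k), (1 - Y (ν i)) := by
        unfold Sfun
        rw [← Fin.sum_univ_eq_sum_range (fun j => gfun k Y ⇑ν j) (4*k)]
        exact Finset.sum_congr rfl (fun i _ => by rw [hg_eq i.val i.isLt, Fin.eta])
      have h2 : ∑ i : Fin (4*k), Y (ν i) = ∑ i : Fin (4*k), Y i := Equiv.sum_comp ν Y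
      have h3 : ∑ i : Fin (4*k), Y i = 4*k := by
        have hstep : ∑ i : Fin (4*k), Y i
            = ∑ j ∈ Finset.range (4*k), (if j < 3*k then 1 - z (j+1) else 2) := by
          rw [← Fin.sum_univ_eq_sum_range (fun j => if j < 3*k then 1 - z (j+1) else 2) (4*k)]
          exact Finset.sum_congr rfl (fun i _ => by rw [hY i])
        rw [hstep, Finset.range_eq_Ico,
          ← Finset.sum_Ico_consecutive _ (Nat.zero_le (3*k)) (by omega : 3*k ≤ 4*k)]
        have hA : ∑ j ∈ Finset.Ico 0 (3*k), (if j < 3*k then 1 - z (j+1) else 2)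
            = (3*k : ℚ) - k := by
          rw [Finset.sum_congr rfl (fun j hj =>
            if_pos (by simp only [Finset.mem_Ico] at hj; omega)),
            Finset.sum_sub_distrib, Finset.sum_const, ← Finset.range_eq_Ico,
            Finset.card_range, sum_range_shift, hzsum]
          push_cast
          ring
        have hB : ∑ j ∈ Finset.Ico (3*k) (4*k), (if j < 3*k then 1 - z (j+1) else 2)
            = 2*(k:ℚ) := by
          rw [Finset.sum_congr rfl (fun j hj =>
            if_neg (by simp only [Finset.mem_Ico] at hj; omega)),
            Finset.sum_const, Nat.card_Ico, show 4*k - 3*k = k from by omega,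
            nsmul_eq_mul]
          ring
        rw [hA, hB]
        push_cast
        ring
      rw [h1, Finset.sum_sub_distrib, h2, h3, Finset.sum_const, Finset.card_univ,
        Fintype.card_fin, nsmul_eq_mul, mul_one]
      push_cast
      ring
    have hreset : ∀ q, q < 4*k → 3*k ≤ vfun k ⇑ν q → Sfun k Y ⇑ν q = 1 := by
      intro q hq hv
      have h1 := hS0 (q+1) (by omega)
      rw [Sfun_succ, hgr q hq hv] at h1
      have h2 := hS1 q hq
      linarith
    have hRmono := Rfun_mono k ⇑ν
    have hRtot : Rfun k ⇑ν (4*k) = k := by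
      unfold Rfun
      have e1 : (Finset.range (4*k)).filter (fun q => 3*k ≤ vfun k ⇑ν q)
          = (Finset.univ.filter (fun i : Fin (4*k) => 3*k ≤ (ν i).val)).image Fin.val := by
        ext q
        simp only [Finset.mem_filter, Finset.mem_range, Finset.mem_image,
          Finset.mem_univ, true_and]
        constructor
        · rintro ⟨hq, hv⟩
          exact ⟨⟨q, hq⟩, by rwa [← hv_eq q hq], rfl⟩
        · rintro ⟨i, hi, rfl⟩
          exact ⟨i.isLt, by rwa [hv_eq i.val i.isLt, Fin.eta]⟩
      rw [e1, Finset.card_image_of_injective _ Fin.val_injective]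
      have e2 : (Finset.univ.filter (fun i : Fin (4*k) => 3*k ≤ (ν i).val)).card
          = (Finset.univ.filter (fun i : Fin (4*k) => 3*k ≤ i.val)).card := by
        apply Finset.card_bij (fun a _ => ν a)
        · intro a ha
          simp only [Finset.mem_filter, Finset.mem_univ, true_and] at ha ⊢
          exact ha
        · intro a _ b _ hab
          exact ν.injective hab
        · intro b hb
          refine ⟨ν.symm b, ?_, by simp⟩
          simp only [Finset.mem_filter, Finset.mem_univ, true_and] at hb ⊢
          simpa using hb
      rw [e2]
      have e3 : (Finset.univ.filter (fun i : Fin (4*k) => 3*k ≤ i.val)).image Fin.val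
          = Finset.Ico (3*k) (4*k) := by
        ext q
        simp only [Finset.mem_image, Finset.mem_filter, Finset.mem_univ, true_and,
          Finset.mem_Ico]
        constructor
        · rintro ⟨i, hi, rfl⟩
          exact ⟨hi, i.isLt⟩
        · rintro ⟨h1, h2⟩
          exact ⟨⟨q, h2⟩, h1, rfl⟩
      have := Finset.card_image_of_injective
        (Finset.univ.filter (fun i : Fin (4*k) => 3*k ≤ i.val)) Fin.val_injective
      rw [e3, Nat.card_Ico] at this
      omega
    have hm : ∀ a, a < k → ∃ m, 1 ≤ m ∧ m ≤ 4*k ∧ Rfun k ⇑ν m = a + 1 ∧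
        (∀ q, Rfun k ⇑ν q ≤ a ↔ q < m) ∧ (3*k ≤ vfun k ⇑ν (m-1)) ∧
        Rfun k ⇑ν (m-1) = a ∧ Sfun k Y ⇑ν m = 0 ∧ m - 1 < 4*k := by
      intro a ha
      have hex : ∃ m, a + 1 ≤ Rfun k ⇑ν m := ⟨4*k, by rw [hRtot]; omega⟩
      have hfind := Nat.find_spec hex
      have hmin : ∀ q, q < Nat.find hex → ¬ (a+1 ≤ Rfun k ⇑ν q) :=
        fun q hq => Nat.find_min hex hq
      set m := Nat.find hex with hmdef
      have hm4 : m ≤ 4*k := Nat.find_le (by rw [hRtot]; omega)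
      have hm1 : 1 ≤ m := by
        rcases Nat.eq_zero_or_pos m with h | h
        · exfalso
          have hR0 : Rfun k ⇑ν 0 = 0 := by simp [Rfun]
          rw [h, hR0] at hfind
          omega
        · exact h
      have hprev : Rfun k ⇑ν (m-1) ≤ a := by
        have := hmin (m-1) (by omega)
        omega
      have hsucc := Rfun_succ k ⇑ν (m-1)
      rw [show m-1+1 = m from by omega] at hsucc
      have hvres : 3*k ≤ vfun k ⇑ν (m-1) := by
        by_contra hc
        rw [if_neg hc] at hsucc
        omega
      rw [if_pos hvres] at hsucc
      have hRm : Rfun k ⇑ν m = a + 1 := by omega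
      have hRprev : Rfun k ⇑ν (m-1) = a := by omega
      have hiff : ∀ q, Rfun k ⇑ν q ≤ a ↔ q < m := by
        intro q
        constructor
        · intro hle
          by_contra hc
          have := hRmono (not_lt.mp hc : m ≤ q)
          omega
        · intro hlt
          have := hmin q hlt
          omega
      have hm14 : m - 1 < 4*k := by omega
      have hSm : Sfun k Y ⇑ν m = 0 := by
        have h1 := hreset (m-1) hm14 hvres
        have h2 := Sfun_succ k Y ⇑ν (m-1)
        rw [show m-1+1 = m from by omega] at h2
        rw [h2, h1, hgr (m-1) hm14 hvres]
        ring
      exact ⟨m, hm1, hm4, hRm, hiff, hvres, hRprev, hSm, hm14⟩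
    choose mfun hm1 hm4 hRm hiff hvres hRprev hSm hm14 using hm
    have hT : ∀ a (ha : a < k),
        ∑ q ∈ (Finset.range (4*k)).filter (fun q => Rfun k ⇑ν q ≤ a),
          gfun k Y ⇑ν q = 0 := by
      intro a ha
      have hset : (Finset.range (4*k)).filter (fun q => Rfun k ⇑ν q ≤ a)
          = Finset.range (mfun a ha) := by
        ext q
        simp only [Finset.mem_filter, Finset.mem_range]
        constructor
        · rintro ⟨h1, h2⟩
          exact (hiff a ha q).mp h2
        · intro h
          exact ⟨by have := hm4 a ha; omega, (hiff a ha q).mpr h⟩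
      rw [hset]
      exact hSm a ha
    have hU : ∀ a, a < k →
        ∑ q ∈ (Finset.range (4*k)).filter (fun q => Rfun k ⇑ν q = a),
          gfun k Y ⇑ν q = 0 := by
      intro a ha
      cases a with
      | zero =>
        have hset : (Finset.range (4*k)).filter (fun q => Rfun k ⇑ν q = 0)
            = (Finset.range (4*k)).filter (fun q => Rfun k ⇑ν q ≤ 0) := by
          apply Finset.filter_congr
          intro q _
          simp [Nat.le_zero]
        rw [hset]
        exact hT 0 ha
      | succ a =>
        have key := Finset.sum_filter_add_sum_filter_not
          ((Finset.range (4*k)).filter (fun q => Rfun k ⇑ν q ≤ a+1))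
          (fun q => Rfun k ⇑ν q ≤ a) (gfun k Y ⇑ν)
        rw [Finset.filter_filter, Finset.filter_filter] at key
        have e1 : (Finset.range (4*k)).filter
              (fun q => Rfun k ⇑ν q ≤ a+1 ∧ Rfun k ⇑ν q ≤ a)
            = (Finset.range (4*k)).filter (fun q => Rfun k ⇑ν q ≤ a) :=
          Finset.filter_congr (fun q _ => by omega)
        have e2 : (Finset.range (4*k)).filter
              (fun q => Rfun k ⇑ν q ≤ a+1 ∧ ¬ Rfun k ⇑ν q ≤ a)
            = (Finset.range (4*k)).filter (fun q => Rfun k ⇑ν q = a+1) :=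
          Finset.filter_congr (fun q _ => by omega)
        rw [e1, e2, hT (a+1) ha, hT a (by omega)] at key
        linarith
    have hsingle : ∀ a (ha : a < k), (Finset.range (4*k)).filter
          (fun q => ¬ vfun k ⇑ν q < 3*k ∧ Rfun k ⇑ν q = a) = {mfun a ha - 1} := by
      intro a ha
      ext q
      simp only [Finset.mem_filter, Finset.mem_range, Finset.mem_singleton, not_lt]
      constructor
      · rintro ⟨hq, hv, hR⟩
        have hstep := Rfun_succ k ⇑ν q
        rw [if_pos hv] at hstep
        have h1 : ¬ (q + 1 < mfun a ha) := by
          rw [← hiff a ha]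
          omega
        have h2 : q < mfun a ha := (hiff a ha q).mp (by omega)
        omega
      · rintro rfl
        exact ⟨hm14 a ha, hvres a ha, hRprev a ha⟩
    have hW : ∀ a (ha : a < k),
        ∑ q ∈ (Finset.range (4*k)).filter
          (fun q => vfun k ⇑ν q < 3*k ∧ Rfun k ⇑ν q = a), gfun k Y ⇑ν q = 1 := by
      intro a ha
      have key := Finset.sum_filter_add_sum_filter_not
        ((Finset.range (4*k)).filter (fun q => Rfun k ⇑ν q = a))
        (fun q => vfun k ⇑ν q < 3*k) (gfun k Y ⇑ν)
      rw [Finset.filter_filter, Finset.filter_filter] at key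
      have e1 : (Finset.range (4*k)).filter
            (fun q => Rfun k ⇑ν q = a ∧ vfun k ⇑ν q < 3*k)
          = (Finset.range (4*k)).filter
            (fun q => vfun k ⇑ν q < 3*k ∧ Rfun k ⇑ν q = a) :=
        Finset.filter_congr (fun q _ => by tauto)
      have e2 : (Finset.range (4*k)).filter
            (fun q => Rfun k ⇑ν q = a ∧ ¬ vfun k ⇑ν q < 3*k)
          = {mfun a ha - 1} := by
        rw [← hsingle a ha]
        exact Finset.filter_congr (fun q _ => by tauto)
      rw [e1, e2, Finset.sum_singleton,
        hgr (mfun a ha - 1) (hm14 a ha) (hvres a ha), hU a ha] at key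
      linarith
    have hinjval : ∀ q q', q < 4*k → q' < 4*k → vfun k ⇑ν q = vfun k ⇑ν q' → q = q' := by
      intro q q' hq hq' hee
      rw [hv_eq q hq, hv_eq q' hq'] at hee
      have := ν.injective (Fin.ext hee)
      simpa [Fin.ext_iff] using this
    have hkey : ∀ q, q < 4*k → vfun k ⇑ν q < 3*k → Rfun k ⇑ν q < k := by
      intro q hq hv
      by_contra hc
      push_neg at hc
      have key := Finset.sum_filter_add_sum_filter_not (Finset.range (4*k))
        (fun q => Rfun k ⇑ν q ≤ k-1) (gfun k Y ⇑ν)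
      have h1 := hT (k-1) (by omega)
      have h2 : ∑ q ∈ Finset.range (4*k), gfun k Y ⇑ν q = 0 := hStot
      have hpos : 0 < ∑ q ∈ (Finset.range (4*k)).filter
          (fun q => ¬ Rfun k ⇑ν q ≤ k-1), gfun k Y ⇑ν q := by
        apply Finset.sum_pos
        · intro x hx
          simp only [Finset.mem_filter, Finset.mem_range, not_le] at hx
          obtain ⟨hx4, hxR⟩ := hx
          have hxz : vfun k ⇑ν x < 3*k := by
            by_contra hcc
            push_neg at hcc
            have hstep := Rfun_succ k ⇑ν x
            rw [if_pos hcc] at hstep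
            have hmon := hRmono (by omega : x+1 ≤ 4*k)
            rw [hRtot] at hmon
            omega
          have := hzq x hx4 hxz
          linarith
        · refine ⟨q, ?_⟩
          simp only [Finset.mem_filter, Finset.mem_range, not_le]
          exact ⟨hq, by omega⟩
      rw [h1, h2] at key
      linarith
    have hfilterinj : ∀ a : Fin k, Set.InjOn (fun q => vfun k ⇑ν q + 1)
        ((Finset.range (4*k)).filter
          (fun q => vfun k ⇑ν q < 3*k ∧ Rfun k ⇑ν q = a.val)) := by
      intro a q hq q' hq' h
      simp only [Finset.coe_filter, Set.mem_setOf_eq, Finset.mem_range] at hq hq'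
      have h' : vfun k ⇑ν q + 1 = vfun k ⇑ν q' + 1 := h
      exact hinjval q q' hq.1 hq'.1 (by omega)
    refine ⟨fun a => ((Finset.range (4*k)).filter
        (fun q => vfun k ⇑ν q < 3*k ∧ Rfun k ⇑ν q = a.val)).image
        (fun q => vfun k ⇑ν q + 1), ?_, ?_, ?_, ?_⟩
    · intro a b hab
      rw [Finset.disjoint_left]
      intro x hxa hxb
      simp only [Finset.mem_image, Finset.mem_filter, Finset.mem_range] at hxa hxb
      obtain ⟨q, ⟨hq4, hqv, hqR⟩, hxq⟩ := hxa
      obtain ⟨q', ⟨hq4', hqv', hqR'⟩, hxq'⟩ := hxb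
      have e1 : vfun k ⇑ν q + 1 = x := hxq
      have e2 : vfun k ⇑ν q' + 1 = x := hxq'
      have hqq : q' = q := hinjval q' q hq4' hq4 (by omega)
      subst hqq
      exact hab (Fin.ext (by omega))
    · ext x
      simp only [Finset.mem_biUnion, Finset.mem_univ, true_and, Finset.mem_image,
        Finset.mem_filter, Finset.mem_range, Finset.mem_Icc]
      constructor
      · rintro ⟨a, q, ⟨hq4, hqv, hqR⟩, hxq⟩
        have hxq' : vfun k ⇑ν q + 1 = x := hxq
        omega
      · rintro ⟨hx1, hx2⟩
        have hq4 : ((ν.symm ⟨x - 1, by omega⟩ : Fin (4*k)) : ℕ) < 4*k :=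
          (ν.symm ⟨x - 1, by omega⟩).isLt
        have hqv : vfun k ⇑ν ((ν.symm ⟨x - 1, by omega⟩ : Fin (4*k)) : ℕ) = x - 1 := by
          rw [hv_eq _ hq4, Fin.eta]
          simp
        have hzpos : vfun k ⇑ν ((ν.symm ⟨x - 1, by omega⟩ : Fin (4*k)) : ℕ) < 3*k := by
          omega
        exact ⟨⟨Rfun k ⇑ν _, hkey _ hq4 hzpos⟩, _, ⟨hq4, hzpos, rfl⟩, by omega⟩
    · intro a
      rw [Finset.card_image_of_injOn (hfilterinj a)]
      have hsum1 := hW a.val a.isLt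
      set s := (Finset.range (4*k)).filter
        (fun q => vfun k ⇑ν q < 3*k ∧ Rfun k ⇑ν q = a.val) with hs
      have hterm : ∀ x ∈ s, 1/4 < gfun k Y ⇑ν x ∧ gfun k Y ⇑ν x < 1/2 := by
        intro x hx
        rw [hs] at hx
        simp only [Finset.mem_filter, Finset.mem_range] at hx
        exact hzq x hx.1 hx.2.1
      have hne : s.Nonempty := by
        rw [Finset.nonempty_iff_ne_empty]
        intro hemp
        rw [hemp, Finset.sum_empty] at hsum1
        norm_num at hsum1
      have hub := Finset.sum_lt_sum_of_nonempty hne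
        (f := gfun k Y ⇑ν) (g := fun _ => (1/2 : ℚ)) (fun x hx => (hterm x hx).2)
      have hlb := Finset.sum_lt_sum_of_nonempty hne
        (f := fun _ => (1/4 : ℚ)) (g := gfun k Y ⇑ν) (fun x hx => (hterm x hx).1)
      rw [hsum1, Finset.sum_const, nsmul_eq_mul] at hub
      rw [hsum1, Finset.sum_const, nsmul_eq_mul] at hlb
      have hc2 : (2:ℚ) < s.card := by linarith
      have hc4 : (s.card : ℚ) < 4 := by linarith
      have : (2:ℕ) < s.card := by exact_mod_cast hc2
      have : s.card < 4 := by exact_mod_cast hc4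
      omega
    · intro a
      rw [Finset.sum_image (fun q hq q' hq' h => hfilterinj a (by simpa using hq)
        (by simpa using hq') h)]
      have hc : ∀ q ∈ (Finset.range (4*k)).filter
          (fun q => vfun k ⇑ν q < 3*k ∧ Rfun k ⇑ν q = a.val),
          z (vfun k ⇑ν q + 1) = gfun k Y ⇑ν q := by
        intro q hq
        simp only [Finset.mem_filter, Finset.mem_range] at hq
        exact (hgz q hq.1 hq.2.1).symm
      rw [Finset.sum_congr rfl hc]
      exact hW a.val a.isLt
end

section
/- Let x_1 ≥ x_2 ≥ … ≥ x_n be reals. For every n×n doubly stochastic matrix Z = (z_{ij}) there exists an n×n doubly stochastic matrix T = (t_{ij}) that has the consecutiveness property and satisfies Σ_{i=1}^n t_{ij}·x_i = Σ_{i=1}^n z_{ij}·x_i for every column j ∈ {1,…,n}. -/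
open Finset Filter Topology

private lemma sum_eq_three {n : ℕ} {i1 i2 i3 : Fin n} (h12 : i1 ≠ i2) (h13 : i1 ≠ i3)
    (h23 : i2 ≠ i3) (f : Fin n → ℝ) (hf : ∀ i, i ≠ i1 → i ≠ i2 → i ≠ i3 → f i = 0) :
    ∑ i, f i = f i1 + f i2 + f i3 := by
  classical
  have key : ∑ i ∈ ({i1, i2, i3} : Finset (Fin n)), f i = ∑ i, f i := by
    refine Finset.sum_subset (Finset.subset_univ _) ?_
    intro i _ hi
    simp only [Finset.mem_insert, Finset.mem_singleton, not_or] at hi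
    exact hf i hi.1 hi.2.1 hi.2.2
  rw [← key]
  rw [Finset.sum_insert (by simp [h12, h13]), Finset.sum_insert (by simp [h23]),
    Finset.sum_singleton]
  ring

private lemma sum_eq_two {n : ℕ} {j j' : Fin n} (h : j ≠ j') (f : Fin n → ℝ)
    (hf : ∀ b, b ≠ j → b ≠ j' → f b = 0) :
    ∑ b, f b = f j + f j' := by
  classical
  have key : ∑ b ∈ ({j, j'} : Finset (Fin n)), f b = ∑ b, f b := by
    refine Finset.sum_subset (Finset.subset_univ _) ?_
    intro b _ hb
    simp only [Finset.mem_insert, Finset.mem_singleton, not_or] at hb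
    exact hf b hb.1 hb.2
  rw [← key, Finset.sum_insert (by simp [h]), Finset.sum_singleton]

private lemma strict_case (n : ℕ) (x : Fin n → ℝ) (hx : StrictAnti x)
    (z : Fin n → Fin n → ℝ)
    (hz01 : ∀ i j, 0 ≤ z i j ∧ z i j ≤ 1)
    (hzrow : ∀ i, ∑ j, z i j = 1)
    (hzcol : ∀ j, ∑ i, z i j = 1) :
    ∃ t : Fin n → Fin n → ℝ,
      (∀ i j, 0 ≤ t i j ∧ t i j ≤ 1) ∧
      (∀ i, ∑ j, t i j = 1) ∧
      (∀ j, ∑ i, t i j = 1) ∧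
      (∀ j i1 i2 i3 : Fin n, i1 < i2 → i2 < i3 → 0 < t i1 j → 0 < t i3 j →
        ∑ j' ∈ Finset.univ.filter (· ≤ j), t i2 j' = 1) ∧
      (∀ j, ∑ i, t i j * x i = ∑ i, z i j * x i) := by
  classical
  have hcont : ∀ (i j : Fin n), Continuous fun t : Fin n → Fin n → ℝ => t i j :=
    fun i j => (continuous_apply j).comp (continuous_apply i)
  set K : Set (Fin n → Fin n → ℝ) :=
    {t | (∀ i j, 0 ≤ t i j ∧ t i j ≤ 1)} ∩ {t | ∀ i, ∑ j, t i j = 1} ∩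
      {t | ∀ j, ∑ i, t i j = 1} ∩ {t | ∀ j, ∑ i, t i j * x i = ∑ i, z i j * x i} with hKdef
  have hzK : z ∈ K := ⟨⟨⟨hz01, hzrow⟩, hzcol⟩, fun j => rfl⟩
  have hKclosed : IsClosed K := by
    refine IsClosed.inter (IsClosed.inter (IsClosed.inter ?_ ?_) ?_) ?_
    · have : {t : Fin n → Fin n → ℝ | ∀ i j, 0 ≤ t i j ∧ t i j ≤ 1}
          = ⋂ i, ⋂ j, {t : Fin n → Fin n → ℝ | 0 ≤ t i j ∧ t i j ≤ 1} := by
        ext t; simp [Set.mem_iInter]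
      rw [this]
      exact isClosed_iInter fun i => isClosed_iInter fun j =>
        IsClosed.inter (isClosed_le continuous_const (hcont i j))
          (isClosed_le (hcont i j) continuous_const)
    · have : {t : Fin n → Fin n → ℝ | ∀ i, ∑ j, t i j = 1}
          = ⋂ i, {t : Fin n → Fin n → ℝ | ∑ j, t i j = 1} := by
        ext t; simp [Set.mem_iInter]
      rw [this]
      exact isClosed_iInter fun i =>
        isClosed_eq (continuous_finset_sum _ fun j _ => hcont i j) continuous_const
    · have : {t : Fin n → Fin n → ℝ | ∀ j, ∑ i, t i j = 1}
          = ⋂ j, {t : Fin n → Fin n → ℝ | ∑ i, t i j = 1} := by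
        ext t; simp [Set.mem_iInter]
      rw [this]
      exact isClosed_iInter fun j =>
        isClosed_eq (continuous_finset_sum _ fun i _ => hcont i j) continuous_const
    · have : {t : Fin n → Fin n → ℝ | ∀ j, ∑ i, t i j * x i = ∑ i, z i j * x i}
          = ⋂ j, {t : Fin n → Fin n → ℝ | ∑ i, t i j * x i = ∑ i, z i j * x i} := by
        ext t; simp [Set.mem_iInter]
      rw [this]
      exact isClosed_iInter fun j =>
        isClosed_eq (continuous_finset_sum _ fun i _ => (hcont i j).mul continuous_const)
          continuous_const
  have hKcomp : IsCompact K := by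
    refine IsCompact.of_isClosed_subset
      (isCompact_univ_pi fun _ : Fin n => isCompact_univ_pi fun _ : Fin n => isCompact_Icc
        (a := (0:ℝ)) (b := 1)) hKclosed ?_
    intro t ht
    rw [Set.mem_univ_pi]
    intro i
    rw [Set.mem_univ_pi]
    intro j
    exact Set.mem_Icc.mpr (ht.1.1.1 i j)
  have hΦcont : Continuous fun t : Fin n → Fin n → ℝ =>
      ∑ i, ∑ j2 : Fin n, x i ^ 2 * ((j2 : ℕ) : ℝ) * t i j2 :=
    continuous_finset_sum _ fun i _ => continuous_finset_sum _ fun j2 _ =>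
      continuous_const.mul (hcont i j2)
  obtain ⟨T, hTK, hmax⟩ := hKcomp.exists_isMaxOn ⟨z, hzK⟩ hΦcont.continuousOn
  obtain ⟨⟨⟨hT01, hTrow⟩, hTcol⟩, hTx⟩ := hTK
  refine ⟨T, hT01, hTrow, hTcol, ?_, hTx⟩
  intro j i1 i2 i3 h12 h23 hpos1 hpos3
  by_contra hne1
  have h12' : i1 ≠ i2 := ne_of_lt h12
  have h23' : i2 ≠ i3 := ne_of_lt h23
  have h13' : i1 ≠ i3 := ne_of_lt (h12.trans h23)
  have hx12 : x i2 < x i1 := hx h12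
  have hx23 : x i3 < x i2 := hx h23
  have hx13 : (0:ℝ) < x i1 - x i3 := by linarith
  set L : ℝ := (x i2 - x i3) / (x i1 - x i3) with hLdef
  have hL0 : 0 ≤ L := div_nonneg (by linarith) (by linarith)
  have hL1 : L ≤ 1 := by rw [div_le_one hx13]; linarith
  -- find a column j' > j where row i2 has positive mass
  have hprefle : ∑ j' ∈ Finset.univ.filter (· ≤ j), T i2 j' ≤ 1 := by
    rw [← hTrow i2]
    exact Finset.sum_le_sum_of_subset_of_nonneg (Finset.filter_subset _ _)
      (fun b _ _ => (hT01 i2 b).1)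
  have hpreflt : ∑ j' ∈ Finset.univ.filter (· ≤ j), T i2 j' < 1 := lt_of_le_of_ne hprefle hne1
  have hsplit := Finset.sum_filter_add_sum_filter_not Finset.univ (· ≤ j) (T i2)
  have hcompl : ∑ j' ∈ Finset.univ.filter (fun b => ¬ b ≤ j), (0:ℝ)
      < ∑ j' ∈ Finset.univ.filter (fun b => ¬ b ≤ j), T i2 j' := by
    rw [Finset.sum_const_zero]
    have h2 := hTrow i2
    linarith [hsplit.trans h2]
  obtain ⟨j', hj'mem, hj'pos⟩ := Finset.exists_lt_of_sum_lt hcompl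
  have hjj' : j < j' := by
    simp only [Finset.mem_filter] at hj'mem
    exact not_le.mp hj'mem.2
  have hjne : j ≠ j' := ne_of_lt hjj'
  set ε : ℝ := min (min (T i1 j) (T i3 j)) (T i2 j') with hεdef
  have hε : 0 < ε := lt_min (lt_min hpos1 hpos3) hj'pos
  have hε1 : ε ≤ T i1 j := le_trans (min_le_left _ _) (min_le_left _ _)
  have hε3 : ε ≤ T i3 j := le_trans (min_le_left _ _) (min_le_right _ _)
  have hε2 : ε ≤ T i2 j' := min_le_right _ _
  set r : Fin n → ℝ :=
    fun a => if a = i1 then -L else if a = i2 then 1 else if a = i3 then -(1-L) else 0 with hrdef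
  set s : Fin n → ℝ := fun b => if b = j then 1 else if b = j' then -1 else 0 with hsdef
  have hr1 : r i1 = -L := by simp [hrdef]
  have hr2 : r i2 = 1 := by simp [hrdef, h12'.symm]
  have hr3 : r i3 = -(1-L) := by simp [hrdef, h13'.symm, h23'.symm]
  have hr0 : ∀ a, a ≠ i1 → a ≠ i2 → a ≠ i3 → r a = 0 :=
    fun a h1 h2 h3 => by simp [hrdef, h1, h2, h3]
  have hs1 : s j = 1 := by simp [hsdef]
  have hs2 : s j' = -1 := by simp [hsdef, hjne.symm]
  have hs0 : ∀ b, b ≠ j → b ≠ j' → s b = 0 := fun b h1 h2 => by simp [hsdef, h1, h2]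
  have hrsum : ∑ a, r a = 0 := by
    rw [sum_eq_three h12' h13' h23' r hr0, hr1, hr2, hr3]; ring
  have hrxsum : ∑ a, r a * x a = 0 := by
    rw [sum_eq_three h12' h13' h23' _ (fun a h1 h2 h3 => by rw [hr0 a h1 h2 h3]; ring),
      hr1, hr2, hr3, hLdef]
    field_simp
    ring
  have hrx2sum : ∑ a, r a * x a ^ 2 = -((x i1 - x i2) * (x i2 - x i3)) := by
    rw [sum_eq_three h12' h13' h23' _ (fun a h1 h2 h3 => by rw [hr0 a h1 h2 h3]; ring),
      hr1, hr2, hr3, hLdef]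
    field_simp
    ring
  have hssum : ∑ b, s b = 0 := by
    rw [sum_eq_two hjne s hs0, hs1, hs2]; ring
  have hsjsum : ∑ b : Fin n, ((b : ℕ) : ℝ) * s b = ((j : ℕ) : ℝ) - ((j' : ℕ) : ℝ) := by
    rw [sum_eq_two hjne _ (fun b h1 h2 => by rw [hs0 b h1 h2]; ring), hs1, hs2]; ring
  set T' : Fin n → Fin n → ℝ := fun a b => T a b + ε * (r a * s b) with hT'def
  have hT'nonneg : ∀ a b, 0 ≤ T' a b := by
    intro a b
    have hTab := (hT01 a b).1
    show 0 ≤ T a b + ε * (r a * s b)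
    have key1 : ε * L ≤ ε := mul_le_of_le_one_right hε.le hL1
    have key2 : ε * (1 - L) ≤ ε := mul_le_of_le_one_right hε.le (by linarith)
    have key3 : 0 ≤ ε * L := mul_nonneg hε.le hL0
    have key4 : 0 ≤ ε * (1 - L) := mul_nonneg hε.le (by linarith)
    rcases eq_or_ne b j with rfl | hbj
    · rw [hs1]
      rcases eq_or_ne a i1 with rfl | ha1
      · rw [hr1]; linarith [hε1]
      rcases eq_or_ne a i2 with rfl | ha2
      · rw [hr2]; linarith [hε.le]
      rcases eq_or_ne a i3 with rfl | ha3
      · rw [hr3]; linarith [hε3]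
      · rw [hr0 a ha1 ha2 ha3]; linarith
    rcases eq_or_ne b j' with rfl | hbj'
    · rw [hs2]
      rcases eq_or_ne a i1 with rfl | ha1
      · rw [hr1]; linarith
      rcases eq_or_ne a i2 with rfl | ha2
      · rw [hr2]; linarith [hε2]
      rcases eq_or_ne a i3 with rfl | ha3
      · rw [hr3]; linarith
      · rw [hr0 a ha1 ha2 ha3]; linarith
    · rw [hs0 b hbj hbj']; linarith
  have hT'row : ∀ a, ∑ b, T' a b = 1 := by
    intro a
    have h1 : ∑ b, T' a b = ∑ b, T a b + ε * r a * ∑ b, s b := by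
      rw [Finset.mul_sum, ← Finset.sum_add_distrib]
      exact Finset.sum_congr rfl fun b _ => by simp only [hT'def]; ring
    rw [h1, hssum, hTrow a]; ring
  have hT'col : ∀ b, ∑ a, T' a b = 1 := by
    intro b
    have h1 : ∑ a, T' a b = ∑ a, T a b + ε * s b * ∑ a, r a := by
      rw [Finset.mul_sum, ← Finset.sum_add_distrib]
      exact Finset.sum_congr rfl fun a _ => by simp only [hT'def]; ring
    rw [h1, hrsum, hTcol b]; ring
  have hT'x : ∀ b, ∑ a, T' a b * x a = ∑ a, z a b * x a := by
    intro b
    have h1 : ∑ a, T' a b * x a = ∑ a, T a b * x a + ε * s b * ∑ a, r a * x a := by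
      rw [Finset.mul_sum, ← Finset.sum_add_distrib]
      exact Finset.sum_congr rfl fun a _ => by simp only [hT'def]; ring
    rw [h1, hrxsum, hTx b]; ring
  have hT'le : ∀ a b, T' a b ≤ 1 := by
    intro a b
    have h1 := Finset.single_le_sum (f := fun c => T' a c)
      (fun c _ => hT'nonneg a c) (Finset.mem_univ b)
    rw [hT'row a] at h1
    exact h1
  have hT'K : T' ∈ K := ⟨⟨⟨fun a b => ⟨hT'nonneg a b, hT'le a b⟩, hT'row⟩, hT'col⟩, hT'x⟩
  have hΦ : (∑ i, ∑ j2 : Fin n, x i ^ 2 * ((j2 : ℕ) : ℝ) * T' i j2)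
      = (∑ i, ∑ j2 : Fin n, x i ^ 2 * ((j2 : ℕ) : ℝ) * T i j2)
        + ε * ((∑ a, r a * x a ^ 2) * (∑ b : Fin n, ((b : ℕ) : ℝ) * s b)) := by
    rw [Finset.sum_mul_sum, Finset.mul_sum, ← Finset.sum_add_distrib]
    refine Finset.sum_congr rfl fun a _ => ?_
    rw [Finset.mul_sum, ← Finset.sum_add_distrib]
    refine Finset.sum_congr rfl fun b _ => ?_
    simp only [hT'def]; ring
  have hjlt : ((j : ℕ) : ℝ) < ((j' : ℕ) : ℝ) := by exact_mod_cast hjj'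
  have hlt : (∑ i, ∑ j2 : Fin n, x i ^ 2 * ((j2 : ℕ) : ℝ) * T i j2)
      < ∑ i, ∑ j2 : Fin n, x i ^ 2 * ((j2 : ℕ) : ℝ) * T' i j2 := by
    rw [hΦ, hrx2sum, hsjsum]
    have hP : (0:ℝ) < (x i1 - x i2) * (x i2 - x i3) := mul_pos (by linarith) (by linarith)
    have hkey : (0:ℝ) < ε * (-((x i1 - x i2) * (x i2 - x i3)) * (((j : ℕ) : ℝ) - ((j' : ℕ) : ℝ))) :=
      mul_pos hε (mul_pos_of_neg_of_neg (neg_lt_zero.mpr hP) (by linarith))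
    linarith
  have hle := hmax hT'K
  simp only [Set.mem_setOf_eq] at hle
  exact absurd hle (not_le.mpr hlt)

/-- **Transformation to a doubly stochastic matrix with the consecutiveness property.**
For `x_1 ≥ … ≥ x_n` and any doubly stochastic matrix `Z`, there is a doubly
stochastic matrix `T` with the consecutiveness property (for every column `j`,
whenever `t_{i₁j} > 0` and `t_{i₃j} > 0` with `i₁ < i₂ < i₃`, row `i₂` is
finished at column `j`) such that `Σ_i t_{ij} x_i = Σ_i z_{ij} x_i` for all `j`. -/
theorem exists_consecutive_doubly_stochastic
    (n : ℕ) (x : Fin n → ℝ) (hx : Antitone x)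
    (z : Fin n → Fin n → ℝ)
    (hz01 : ∀ i j, 0 ≤ z i j ∧ z i j ≤ 1)
    (hzrow : ∀ i, ∑ j, z i j = 1)
    (hzcol : ∀ j, ∑ i, z i j = 1) :
    ∃ t : Fin n → Fin n → ℝ,
      (∀ i j, 0 ≤ t i j ∧ t i j ≤ 1) ∧
      (∀ i, ∑ j, t i j = 1) ∧
      (∀ j, ∑ i, t i j = 1) ∧
      (∀ j i1 i2 i3 : Fin n, i1 < i2 → i2 < i3 → 0 < t i1 j → 0 < t i3 j →
        ∑ j' ∈ Finset.univ.filter (· ≤ j), t i2 j' = 1) ∧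
      (∀ j, ∑ i, t i j * x i = ∑ i, z i j * x i) := by
  classical
  set C : Set (Fin n → Fin n → ℝ) :=
    Set.univ.pi fun _ : Fin n => Set.univ.pi fun _ : Fin n => Set.Icc (0:ℝ) 1 with hCdef
  have hCcomp : IsCompact C :=
    isCompact_univ_pi fun _ => isCompact_univ_pi fun _ => isCompact_Icc
  set xk : ℕ → Fin n → ℝ := fun k i => x i + ((n : ℝ) - ((i : ℕ) : ℝ)) / ((k : ℝ) + 1) with hxk
  have hstrict : ∀ k, StrictAnti (xk k) := by
    intro k a b hab
    have h1 : x b ≤ x a := hx hab.le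
    have h2 : ((a : ℕ) : ℝ) < ((b : ℕ) : ℝ) := by exact_mod_cast hab
    have h3 : (0:ℝ) < (k : ℝ) + 1 := by positivity
    simp only [hxk]
    have h4 : ((n : ℝ) - ((b : ℕ) : ℝ)) / ((k : ℝ) + 1)
        < ((n : ℝ) - ((a : ℕ) : ℝ)) / ((k : ℝ) + 1) :=
      by apply (div_lt_div_iff_of_pos_right h3).mpr; linarith
    linarith
  choose Tk hTk using fun k => strict_case n (xk k) (hstrict k) z hz01 hzrow hzcol
  have hTkC : ∀ k, Tk k ∈ C := by
    intro k
    rw [hCdef, Set.mem_univ_pi]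
    intro i
    rw [Set.mem_univ_pi]
    intro j
    exact Set.mem_Icc.mpr ((hTk k).1 i j)
  obtain ⟨T, hTC, φ, hφ, hconv⟩ := hCcomp.tendsto_subseq hTkC
  have hent : ∀ i j, Tendsto (fun k => Tk (φ k) i j) atTop (𝓝 (T i j)) := by
    intro i j
    have h1 := tendsto_pi_nhds.mp hconv i
    exact tendsto_pi_nhds.mp h1 j
  have hφtop : Tendsto φ atTop atTop := hφ.tendsto_atTop
  have hxconv : ∀ i : Fin n, Tendsto (fun k => xk (φ k) i) atTop (𝓝 (x i)) := by
    intro i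
    have hden : Tendsto (fun m : ℕ => (m : ℝ) + 1) atTop atTop :=
      tendsto_atTop_add_const_right atTop 1 tendsto_natCast_atTop_atTop
    have h0 : Tendsto (fun m : ℕ => ((n : ℝ) - ((i : ℕ) : ℝ)) / ((m : ℝ) + 1)) atTop (𝓝 0) :=
      Filter.Tendsto.div_atTop tendsto_const_nhds hden
    have h1 := h0.comp hφtop
    have h2 : Tendsto (fun k => x i + ((n : ℝ) - ((i : ℕ) : ℝ)) / ((φ k : ℝ) + 1)) atTop
        (𝓝 (x i + 0)) := tendsto_const_nhds.add h1
    rw [add_zero] at h2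
    exact h2
  have hT01 : ∀ i j, 0 ≤ T i j ∧ T i j ≤ 1 := by
    intro i j
    have h1 := hTC
    rw [hCdef, Set.mem_univ_pi] at h1
    have h2 := h1 i
    rw [Set.mem_univ_pi] at h2
    exact Set.mem_Icc.mp (h2 j)
  refine ⟨T, hT01, ?_, ?_, ?_, ?_⟩
  · intro i
    have h1 : Tendsto (fun k => ∑ j2, Tk (φ k) i j2) atTop (𝓝 (∑ j2, T i j2)) :=
      tendsto_finset_sum _ fun j2 _ => hent i j2
    have h2 : (fun k => ∑ j2, Tk (φ k) i j2) = fun _ => (1:ℝ) :=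
      funext fun k => (hTk (φ k)).2.1 i
    rw [h2] at h1
    exact tendsto_nhds_unique h1 tendsto_const_nhds
  · intro j
    have h1 : Tendsto (fun k => ∑ i, Tk (φ k) i j) atTop (𝓝 (∑ i, T i j)) :=
      tendsto_finset_sum _ fun i _ => hent i j
    have h2 : (fun k => ∑ i, Tk (φ k) i j) = fun _ => (1:ℝ) :=
      funext fun k => (hTk (φ k)).2.2.1 j
    rw [h2] at h1
    exact tendsto_nhds_unique h1 tendsto_const_nhds
  · intro j i1 i2 i3 h12 h23 hp1 hp3
    have he1 : ∀ᶠ k in atTop, 0 < Tk (φ k) i1 j :=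
      (hent i1 j).eventually (eventually_gt_nhds hp1)
    have he3 : ∀ᶠ k in atTop, 0 < Tk (φ k) i3 j :=
      (hent i3 j).eventually (eventually_gt_nhds hp3)
    have heq : (fun k => ∑ j' ∈ Finset.univ.filter (· ≤ j), Tk (φ k) i2 j')
        =ᶠ[atTop] fun _ => (1:ℝ) := by
      filter_upwards [he1, he3] with k h1 h3
      exact (hTk (φ k)).2.2.2.1 j i1 i2 i3 h12 h23 h1 h3
    have hlim : Tendsto (fun k => ∑ j' ∈ Finset.univ.filter (· ≤ j), Tk (φ k) i2 j') atTop
        (𝓝 (∑ j' ∈ Finset.univ.filter (· ≤ j), T i2 j')) :=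
      tendsto_finset_sum _ fun j' _ => hent i2 j'
    exact tendsto_nhds_unique hlim ((tendsto_congr' heq).mpr tendsto_const_nhds)
  · intro j
    have hL : Tendsto (fun k => ∑ i, Tk (φ k) i j * xk (φ k) i) atTop
        (𝓝 (∑ i, T i j * x i)) :=
      tendsto_finset_sum _ fun i _ => (hent i j).mul (hxconv i)
    have hR : Tendsto (fun k => ∑ i, z i j * xk (φ k) i) atTop
        (𝓝 (∑ i, z i j * x i)) :=
      tendsto_finset_sum _ fun i _ => tendsto_const_nhds.mul (hxconv i)
    have heq : (fun k => ∑ i, Tk (φ k) i j * xk (φ k) i)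
        = fun k => ∑ i, z i j * xk (φ k) i :=
      funext fun k => (hTk (φ k)).2.2.2.2 j
    rw [heq] at hL
    exact tendsto_nhds_unique hL hR
end

section
/- Let x_1 ≥ x_2 ≥ … ≥ x_n be nonnegative reals and let T = (t_{ij}) be an n×n doubly stochastic matrix with the consecutiveness property. Set t_j = Σ_{i=1}^n t_{ij}·x_i for each j. Then there exists a permutation π of {1,…,n} such that for every k ∈ {1,…,n}: 0 ≤ Σ_{j=1}^{k} (x_{π(j)} − t_j) ≤ x_1 − x_n. -/
open Finset
namespace RPE
variable {n : ℕ} {t : Fin n → Fin n → ℝ}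

def lowset (n m : ℕ) : Finset (Fin n) := Finset.univ.filter (fun i => (i : ℕ) < m)
lemma mem_lowset {m : ℕ} {i : Fin n} : i ∈ lowset n m ↔ (i : ℕ) < m := by simp [lowset]
lemma lowset_zero : lowset n 0 = ∅ := by ext i; simp [mem_lowset]
lemma lowset_of_ge {m : ℕ} (h : n ≤ m) : lowset n m = univ := by
  ext i; simp [mem_lowset]; omega
lemma lowset_succ {m : ℕ} (h : m < n) :
    lowset n (m + 1) = insert ⟨m, h⟩ (lowset n m) := by
  ext i; simp only [mem_lowset, mem_insert, Fin.ext_iff]; omega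
lemma lowset_mono {m m' : ℕ} (h : m ≤ m') : lowset n m ⊆ lowset n m' := by
  intro i hi; rw [mem_lowset] at *; omega
lemma not_mem_lowset_self {m : ℕ} (h : m < n) : (⟨m, h⟩ : Fin n) ∉ lowset n m := by
  simp [mem_lowset]
lemma card_lowset {m : ℕ} (h : m ≤ n) : (lowset n m).card = m := by
  have himg : (lowset n m).image (Fin.val) = Finset.range m := by
    ext v
    simp only [mem_image, mem_range, mem_lowset]
    constructor
    · rintro ⟨i, hi, rfl⟩; exact hi
    · intro hv; exact ⟨⟨v, by omega⟩, hv, rfl⟩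
  have := Finset.card_image_of_injective (lowset n m) (Fin.val_injective)
  rw [himg, Finset.card_range] at this
  omega

noncomputable def B (n : ℕ) (t : Fin n → Fin n → ℝ) (a k : ℕ) : ℝ :=
  ∑ j ∈ lowset n k, ∑ i ∈ lowset n a, t i j

lemma B_mono (ht0 : ∀ i j, 0 ≤ t i j) {a k k' : ℕ} (h : k ≤ k') : B n t a k ≤ B n t a k' := by
  apply Finset.sum_le_sum_of_subset_of_nonneg (lowset_mono h)
  intro j _ _
  exact Finset.sum_nonneg fun i _ => ht0 i j

lemma B_zero {a : ℕ} : B n t a 0 = 0 := by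
  simp [B, lowset_zero]

lemma B_left_zero {k : ℕ} : B n t 0 k = 0 := by
  simp [B, lowset_zero]

lemma B_of_col_ge {a k : ℕ} (h : n ≤ k) : B n t a k = B n t a n := by
  unfold B; rw [lowset_of_ge h, lowset_of_ge le_rfl]

lemma B_of_row_ge {a k : ℕ} (h : n ≤ a) : B n t a k = B n t n k := by
  unfold B
  exact Finset.sum_congr rfl fun j _ => by rw [lowset_of_ge h, lowset_of_ge le_rfl]

lemma B_succ_le (ht0 : ∀ i j, 0 ≤ t i j) (htcol : ∀ j, ∑ i, t i j = 1) {a k : ℕ} :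
    B n t a (k + 1) ≤ B n t a k + 1 := by
  by_cases hk : k < n
  · unfold B
    rw [lowset_succ hk, Finset.sum_insert (not_mem_lowset_self hk)]
    have : ∑ i ∈ lowset n a, t i ⟨k, hk⟩ ≤ 1 := by
      rw [← htcol ⟨k, hk⟩]
      exact Finset.sum_le_sum_of_subset_of_nonneg (Finset.subset_univ _)
        (fun i _ _ => ht0 i _)
    linarith
  · have h1 : B n t a (k+1) = B n t a n := B_of_col_ge (by omega)
    have h2 : B n t a k = B n t a n := B_of_col_ge (by omega)
    rw [h1, h2]; linarith

lemma B_row_split {a k : ℕ} (ha : a < n) :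
    B n t (a + 1) k = B n t a k + ∑ j ∈ lowset n k, t ⟨a, ha⟩ j := by
  unfold B
  rw [← Finset.sum_add_distrib]
  refine Finset.sum_congr rfl fun j _ => ?_
  rw [lowset_succ ha, Finset.sum_insert (not_mem_lowset_self ha), add_comm]

lemma B_top (htcol : ∀ j, ∑ i, t i j = 1) {k : ℕ} (h : k ≤ n) :
    B n t n k = k := by
  unfold B
  rw [lowset_of_ge le_rfl]
  rw [Finset.sum_congr rfl fun j _ => htcol j]
  rw [Finset.sum_const, card_lowset h, nsmul_eq_mul, mul_one]

lemma B_full (htrow : ∀ i, ∑ j, t i j = 1) {a : ℕ} (h : a ≤ n) :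
    B n t a n = a := by
  unfold B
  rw [Finset.sum_comm]
  rw [lowset_of_ge le_rfl]
  rw [Finset.sum_congr rfl fun i _ => htrow i]
  rw [Finset.sum_const, card_lowset h, nsmul_eq_mul, mul_one]

/-- crossing predicate -/
def cross (n : ℕ) (t : Fin n → Fin n → ℝ) (a k : ℕ) : Prop :=
  (⌈B n t a k⌉ : ℝ) < B n t a (k + 1)

lemma cross_top (ht0 : ∀ i j, 0 ≤ t i j) (htcol : ∀ j, ∑ i, t i j = 1)
    {k : ℕ} (hk : k < n) : cross n t n k := by
  unfold cross
  rw [B_top htcol (by omega), B_top htcol (by omega)]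
  rw [Int.ceil_natCast]
  push_cast
  linarith

lemma not_cross_zero {k : ℕ} : ¬ cross n t 0 k := by
  unfold cross
  rw [B_left_zero, B_left_zero]
  norm_num

/-- split a full sum at a row `r` -/
lemma sum_split_at (g : Fin n → ℝ) (r : Fin n) :
    ∑ i, g i = (∑ i ∈ univ.filter (fun i => i < r), g i) + g r
      + ∑ i ∈ univ.filter (fun i => r < i), g i := by
  classical
  rw [← Finset.sum_filter_add_sum_filter_not univ (fun i => i < r) g]
  have h2 : univ.filter (fun i => ¬ i < r) = insert r (univ.filter (fun i => r < i)) := by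
    ext i
    simp only [mem_filter, mem_univ, true_and, mem_insert, not_lt]
    constructor
    · intro h
      rcases eq_or_lt_of_le h with h' | h'
      · left; exact h'.symm
      · right; exact h'
    · rintro (rfl | h)
      · exact le_rfl
      · exact le_of_lt h
  rw [h2, Finset.sum_insert (by simp)]
  ring

lemma lowset_eq_filter_lt {a : ℕ} (ha : a < n) :
    lowset n a = univ.filter (fun i => i < (⟨a, ha⟩ : Fin n)) := by
  ext i
  simp only [mem_lowset, mem_filter, mem_univ, true_and, Fin.lt_def]

theorem cross_mono (ht0 : ∀ i j, 0 ≤ t i j)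
    (htrow : ∀ i, ∑ j, t i j = 1) (htcol : ∀ j, ∑ i, t i j = 1)
    (hcons : ∀ j i1 i2 i3 : Fin n, i1 < i2 → i2 < i3 → 0 < t i1 j → 0 < t i3 j →
      ∑ j' ∈ Finset.univ.filter (· ≤ j), t i2 j' = 1)
    {a k : ℕ} (h : cross n t a k) : cross n t (a + 1) k := by
  classical
  by_cases han : n ≤ a
  · unfold cross at h ⊢
    rw [B_of_row_ge (by omega : n ≤ a + 1), ← B_of_row_ge han,
      B_of_row_ge (by omega : n ≤ a + 1), ← B_of_row_ge han]
    exact h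
  push_neg at han
  set r : Fin n := ⟨a, han⟩ with hr
  have hkn : k < n := by
    by_contra hk
    push_neg at hk
    unfold cross at h
    rw [B_of_col_ge (by omega : n ≤ k + 1), ← B_of_col_ge hk] at h
    exact absurd h (not_lt.mpr (Int.le_ceil _))
  set kf : Fin n := ⟨k, hkn⟩ with hkf
  set p : ℝ := ∑ j ∈ lowset n k, t r j with hp
  set q : ℝ := ∑ j ∈ lowset n (k+1), t r j with hq
  have hpq : q = p + t r kf := by
    rw [hq, lowset_succ hkn, Finset.sum_insert (not_mem_lowset_self hkn), add_comm]
  have hp0 : 0 ≤ p := Finset.sum_nonneg fun j _ => ht0 r j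
  have hpq' : p ≤ q := by
    have := ht0 r kf; rw [hpq]; linarith
  have hq1 : q ≤ 1 := by
    rw [hq, ← htrow r]
    exact Finset.sum_le_sum_of_subset_of_nonneg (Finset.subset_univ _) fun j _ _ => ht0 r j
  unfold cross at h ⊢
  rw [B_row_split han, B_row_split han, ← hp, ← hq]
  by_cases hqone : 1 ≤ q
  · -- easy case: row r finishes within columns ≤ k
    have hp1 : p ≤ 1 := le_trans hpq' hq1
    have h1 : ⌈B n t a k + p⌉ ≤ ⌈B n t a k⌉ + 1 := by
      rw [← Int.ceil_add_one]
      exact Int.ceil_le_ceil (by linarith)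
    calc (⌈B n t a k + p⌉ : ℝ) ≤ (⌈B n t a k⌉ : ℝ) + 1 := by exact_mod_cast h1
      _ < B n t a (k+1) + 1 := by linarith
      _ ≤ B n t a (k+1) + q := by linarith
  push_neg at hqone
  -- hard case: row r unfinished through column k
  have hkey : ∀ j : Fin n, (j : ℕ) < k + 1 →
      ∑ i ∈ lowset n a, t i j = if ∃ u, u < r ∧ 0 < t u j then 1 - t r j else 0 := by
    intro j hj
    by_cases hU : ∃ u, u < r ∧ 0 < t u j
    · rw [if_pos hU]
      obtain ⟨u, hur, hupos⟩ := hU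
      have hhigh : ∀ w ∈ univ.filter (fun i => r < i), t w j = 0 := by
        intro w hw
        rw [mem_filter] at hw
        by_contra hwne
        have hwpos : 0 < t w j := lt_of_le_of_ne (ht0 w j) (Ne.symm hwne)
        have hfin := hcons j u r w hur hw.2 hupos hwpos
        have hsub : univ.filter (· ≤ j) ⊆ lowset n (k+1) := by
          intro j' hj'
          rw [mem_filter] at hj'
          rw [mem_lowset]
          have h2 := hj'.2
          rw [Fin.le_def] at h2
          omega
        have hle : (1:ℝ) ≤ q := by
          rw [← hfin, hq]
          exact Finset.sum_le_sum_of_subset_of_nonneg hsub fun j' _ _ => ht0 r j'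
        linarith
      have hsplit := sum_split_at (fun i => t i j) r
      rw [htcol j] at hsplit
      have hz : ∑ i ∈ univ.filter (fun i => r < i), t i j = 0 :=
        Finset.sum_eq_zero hhigh
      rw [hz, add_zero] at hsplit
      rw [lowset_eq_filter_lt han, ← hr]
      linarith
    · rw [if_neg hU]
      push_neg at hU
      apply Finset.sum_eq_zero
      intro u hu
      rw [mem_lowset] at hu
      have hur : u < r := by rw [Fin.lt_def]; exact hu
      have h1 := hU u hur
      have h2 := ht0 u j
      linarith
  set P : Fin n → Prop := fun j => ∃ u, u < r ∧ 0 < t u j with hP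
  set U : Finset (Fin n) := (lowset n (k+1)).filter P with hUdef
  set U2 : Finset (Fin n) := (lowset n k).filter P with hU2def
  have hBk1 : B n t a (k+1) = U.card - ∑ j ∈ U, t r j := by
    unfold B
    rw [Finset.sum_congr rfl (fun j hj => hkey j (mem_lowset.mp hj))]
    rw [Finset.sum_ite, Finset.sum_const_zero, add_zero, Finset.sum_sub_distrib,
      Finset.sum_const, nsmul_eq_mul, mul_one]
  have hBk : B n t a k = U2.card - ∑ j ∈ U2, t r j := by
    unfold B
    rw [Finset.sum_congr rfl (fun j hj => hkey j (by have := mem_lowset.mp hj; omega))]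
    rw [Finset.sum_ite, Finset.sum_const_zero, add_zero, Finset.sum_sub_distrib,
      Finset.sum_const, nsmul_eq_mul, mul_one]
  set q1 : ℝ := ∑ j ∈ U, t r j with hq1d
  set q2 : ℝ := ∑ j ∈ U2, t r j with hq2d
  have hU2subU : U2 ⊆ U := Finset.filter_subset_filter P (lowset_mono (by omega))
  have hUsub : U ⊆ insert kf U2 := by
    intro j hj
    rw [hUdef, mem_filter, mem_lowset] at hj
    by_cases hjk : (j : ℕ) < k
    · exact Finset.mem_insert_of_mem (by rw [hU2def, mem_filter, mem_lowset]; exact ⟨hjk, hj.2⟩)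
    · have : j = kf := by rw [Fin.ext_iff]; simp only [hkf]; omega
      rw [this]; exact Finset.mem_insert_self _ _
  have hq20 : 0 ≤ q2 := Finset.sum_nonneg fun j _ => ht0 r j
  have hq2p : q2 ≤ p := by
    rw [hq2d, hp]
    exact Finset.sum_le_sum_of_subset_of_nonneg (Finset.filter_subset _ _) fun j _ _ => ht0 r j
  have hq1q : q1 ≤ q := by
    rw [hq1d, hq]
    exact Finset.sum_le_sum_of_subset_of_nonneg (Finset.filter_subset _ _) fun j _ _ => ht0 r j
  have hq10 : 0 ≤ q1 := Finset.sum_nonneg fun j _ => ht0 r j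
  have hceil : ⌈B n t a k⌉ = (U2.card : ℤ) := by
    rw [hBk]
    rw [Int.ceil_eq_iff]
    constructor
    · push_cast
      have : q2 < 1 := by linarith
      linarith
    · push_cast; linarith
  rw [hBk1, hceil] at h
  have hcardle : U.card ≤ U2.card + 1 :=
    le_trans (Finset.card_le_card hUsub) (Finset.card_insert_le _ _)
  have hcardlt : U2.card < U.card := by
    by_contra hc
    push_neg at hc
    have heq : U2 = U := Finset.eq_of_subset_of_card_le hU2subU hc
    have hceq : U2.card = U.card := by rw [heq]
    push_cast at h
    rw [hceq] at h
    linarith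
  have hcard : U.card = U2.card + 1 := by omega
  have hkfU : kf ∈ U := by
    obtain ⟨j, hjU, hjU2⟩ : ∃ j ∈ U, j ∉ U2 := by
      by_contra hc
      push_neg at hc
      have := Finset.card_le_card hc
      omega
    have hjkf : j = kf := by
      have h1 := hjU
      rw [hUdef, mem_filter, mem_lowset] at h1
      by_cases hjk : (j : ℕ) < k
      · exact absurd (by rw [hU2def, mem_filter, mem_lowset]; exact ⟨hjk, h1.2⟩) hjU2
      · rw [Fin.ext_iff]; simp only [hkf]; omega
    rw [← hjkf]; exact hjU
  have hUeq : U = insert kf U2 := by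
    apply Finset.Subset.antisymm hUsub
    intro j hj
    rcases Finset.mem_insert.mp hj with rfl | hj2
    · exact hkfU
    · exact hU2subU hj2
  have hkfnotU2 : kf ∉ U2 := by
    rw [hU2def, mem_filter, mem_lowset]
    push_neg
    intro hlt
    exfalso
    simp only [hkf] at hlt
    omega
  have hq1split : q1 = q2 + t r kf := by
    rw [hq1d, hUeq, Finset.sum_insert hkfnotU2, ← hq2d, add_comm]
  set δ : ℝ := p - q2 with hδ
  have hδ0 : 0 ≤ δ := by rw [hδ]; linarith
  have hδ1 : δ < 1 := by rw [hδ]; linarith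
  have hLHS : B n t a k + p = (U2.card : ℝ) + δ := by rw [hBk, hδ]; ring
  have hRHS : B n t a (k+1) + q = (U2.card : ℝ) + 1 + δ := by
    rw [hBk1, hδ, hq1split, hpq, hcard]
    push_cast
    ring
  rw [hLHS, hRHS]
  have hceil2 : ⌈(U2.card : ℝ) + δ⌉ = (U2.card : ℤ) + ⌈δ⌉ := by
    rw [add_comm]
    rw [show ((U2.card : ℝ)) = ((U2.card : ℤ) : ℝ) by push_cast; ring]
    rw [Int.ceil_add_intCast]
    ring
  rw [hceil2]
  rcases eq_or_lt_of_le hδ0 with hδz | hδpos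
  · rw [← hδz]
    simp
  · have hle1 : ⌈δ⌉ ≤ 1 := Int.ceil_le.mpr (by norm_num; linarith)
    have hle1' : (⌈δ⌉ : ℝ) ≤ 1 := by exact_mod_cast hle1
    push_cast
    linarith

lemma count_lemma (ht0 : ∀ i j, 0 ≤ t i j) (htcol : ∀ j, ∑ i, t i j = 1)
    (g : Fin n → ℕ)
    (hg : ∀ (kk : Fin n) (a : ℕ), g kk < a ↔ cross n t a (kk : ℕ)) :
    ∀ K, K ≤ n → ∀ a : ℕ,
      ((univ.filter (fun kk : Fin n => (kk : ℕ) < K ∧ g kk < a)).card : ℤ)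
        = ⌈B n t a K⌉ := by
  classical
  intro K
  induction K with
  | zero =>
    intro _ a
    have h1 : (univ.filter (fun kk : Fin n => (kk : ℕ) < 0 ∧ g kk < a)) = ∅ := by
      ext kk; simp
    rw [h1, B_zero]
    simp
  | succ K ih =>
    intro hK a
    have hKn : K < n := by omega
    set kf : Fin n := ⟨K, hKn⟩ with hkf
    have hkfval : (kf : ℕ) = K := rfl
    have hup : ⌈B n t a (K+1)⌉ ≤ ⌈B n t a K⌉ + 1 := by
      rw [← Int.ceil_add_one]
      exact Int.ceil_le_ceil (B_succ_le ht0 htcol)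
    have hlo : ⌈B n t a K⌉ ≤ ⌈B n t a (K+1)⌉ :=
      Int.ceil_le_ceil (B_mono ht0 (by omega))
    by_cases hc : g kf < a
    · -- crossing at column K
      have hcr : cross n t a K := (hg kf a).mp hc
      have hSins : (univ.filter (fun kk : Fin n => (kk : ℕ) < K + 1 ∧ g kk < a))
          = insert kf (univ.filter (fun kk : Fin n => (kk : ℕ) < K ∧ g kk < a)) := by
        ext kk
        simp only [mem_filter, mem_univ, true_and, mem_insert]
        constructor
        · rintro ⟨h1, h2⟩
          by_cases hkk : (kk : ℕ) < K
          · exact Or.inr ⟨hkk, h2⟩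
          · exact Or.inl (by rw [Fin.ext_iff]; omega)
        · rintro (rfl | ⟨h1, h2⟩)
          · exact ⟨by omega, hc⟩
          · exact ⟨by omega, h2⟩
      have hnotmem : kf ∉ (univ.filter (fun kk : Fin n => (kk : ℕ) < K ∧ g kk < a)) := by
        simp only [mem_filter, mem_univ, true_and, not_and]
        intro h1
        exact absurd h1 (by omega)
      rw [hSins, Finset.card_insert_of_notMem hnotmem]
      have hceil : ⌈B n t a (K+1)⌉ = ⌈B n t a K⌉ + 1 := by
        have : ⌈B n t a K⌉ < ⌈B n t a (K+1)⌉ := Int.lt_ceil.mpr hcr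
        omega
      rw [hceil, ← ih (by omega) a]
      push_cast
      ring
    · -- no crossing at column K
      have hncr : ¬ cross n t a K := fun hcr => hc ((hg kf a).mpr hcr)
      have hSeq : (univ.filter (fun kk : Fin n => (kk : ℕ) < K + 1 ∧ g kk < a))
          = (univ.filter (fun kk : Fin n => (kk : ℕ) < K ∧ g kk < a)) := by
        ext kk
        simp only [mem_filter, mem_univ, true_and]
        constructor
        · rintro ⟨h1, h2⟩
          refine ⟨?_, h2⟩
          by_cases hkk : (kk : ℕ) < K
          · exact hkk
          · exfalso
            have : kk = kf := by rw [Fin.ext_iff]; omega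
            rw [this] at h2
            exact hc h2
        · rintro ⟨h1, h2⟩
          exact ⟨by omega, h2⟩
      have hceil : ⌈B n t a (K+1)⌉ = ⌈B n t a K⌉ := by
        unfold cross at hncr
        push_neg at hncr
        have := Int.ceil_le.mpr hncr
        omega
      rw [hSeq, hceil, ih (by omega) a]

def clamp (n : ℕ) (hn : 0 < n) (m : ℕ) : Fin n := ⟨min m (n-1), by omega⟩

lemma clamp_coe (hn : 0 < n) (i : Fin n) : clamp n hn (i : ℕ) = i := by
  rw [Fin.ext_iff]
  simp [clamp]
  omega

lemma abel_sum (hn : 0 < n) (e xx : Fin n → ℝ) (hsum : ∑ i, e i = 0) :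
    ∑ i, e i * xx i = ∑ m ∈ Finset.range (n-1),
      (∑ i ∈ lowset n (m+1), e i) * (xx (clamp n hn m) - xx (clamp n hn (m+1))) := by
  classical
  set D : ℕ → ℝ := fun m => xx (clamp n hn m) - xx (clamp n hn (m+1)) with hD
  have htel : ∀ i : Fin n, ∑ m ∈ Finset.Ico (i : ℕ) (n-1), D m
      = xx i - xx (clamp n hn (n-1)) := by
    intro i
    have hle : (i : ℕ) ≤ n - 1 := by omega
    rw [Finset.sum_Ico_eq_sub D hle]
    rw [Finset.sum_range_sub' (fun m => xx (clamp n hn m)),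
      Finset.sum_range_sub' (fun m => xx (clamp n hn m))]
    rw [clamp_coe]
    ring
  calc ∑ i, e i * xx i
      = ∑ i, e i * (xx i - xx (clamp n hn (n-1))) + (∑ i, e i) * xx (clamp n hn (n-1)) := by
        rw [Finset.sum_mul, ← Finset.sum_add_distrib]
        exact Finset.sum_congr rfl fun i _ => by ring
    _ = ∑ i, e i * (xx i - xx (clamp n hn (n-1))) := by rw [hsum]; ring
    _ = ∑ i : Fin n, ∑ m ∈ Finset.Ico (↑i) (n-1), e i * D m := by
        refine Finset.sum_congr rfl fun i _ => ?_
        rw [← Finset.mul_sum, htel i]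
    _ = ∑ i : Fin n, ∑ m ∈ (Finset.range (n-1)).filter (fun m => (i : ℕ) ≤ m), e i * D m := by
        refine Finset.sum_congr rfl fun i _ => ?_
        congr 1
        ext m
        simp only [Finset.mem_Ico, Finset.mem_filter, Finset.mem_range]
        omega
    _ = ∑ i : Fin n, ∑ m ∈ Finset.range (n-1), if (i : ℕ) ≤ m then e i * D m else 0 := by
        refine Finset.sum_congr rfl fun i _ => ?_
        rw [Finset.sum_filter]
    _ = ∑ m ∈ Finset.range (n-1), ∑ i : Fin n, if (i : ℕ) ≤ m then e i * D m else 0 := by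
        rw [Finset.sum_comm]
    _ = ∑ m ∈ Finset.range (n-1), (∑ i ∈ lowset n (m+1), e i) * D m := by
        refine Finset.sum_congr rfl fun m _ => ?_
        rw [Finset.sum_mul, ← Finset.sum_filter]
        refine Finset.sum_congr ?_ fun i _ => rfl
        ext i
        simp only [mem_filter, mem_univ, true_and, mem_lowset]
        omega

end RPE

/-- **Rounding a doubly stochastic matrix with the consecutiveness property.**
For nonnegative `x_1 ≥ … ≥ x_n` and a doubly stochastic `T` with the
consecutiveness property, with `t_j = Σ_i t_{ij} x_i`, there is a permutation
`π` such that every prefix error `Σ_{j≤k} (x_{π(j)} − t_j)` lies in `[0, x_1 − x_n]`. -/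
theorem rounding_prefix_error
    (n : ℕ) (hn : 0 < n) (x : Fin n → ℝ) (hx : Antitone x) (hx0 : ∀ i, 0 ≤ x i)
    (t : Fin n → Fin n → ℝ)
    (ht01 : ∀ i j, 0 ≤ t i j ∧ t i j ≤ 1)
    (htrow : ∀ i, ∑ j, t i j = 1)
    (htcol : ∀ j, ∑ i, t i j = 1)
    (hcons : ∀ j i1 i2 i3 : Fin n, i1 < i2 → i2 < i3 → 0 < t i1 j → 0 < t i3 j →
      ∑ j' ∈ Finset.univ.filter (· ≤ j), t i2 j' = 1) :
    ∃ π : Equiv.Perm (Fin n),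
      ∀ k : Fin n,
        0 ≤ ∑ j ∈ Finset.univ.filter (· ≤ k), (x (π j) - ∑ i, t i j * x i) ∧
        ∑ j ∈ Finset.univ.filter (· ≤ k), (x (π j) - ∑ i, t i j * x i)
          ≤ x ⟨0, hn⟩ - x ⟨n - 1, by omega⟩ := by
  classical
  open Finset RPE in
  have ht0 : ∀ i j, 0 ≤ t i j := fun i j => (ht01 i j).1
  have hex : ∀ kk : Fin n, ∃ a, RPE.cross n t a (kk : ℕ) :=
    fun kk => ⟨n, RPE.cross_top ht0 htcol kk.isLt⟩
  set f : Fin n → ℕ := fun kk => Nat.find (hex kk) with hf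
  have hfspec : ∀ kk, RPE.cross n t (f kk) (kk : ℕ) := fun kk => Nat.find_spec (hex kk)
  have hfle : ∀ kk, f kk ≤ n := fun kk => Nat.find_le (RPE.cross_top ht0 htcol kk.isLt)
  have hfpos : ∀ kk, 0 < f kk := by
    intro kk
    rcases Nat.eq_zero_or_pos (f kk) with h0 | h
    · exfalso
      have := hfspec kk
      rw [h0] at this
      exact RPE.not_cross_zero this
    · exact h
  have hfiff : ∀ (kk : Fin n) (a : ℕ), f kk ≤ a ↔ RPE.cross n t a (kk : ℕ) := by
    intro kk a
    constructor
    · intro h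
      exact Nat.le_induction (hfspec kk)
        (fun m hm ih => RPE.cross_mono ht0 htrow htcol hcons ih) a h
    · exact fun h => Nat.find_le h
  set π₀ : Fin n → Fin n :=
    fun kk => ⟨f kk - 1, by have := hfle kk; have := hfpos kk; omega⟩ with hπ₀
  set g : Fin n → ℕ := fun kk => (π₀ kk : ℕ) with hgdef
  have hgval : ∀ kk, g kk = f kk - 1 := fun kk => rfl
  have hg : ∀ (kk : Fin n) (a : ℕ), g kk < a ↔ RPE.cross n t a (kk : ℕ) := by
    intro kk a
    rw [← hfiff]
    have h1 := hfpos kk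
    rw [hgval]
    omega
  have hcount := RPE.count_lemma ht0 htcol g hg
  have hcount_all : ∀ a : ℕ, a ≤ n →
      ((univ.filter (fun kk : Fin n => g kk < a)).card : ℤ) = a := by
    intro a ha
    have h1 := hcount n le_rfl a
    have h2 : (univ.filter (fun kk : Fin n => (kk : ℕ) < n ∧ g kk < a))
        = univ.filter (fun kk : Fin n => g kk < a) := by
      ext kk
      simp [kk.isLt]
    rw [h2] at h1
    rw [h1, RPE.B_full htrow ha, Int.ceil_natCast]
  have hinj : Function.Injective π₀ := by
    intro k1 k2 he
    by_contra hne
    set v : Fin n := π₀ k1 with hv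
    have hsubset : ({k1, k2} : Finset (Fin n)) ⊆
        univ.filter (fun kk : Fin n => g kk = (v : ℕ)) := by
      intro kk hkk
      rcases Finset.mem_insert.mp hkk with rfl | hkk
      · simp only [mem_filter, mem_univ, true_and]; rfl
      · rw [Finset.mem_singleton.mp hkk]
        simp only [mem_filter, mem_univ, true_and]
        have h2 : g k2 = (π₀ k2 : ℕ) := rfl
        rw [h2, ← he]
    have hcard2 : 2 ≤ (univ.filter (fun kk : Fin n => g kk = (v : ℕ))).card := by
      calc 2 = ({k1, k2} : Finset (Fin n)).card := (Finset.card_pair hne).symm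
        _ ≤ _ := Finset.card_le_card hsubset
    have hv1 := hcount_all ((v : ℕ) + 1) (by have := v.isLt; omega)
    have hv0 := hcount_all (v : ℕ) (by have := v.isLt; omega)
    have hsplit : (univ.filter (fun kk : Fin n => g kk < (v : ℕ) + 1)) =
        (univ.filter (fun kk : Fin n => g kk < (v : ℕ)))
          ∪ (univ.filter (fun kk : Fin n => g kk = (v : ℕ))) := by
      ext kk
      simp only [mem_filter, mem_univ, true_and, mem_union]
      omega
    have hdisj : Disjoint (univ.filter (fun kk : Fin n => g kk < (v : ℕ)))
        (univ.filter (fun kk : Fin n => g kk = (v : ℕ))) := by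
      rw [Finset.disjoint_left]
      intro kk h1 h2
      simp only [mem_filter, mem_univ, true_and] at h1 h2
      omega
    have hu := Finset.card_union_of_disjoint hdisj
    rw [← hsplit] at hu
    omega
  set π : Equiv.Perm (Fin n) := Equiv.ofBijective π₀ (Finite.injective_iff_bijective.mp hinj)
    with hπdef
  have hππ₀ : ∀ kk, π kk = π₀ kk := fun kk => rfl
  refine ⟨π, fun k => ?_⟩
  set K : ℕ := (k : ℕ) + 1 with hK
  have hKn : K ≤ n := by have := k.isLt; omega
  have hF : univ.filter (· ≤ k) = RPE.lowset n K := by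
    ext j
    simp only [mem_filter, mem_univ, true_and, RPE.mem_lowset, Fin.le_def]
    omega
  set cc : Fin n → ℝ := fun i => ∑ j ∈ RPE.lowset n K, t i j with hcc
  set e : Fin n → ℝ := fun i => (if ((π.symm i : Fin n) : ℕ) < K then (1:ℝ) else 0) - cc i
    with he
  -- rewrite the prefix sum via e
  have hS : ∑ j ∈ univ.filter (· ≤ k), (x (π j) - ∑ i, t i j * x i) = ∑ i, e i * x i := by
    rw [hF, Finset.sum_sub_distrib]
    have hA : ∑ j ∈ RPE.lowset n K, x (π j)
        = ∑ i : Fin n, (if ((π.symm i : Fin n) : ℕ) < K then (1:ℝ) else 0) * x i := by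
      have hmap : (RPE.lowset n K).map π.toEmbedding
          = univ.filter (fun i : Fin n => ((π.symm i : Fin n) : ℕ) < K) := by
        ext i
        simp only [Finset.mem_map, Equiv.coe_toEmbedding, RPE.mem_lowset, mem_filter,
          mem_univ, true_and]
        constructor
        · rintro ⟨j, hj, rfl⟩
          rw [Equiv.symm_apply_apply]
          exact hj
        · intro h
          exact ⟨π.symm i, h, Equiv.apply_symm_apply π i⟩
      calc ∑ j ∈ RPE.lowset n K, x (π j)
          = ∑ i ∈ (RPE.lowset n K).map π.toEmbedding, x i := by
            rw [Finset.sum_map]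
            rfl
        _ = ∑ i ∈ univ.filter (fun i : Fin n => ((π.symm i : Fin n) : ℕ) < K), x i := by
            rw [hmap]
        _ = ∑ i : Fin n, (if ((π.symm i : Fin n) : ℕ) < K then (1:ℝ) else 0) * x i := by
            rw [Finset.sum_filter]
            refine Finset.sum_congr rfl fun i _ => ?_
            by_cases hcond : ((π.symm i : Fin n) : ℕ) < K
            · rw [if_pos hcond, if_pos hcond, one_mul]
            · rw [if_neg hcond, if_neg hcond, zero_mul]
    have hC : ∑ j ∈ RPE.lowset n K, ∑ i, t i j * x i = ∑ i, cc i * x i := by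
      rw [Finset.sum_comm]
      exact Finset.sum_congr rfl fun i _ => (Finset.sum_mul _ _ _).symm
    rw [hA, hC, ← Finset.sum_sub_distrib]
    exact Finset.sum_congr rfl fun i _ => by rw [he]; ring
  -- partial sums of e
  have hEval : ∀ m : ℕ, m ≤ n →
      ∑ i ∈ RPE.lowset n m, e i = (⌈RPE.B n t m K⌉ : ℝ) - RPE.B n t m K := by
    intro m hm
    rw [Finset.sum_sub_distrib]
    have hind : ∑ i ∈ RPE.lowset n m, (if ((π.symm i : Fin n) : ℕ) < K then (1:ℝ) else 0)
        = ((univ.filter (fun kk : Fin n => (kk : ℕ) < K ∧ g kk < m)).card : ℝ) := by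
      rw [Finset.sum_boole]
      congr 1
      apply Finset.card_bij' (fun i _ => π.symm i) (fun kk _ => π₀ kk)
      · intro i hi
        simp only [mem_filter, RPE.mem_lowset, mem_univ, true_and] at hi ⊢
        refine ⟨hi.2, ?_⟩
        show ((π₀ (π.symm i) : Fin n) : ℕ) < m
        rw [← hππ₀, Equiv.apply_symm_apply]
        exact hi.1
      · intro kk hkk
        simp only [mem_filter, RPE.mem_lowset, mem_univ, true_and] at hkk ⊢
        constructor
        · show ((π₀ kk : Fin n) : ℕ) < m
          exact hkk.2
        · rw [← hππ₀, Equiv.symm_apply_apply]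
          exact hkk.1
      · intro i hi
        rw [← hππ₀, Equiv.apply_symm_apply]
      · intro kk hkk
        rw [← hππ₀, Equiv.symm_apply_apply]
    have hccm : ∑ i ∈ RPE.lowset n m, cc i = RPE.B n t m K := by
      rw [hcc]
      unfold RPE.B
      rw [Finset.sum_comm]
    have hcast : (((univ.filter (fun kk : Fin n => (kk : ℕ) < K ∧ g kk < m)).card : ℝ))
        = ((⌈RPE.B n t m K⌉ : ℤ) : ℝ) := by
      exact_mod_cast hcount K hKn m
    rw [hind, hccm, hcast]
  have hEn : ∑ i, e i = 0 := by
    have h1 := hEval n le_rfl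
    rw [RPE.lowset_of_ge le_rfl] at h1
    rw [h1, RPE.B_top htcol hKn, Int.ceil_natCast]
    push_cast
    ring
  rw [hS, RPE.abel_sum hn e x hEn]
  have hterm : ∀ m ∈ Finset.range (n-1),
      0 ≤ (∑ i ∈ RPE.lowset n (m+1), e i) * (x (RPE.clamp n hn m) - x (RPE.clamp n hn (m+1)))
      ∧ (∑ i ∈ RPE.lowset n (m+1), e i) * (x (RPE.clamp n hn m) - x (RPE.clamp n hn (m+1)))
        ≤ x (RPE.clamp n hn m) - x (RPE.clamp n hn (m+1)) := by
    intro m hm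
    rw [Finset.mem_range] at hm
    have hmn : m + 1 ≤ n := by omega
    have hE := hEval (m+1) hmn
    have hE0 : 0 ≤ ∑ i ∈ RPE.lowset n (m+1), e i := by
      rw [hE]
      have := Int.le_ceil (RPE.B n t (m+1) K)
      linarith
    have hE1 : ∑ i ∈ RPE.lowset n (m+1), e i ≤ 1 := by
      rw [hE]
      have := Int.ceil_lt_add_one (RPE.B n t (m+1) K)
      linarith
    have hgap : 0 ≤ x (RPE.clamp n hn m) - x (RPE.clamp n hn (m+1)) := by
      have hle : RPE.clamp n hn m ≤ RPE.clamp n hn (m+1) := by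
        rw [Fin.le_def]
        simp only [RPE.clamp]
        omega
      have := hx hle
      linarith
    constructor
    · exact mul_nonneg hE0 hgap
    · calc (∑ i ∈ RPE.lowset n (m+1), e i) * (x (RPE.clamp n hn m) - x (RPE.clamp n hn (m+1)))
          ≤ 1 * (x (RPE.clamp n hn m) - x (RPE.clamp n hn (m+1))) :=
            mul_le_mul_of_nonneg_right hE1 hgap
        _ = x (RPE.clamp n hn m) - x (RPE.clamp n hn (m+1)) := one_mul _
  constructor
  · exact Finset.sum_nonneg fun m hm => (hterm m hm).1
  · calc ∑ m ∈ Finset.range (n-1),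
        (∑ i ∈ RPE.lowset n (m+1), e i) * (x (RPE.clamp n hn m) - x (RPE.clamp n hn (m+1)))
        ≤ ∑ m ∈ Finset.range (n-1), (x (RPE.clamp n hn m) - x (RPE.clamp n hn (m+1))) :=
          Finset.sum_le_sum fun m hm => (hterm m hm).2
      _ = x (RPE.clamp n hn 0) - x (RPE.clamp n hn (n-1)) :=
          Finset.sum_range_sub' (fun m => x (RPE.clamp n hn m)) (n-1)
      _ = x ⟨0, hn⟩ - x ⟨n - 1, by omega⟩ := by
          congr 1 <;> · congr 1
                        rw [Fin.ext_iff]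
                        simp [RPE.clamp]
end

section
/- Let p ≥ 3 be an integer and consider the instance with x-values consisting of p copies of p−1, one copy of 2, and p(p−1) copies of 1, and y-values consisting of p−1 copies of p and p(p−1)+2 copies of 1 (both multisets have p²+1 elements and equal sums). Then: (a) every feasible alternating ordering of this instance has value at least 2p−3; (b) for the (non-alternating) stock size problem on the same multiset of numbers, there exists an ordering of all the values (x-values counted positively, y-values counted negatively) in which every prefix sum is nonnegative and every prefix sum is at most p. Hence the ratio between the two optimal values approaches 2 as p grows. -/
open Finset

variable {α : Type*} [AddCommMonoid α]

/-- extension of a `Fin M` function to `ℕ` by zero -/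
def extz {M : ℕ} (g : Fin M → α) : ℕ → α := fun i => if h : i < M then g ⟨i, h⟩ else 0

lemma sum_coe_lt {M : ℕ} (g : Fin M → α) (n : ℕ) (hn : n ≤ M) :
    ∑ i ∈ Finset.univ.filter (fun i : Fin M => (i:ℕ) < n), g i
      = ∑ i ∈ Finset.range n, extz g i := by
  set f : ℕ → α := extz g with hf
  have h1 : ∑ i ∈ Finset.range n, f i = ∑ i ∈ Finset.range M, (if i < n then f i else 0) := by
    rw [← Finset.sum_filter]
    refine Finset.sum_congr ?_ (fun _ _ => rfl)
    ext i
    simp only [Finset.mem_filter, Finset.mem_range]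
    omega
  have h2 : ∑ i ∈ Finset.range M, (if i < n then f i else 0)
      = ∑ a : Fin M, (if (a:ℕ) < n then f a else 0) :=
    (Fin.sum_univ_eq_sum_range (fun i => if i < n then f i else 0) M).symm
  rw [h1, h2, Finset.sum_filter]
  refine Finset.sum_congr rfl (fun a _ => ?_)
  by_cases h : (a:ℕ) < n
  · rw [if_pos h, if_pos h, hf]
    simp [extz]
  · rw [if_neg h, if_neg h]

lemma filter_le_eq {M : ℕ} (t : Fin M) :
    Finset.univ.filter (· ≤ t) = Finset.univ.filter (fun i : Fin M => (i:ℕ) < (t:ℕ)+1) := by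
  ext i
  simp only [Finset.mem_filter, Finset.mem_univ, true_and, Fin.le_def]
  omega

lemma filter_lt_eq {M : ℕ} (t : Fin M) :
    Finset.univ.filter (· < t) = Finset.univ.filter (fun i : Fin M => (i:ℕ) < (t:ℕ)) := by
  ext i
  simp only [Finset.mem_filter, Finset.mem_univ, true_and, Fin.lt_def]

lemma sum_filter_le' {M : ℕ} (g : Fin M → α) (t : Fin M) :
    ∑ i ∈ Finset.univ.filter (· ≤ t), g i = ∑ i ∈ Finset.range ((t:ℕ)+1), extz g i := by
  rw [filter_le_eq, sum_coe_lt g _ t.isLt]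

lemma sum_filter_lt' {M : ℕ} (g : Fin M → α) (t : Fin M) :
    ∑ i ∈ Finset.univ.filter (· < t), g i = ∑ i ∈ Finset.range (t:ℕ), extz g i := by
  rw [filter_lt_eq, sum_coe_lt g _ t.isLt.le]

lemma card_filter_range_eq {M : ℕ} (P : ℕ → Prop) [DecidablePred P] :
    ((Finset.range M).filter P).card = (Finset.univ.filter (fun i : Fin M => P (i:ℕ))).card := by
  rw [Finset.card_filter, Finset.card_filter,
    Fin.sum_univ_eq_sum_range (fun i => if P i then 1 else 0) M]

lemma card_filter_perm_comp {M : ℕ} (σ : Equiv.Perm (Fin M)) (P : Fin M → Prop) [DecidablePred P] :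
    (Finset.univ.filter (fun i => P (σ i))).card = (Finset.univ.filter P).card := by
  rw [Finset.card_filter, Finset.card_filter, Equiv.sum_comp σ (fun i => if P i then 1 else 0)]

lemma card_coe_lt {M k : ℕ} (hk : k ≤ M) :
    (Finset.univ.filter (fun i : Fin M => (i:ℕ) < k)).card = k := by
  classical
  have := sum_coe_lt (M := M) (α := ℕ) (fun _ => 1) k hk
  rw [Finset.sum_filter] at this
  rw [Finset.card_filter, this]
  have h2 : ∑ i ∈ Finset.range k, extz (fun _ : Fin M => (1:ℕ)) i
      = ∑ _i ∈ Finset.range k, 1 := by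
    refine Finset.sum_congr rfl (fun i hi => ?_)
    simp only [Finset.mem_range] at hi
    simp [extz, lt_of_lt_of_le hi hk]
  rw [h2, Finset.sum_const, smul_eq_mul, mul_one, Finset.card_range]

lemma card_coe_eq {M k : ℕ} (hk : k < M) :
    (Finset.univ.filter (fun i : Fin M => (i:ℕ) = k)).card = 1 := by
  have : (Finset.univ.filter (fun i : Fin M => (i:ℕ) = k)) = {(⟨k, hk⟩ : Fin M)} := by
    ext i; simp [Fin.ext_iff]
  rw [this, Finset.card_singleton]

lemma card_filter_range_succ (P : ℕ → Prop) [DecidablePred P] (n : ℕ) :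
    ((Finset.range (n+1)).filter P).card
      = ((Finset.range n).filter P).card + (if P n then 1 else 0) := by
  rw [Finset.range_add_one, Finset.filter_insert]
  split_ifs with h
  · rw [Finset.card_insert_of_notMem (by simp)]
  · rfl
lemma card_filter_and_split (s : Finset ℕ) (A B : ℕ → Prop)
    [DecidablePred A] [DecidablePred B] :
    (s.filter (fun m => A m ∧ B m)).card + (s.filter (fun m => A m ∧ ¬ B m)).card
      = (s.filter A).card := by
  classical
  rw [← Finset.filter_filter, ← Finset.filter_filter,
    Finset.card_filter_add_card_filter_not]

lemma partA (p : ℕ) (hp : 3 ≤ p) (N : ℕ) (hN : N = p ^ 2 + 1)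
    (X Y : ℕ → ℝ)
    (hX : ∀ i, 1 ≤ i → i ≤ N →
      X i = if i ≤ p then (p : ℝ) - 1 else if i = p + 1 then 2 else 1)
    (hY : ∀ i, 1 ≤ i → i ≤ N → Y i = if i ≤ p - 1 then (p : ℝ) else 1)
    (σ ν : Equiv.Perm (Fin N))
    (hfeas : ∀ t : Fin N, 0 ≤ ∑ i ∈ Finset.univ.filter (· ≤ t),
          (X ((σ i : ℕ) + 1) - Y ((ν i : ℕ) + 1))) :
    ∃ t : Fin N,
        2 * (p : ℝ) - 3 ≤ (∑ i ∈ Finset.univ.filter (· ≤ t), X ((σ i : ℕ) + 1))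
          - ∑ i ∈ Finset.univ.filter (· < t), Y ((ν i : ℕ) + 1) := by
  classical
  obtain ⟨n0, hNn, h3n⟩ : ∃ n0, N = n0 + 1 ∧ 3*p ≤ n0 := ⟨p^2, hN, by nlinarith⟩
  have hp3R : (3:ℝ) ≤ (p:ℝ) := by exact_mod_cast hp
  set x : Fin N → ℝ := fun i => X ((σ i : ℕ) + 1) with hxdef
  set y : Fin N → ℝ := fun i => Y ((ν i : ℕ) + 1) with hydef
  set gx : ℕ → ℝ := extz x with hgxdef
  set gy : ℕ → ℝ := extz y with hgydef
  set S : ℕ → ℝ := fun n => ∑ i ∈ Finset.range n, (gx i - gy i) with hSdef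
  -- basic value facts
  have hgx3 : ∀ m, m < N → gx m = (p:ℝ)-1 ∨ gx m = 2 ∨ gx m = 1 := by
    intro m hm
    have : gx m = X ((σ ⟨m, hm⟩ : ℕ) + 1) := by simp [hgxdef, extz, hm, hxdef]
    rw [this, hX _ (by omega) (by omega)]
    split_ifs <;> tauto
  have hgy2 : ∀ m, m < N → gy m = (p:ℝ) ∨ gy m = 1 := by
    intro m hm
    have : gy m = Y ((ν ⟨m, hm⟩ : ℕ) + 1) := by simp [hgydef, extz, hm, hydef]
    rw [this, hY _ (by omega) (by omega)]
    split_ifs <;> tauto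
  have hgx1 : ∀ m, m < N → 1 ≤ gx m := by
    intro m hm
    rcases hgx3 m hm with h | h | h <;> rw [h] <;> linarith
  have hSsucc : ∀ m, S (m+1) = S m + gx m - gy m := by
    intro m
    simp only [hSdef, Finset.sum_range_succ]
    ring
  have hS0 : S 0 = 0 := by simp [hSdef]
  -- the subtraction split
  have hext : ∀ m, extz (fun i : Fin N => x i - y i) m = gx m - gy m := by
    intro m
    by_cases h : m < N <;> simp [extz, h, hgxdef, hgydef]
  have hSpos : ∀ m, m ≤ N → 0 ≤ S m := by
    intro m hm
    match m with
    | 0 => exact le_of_eq hS0.symm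
    | Nat.succ k =>
      have hk : k < N := by omega
      have := hfeas ⟨k, hk⟩
      rw [sum_filter_le' (fun i : Fin N => x i - y i) ⟨k, hk⟩] at this
      simp only [hSdef]
      calc (0:ℝ) ≤ ∑ i ∈ Finset.range (k+1), extz (fun i : Fin N => x i - y i) i := this
        _ = ∑ i ∈ Finset.range (k+1), (gx i - gy i) :=
            Finset.sum_congr rfl (fun i _ => hext i)
  -- the peak expression
  have hpeakeq : ∀ m (hm : m < N),
      (∑ i ∈ Finset.univ.filter (· ≤ (⟨m, hm⟩ : Fin N)), x i)
        - ∑ i ∈ Finset.univ.filter (· < (⟨m, hm⟩ : Fin N)), y i = S m + gx m := by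
    intro m hm
    rw [sum_filter_le' x ⟨m, hm⟩, sum_filter_lt' y ⟨m, hm⟩]
    simp only [hSdef, Finset.sum_range_succ, Finset.sum_sub_distrib]
    rw [← hgxdef, ← hgydef]
    ring
  -- handy: peak vs after-stock
  have hpeak_after : ∀ m, S m + gx m = S (m+1) + gy m := by
    intro m; rw [hSsucc]; ring
  rcases eq_or_lt_of_le hp with hp3 | hp4
  · -- p = 3 : trivial bound via any big-y step
    obtain ⟨t, ht⟩ : ∃ t : Fin N, (ν t : ℕ) = 0 :=
      ⟨ν.symm ⟨0, by omega⟩, by simp⟩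
    refine ⟨t, ?_⟩
    have hyt : gy (t : ℕ) = (p:ℝ) := by
      have h1 : gy (t : ℕ) = Y ((ν t : ℕ) + 1) := by simp [hgydef, extz, t.isLt, hydef]
      rw [h1, ht, hY 1 (by omega) (by omega), if_pos (by omega)]
    have := hpeakeq t t.isLt
    have hposS : 0 ≤ S ((t:ℕ)+1) := hSpos _ t.isLt
    have hfin : (∑ i ∈ Finset.univ.filter (· ≤ t), x i)
        - ∑ i ∈ Finset.univ.filter (· < t), y i = S (t:ℕ) + gx (t:ℕ) := by
      convert this using 3 <;> exact (Fin.eta t t.isLt).symm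
    rw [hxdef, hydef] at hfin
    rw [hfin, hpeak_after]
    rw [hyt]
    have : (p:ℝ) = 3 := by exact_mod_cast hp3.symm
    rw [this]
    linarith
  · -- p ≥ 4 : the real argument
    have hp4R : (4:ℝ) ≤ (p:ℝ) := by exact_mod_cast hp4
    by_contra hcon
    push_neg at hcon
    have hpeak : ∀ m, (hm : m < N) → S m + gx m < 2*(p:ℝ) - 3 := by
      intro m hm
      have := hcon ⟨m, hm⟩
      rw [hpeakeq m hm] at this
      exact this
    -- counting predicates
    set rc : ℕ → ℕ := fun n =>
      ((Finset.range n).filter (fun m => gx m = (p:ℝ)-1 ∧ gy m = 1)).card with hrc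
    set dc : ℕ → ℕ := fun n =>
      ((Finset.range n).filter (fun m => gy m = (p:ℝ) ∧ ¬ gx m = (p:ℝ)-1)).card with hdc
    have hne21 : (2:ℝ) ≠ (p:ℝ)-1 := by intro h; linarith
    have hne11 : (1:ℝ) ≠ (p:ℝ)-1 := by intro h; linarith
    have hnep1 : (p:ℝ) ≠ 1 := by intro h; linarith
    -- the invariant
    have hInv : ∀ n, n ≤ N → (rc n : ℕ) ≤ dc n + (if (p:ℝ)-2 ≤ S n then 1 else 0) := by
      intro n
      induction n with
      | zero =>
        intro _
        rw [hS0, if_neg (by linarith : ¬ ((p:ℝ)-2 ≤ 0))]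
        simp [hrc, hdc]
      | succ n ih =>
        intro hn1
        have hnN : n < N := by omega
        have ihn := ih (by omega)
        have hrcs : rc (n+1) = rc n + (if (gx n = (p:ℝ)-1 ∧ gy n = 1) then 1 else 0) :=
          card_filter_range_succ _ n
        have hdcs : dc (n+1) = dc n + (if (gy n = (p:ℝ) ∧ ¬ gx n = (p:ℝ)-1) then 1 else 0) :=
          card_filter_range_succ _ n
        rcases hgx3 n hnN with hxv | hxv | hxv
        · -- gx n = p - 1
          have hlow : ¬ ((p:ℝ)-2 ≤ S n) := by
            have := hpeak n hnN
            rw [hxv] at this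
            linarith
          rw [if_neg hlow, add_zero] at ihn
          rcases hgy2 n hnN with hyv | hyv
          · -- big y with big x
            have hPrn : ¬ (gx n = (p:ℝ)-1 ∧ gy n = 1) := by
              rintro ⟨-, h1⟩
              rw [hyv] at h1
              exact hnep1 h1
            have hPdn : ¬ (gy n = (p:ℝ) ∧ ¬ gx n = (p:ℝ)-1) := by
              rintro ⟨-, h1⟩
              exact h1 hxv
            rw [hrcs, hdcs, if_neg hPrn, if_neg hPdn]
            have : (0:ℕ) ≤ if (p:ℝ)-2 ≤ S (n+1) then 1 else 0 := Nat.zero_le _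
            omega
          · -- rise step
            have hPrn : (gx n = (p:ℝ)-1 ∧ gy n = 1) := ⟨hxv, hyv⟩
            have hPdn : ¬ (gy n = (p:ℝ) ∧ ¬ gx n = (p:ℝ)-1) := by
              rintro ⟨h1, -⟩
              rw [hyv] at h1
              exact hnep1 h1.symm
            have hhi : (p:ℝ)-2 ≤ S (n+1) := by
              have := hSpos n hnN.le
              rw [hSsucc, hxv, hyv]
              linarith
            rw [hrcs, hdcs, if_pos hPrn, if_neg hPdn, if_pos hhi]
            omega
        all_goals {
          -- gx n = 2 or gx n = 1
          have hxne : ¬ gx n = (p:ℝ)-1 := by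
            rw [hxv]
            first
              | exact hne21
              | exact hne11
          have hPrn : ¬ (gx n = (p:ℝ)-1 ∧ gy n = 1) := by
            rintro ⟨h1, -⟩
            exact hxne h1
          rcases hgy2 n hnN with hyv | hyv
          · -- drop step
            have hPdn : (gy n = (p:ℝ) ∧ ¬ gx n = (p:ℝ)-1) := ⟨hyv, hxne⟩
            rw [hrcs, hdcs, if_neg hPrn, if_pos hPdn]
            have h01 : (if (p:ℝ)-2 ≤ S n then 1 else 0) ≤ 1 := by split_ifs <;> omega
            have h02 : (0:ℕ) ≤ if (p:ℝ)-2 ≤ S (n+1) then 1 else 0 := Nat.zero_le _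
            omega
          · -- neutral step
            have hPdn : ¬ (gy n = (p:ℝ) ∧ ¬ gx n = (p:ℝ)-1) := by
              rintro ⟨h1, -⟩
              rw [hyv] at h1
              exact hnep1 h1.symm
            rw [hrcs, hdcs, if_neg hPrn, if_neg hPdn]
            by_cases hhi : (p:ℝ)-2 ≤ S n
            · have hhi2 : (p:ℝ)-2 ≤ S (n+1) := by
                have := hgx1 n hnN
                rw [hSsucc, hyv]
                linarith
              rw [if_pos hhi] at ihn
              rw [if_pos hhi2]
              omega
            · rw [if_neg hhi] at ihn
              have : (0:ℕ) ≤ if (p:ℝ)-2 ≤ S (n+1) then 1 else 0 := Nat.zero_le _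
              omega
        }
    -- sum over everything of extz
    have hsum_ext : ∀ (g : Fin N → ℝ), ∑ i ∈ Finset.range N, extz g i = ∑ i, g i := by
      intro g
      rw [← sum_coe_lt g N le_rfl]
      congr 1
      ext i
      simp [i.isLt]
    -- pointwise decompositions
    have hXsplit : ∀ j : Fin N, X ((j:ℕ)+1)
        = 1 + (if (j:ℕ) < p then (p:ℝ)-2 else 0) + (if (j:ℕ) = p then 1 else 0) := by
      intro j
      rw [hX _ (by omega) (by omega)]
      split_ifs with h1 h2 h3 h4 h5 <;> first | omega | ring | norm_num
    have hYsplit : ∀ j : Fin N, Y ((j:ℕ)+1)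
        = 1 + (if (j:ℕ) < p - 1 then (p:ℝ)-1 else 0) := by
      intro j
      rw [hY _ (by omega) (by omega)]
      split_ifs with h1 h2 <;> first | omega | ring | norm_num
    have hXs : ∑ i ∈ Finset.range N, gx i = (N:ℝ) + (p:ℝ) * ((p:ℝ)-2) + 1 := by
      rw [hgxdef, hsum_ext x, hxdef]
      rw [Equiv.sum_comp σ (fun j : Fin N => X ((j:ℕ)+1))]
      rw [Finset.sum_congr rfl (fun j _ => hXsplit j)]
      rw [Finset.sum_add_distrib, Finset.sum_add_distrib, Finset.sum_const,
        ← Finset.sum_filter, ← Finset.sum_filter, Finset.sum_const, Finset.sum_const,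
        card_coe_lt (show p ≤ N by omega), card_coe_eq (show p < N by omega),
        Finset.card_univ, Fintype.card_fin]
      simp [nsmul_eq_mul]
    have hYs : ∑ i ∈ Finset.range N, gy i = (N:ℝ) + ((p:ℝ)-1) * ((p:ℝ)-1) := by
      rw [hgydef, hsum_ext y, hydef]
      rw [Equiv.sum_comp ν (fun j : Fin N => Y ((j:ℕ)+1))]
      rw [Finset.sum_congr rfl (fun j _ => hYsplit j)]
      rw [Finset.sum_add_distrib, Finset.sum_const,
        ← Finset.sum_filter, Finset.sum_const,
        card_coe_lt (show p - 1 ≤ N by omega),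
        Finset.card_univ, Fintype.card_fin]
      have hc : ((p - 1 : ℕ) : ℝ) = (p:ℝ) - 1 := by
        rw [Nat.cast_sub (show 1 ≤ p by omega)]
        norm_num
      rw [nsmul_eq_mul, nsmul_eq_mul, hc]
      push_cast
      ring
    have hSN0 : S N = 0 := by
      rw [hSdef]
      simp only []
      rw [Finset.sum_sub_distrib, hXs, hYs]
      ring
    -- final counts
    have hcondx : ∀ j : Fin N, (X ((j:ℕ)+1) = (p:ℝ)-1) ↔ ((j:ℕ) < p) := by
      intro j
      rw [hX _ (by omega) (by omega)]
      split_ifs with h1 h2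
      · exact iff_of_true rfl (by omega)
      · exact iff_of_false (fun h => hne21 h) (by omega)
      · exact iff_of_false (fun h => hne11 h) (by omega)
    have hcondy : ∀ j : Fin N, (Y ((j:ℕ)+1) = (p:ℝ)) ↔ ((j:ℕ) < p - 1) := by
      intro j
      rw [hY _ (by omega) (by omega)]
      split_ifs with h1
      · exact iff_of_true rfl (by omega)
      · exact iff_of_false (fun h => hnep1 h.symm) (by omega)
    have hcx : ((Finset.range N).filter (fun m => gx m = (p:ℝ)-1)).card = p := by
      rw [card_filter_range_eq]
      have e1 : (Finset.univ.filter fun i : Fin N => gx (i:ℕ) = (p:ℝ)-1)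
          = (Finset.univ.filter fun i : Fin N => X ((σ i : ℕ)+1) = (p:ℝ)-1) := by
        apply Finset.filter_congr
        intro i _
        have hgi : gx (i:ℕ) = X ((σ i : ℕ)+1) := by simp [hgxdef, extz, i.isLt, hxdef]
        rw [hgi]
      rw [e1, card_filter_perm_comp σ (fun j : Fin N => X ((j:ℕ)+1) = (p:ℝ)-1)]
      have e2 : (Finset.univ.filter fun j : Fin N => X ((j:ℕ)+1) = (p:ℝ)-1)
          = (Finset.univ.filter fun j : Fin N => (j:ℕ) < p) := by
        apply Finset.filter_congr
        intro j _
        exact hcondx j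
      rw [e2, card_coe_lt (show p ≤ N by omega)]
    have hcy : ((Finset.range N).filter (fun m => gy m = (p:ℝ))).card = p - 1 := by
      rw [card_filter_range_eq]
      have e1 : (Finset.univ.filter fun i : Fin N => gy (i:ℕ) = (p:ℝ))
          = (Finset.univ.filter fun i : Fin N => Y ((ν i : ℕ)+1) = (p:ℝ)) := by
        apply Finset.filter_congr
        intro i _
        have hgi : gy (i:ℕ) = Y ((ν i : ℕ)+1) := by simp [hgydef, extz, i.isLt, hydef]
        rw [hgi]
      rw [e1, card_filter_perm_comp ν (fun j : Fin N => Y ((j:ℕ)+1) = (p:ℝ))]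
      have e2 : (Finset.univ.filter fun j : Fin N => Y ((j:ℕ)+1) = (p:ℝ))
          = (Finset.univ.filter fun j : Fin N => (j:ℕ) < p - 1) := by
        apply Finset.filter_congr
        intro j _
        exact hcondy j
      rw [e2, card_coe_lt (show p - 1 ≤ N by omega)]
    have hsplit1 : rc N + (((Finset.range N).filter
        (fun m => gx m = (p:ℝ)-1 ∧ ¬ gy m = 1)).card) = p := by
      have h := card_filter_and_split (Finset.range N)
        (fun m => gx m = (p:ℝ)-1) (fun m => gy m = 1)
      rw [hcx] at h
      rw [hrc]
      exact h
    have hsplit2 : (((Finset.range N).filter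
        (fun m => gy m = (p:ℝ) ∧ gx m = (p:ℝ)-1)).card) + dc N = p - 1 := by
      have h := card_filter_and_split (Finset.range N)
        (fun m => gy m = (p:ℝ)) (fun m => gx m = (p:ℝ)-1)
      rw [hcy] at h
      rw [hdc]
      exact h
    have hee : ((Finset.range N).filter (fun m => gx m = (p:ℝ)-1 ∧ ¬ gy m = 1))
        = ((Finset.range N).filter (fun m => gy m = (p:ℝ) ∧ gx m = (p:ℝ)-1)) := by
      ext m
      simp only [Finset.mem_filter, Finset.mem_range]
      constructor
      · rintro ⟨hm, hgx, hgy⟩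
        exact ⟨hm, (hgy2 m hm).resolve_right hgy, hgx⟩
      · rintro ⟨hm, hgyp, hgx⟩
        refine ⟨hm, hgx, fun h => hnep1 ?_⟩
        rw [← hgyp, h]
    have hfin := hInv N le_rfl
    rw [hSN0, if_neg (show ¬ ((p:ℝ)-2 ≤ 0) by linarith)] at hfin
    rw [hee] at hsplit1
    omega
/-- the explicit good ordering for the stock size problem -/
def fnat (p N i : ℕ) : ℕ :=
  if i + 3 < 3*p then
    (if i % 3 = 0 then i/3 else if i % 3 = 1 then p+1+i/3 else N + i/3)
  else if i + 3 = 3*p then p-1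
  else if i + 3 < 4*p then N + (i+1) - 2*p
  else if i + 3 = 4*p then p
  else if i + 2 = 4*p then N + 2*p - 2
  else if i + 1 = 4*p then N + 2*p - 1
  else if (i - 4*p) % 2 = 0 then 2*p + (i - 4*p)/2 else N + 2*p + (i - 4*p)/2

/-- the value sequence of the ordering -/
def wz (p i : ℕ) : ℤ :=
  if i + 3 < 3*p then
    (if i % 3 = 0 then (p:ℤ)-1 else if i % 3 = 1 then 1 else -(p:ℤ))
  else if i + 3 = 3*p then (p:ℤ)-1
  else if i + 3 < 4*p then -1
  else if i + 3 = 4*p then 2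
  else if i + 2 = 4*p then -1
  else if i + 1 = 4*p then -1
  else if (i - 4*p) % 2 = 0 then 1 else -1

/-- the prefix sums of the value sequence -/
def Cz (p i : ℕ) : ℤ :=
  if i + 3 < 3*p then
    (if i % 3 = 0 then 0 else if i % 3 = 1 then (p:ℤ)-1 else (p:ℤ))
  else if i + 3 = 3*p then 0
  else if i + 2 < 4*p then 4*(p:ℤ) - 3 - (i:ℤ)
  else if i + 2 = 4*p then 2
  else if i + 1 = 4*p then 1
  else if (i - 4*p) % 2 = 0 then 0 else 1

set_option maxHeartbeats 2000000 in
lemma Cz_step (p : ℕ) (hp : 3 ≤ p) (i : ℕ) : Cz p (i+1) = Cz p i + wz p i := by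
  unfold Cz wz
  split_ifs <;> omega

lemma Cz_zero (p : ℕ) (hp : 3 ≤ p) : Cz p 0 = 0 := by
  unfold Cz
  rw [if_pos (by omega), if_pos (by omega)]

set_option maxHeartbeats 2000000 in
lemma Cz_bound (p : ℕ) (hp : 3 ≤ p) (i : ℕ) : 0 ≤ Cz p i ∧ Cz p i ≤ (p:ℤ) := by
  unfold Cz
  split_ifs <;> constructor <;> omega

lemma sum_wz (p : ℕ) (hp : 3 ≤ p) (n : ℕ) :
    ∑ i ∈ Finset.range n, wz p i = Cz p n := by
  induction n with
  | zero => simp [Cz_zero p hp]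
  | succ n ih => rw [Finset.sum_range_succ, ih, ← Cz_step p hp]

set_option maxHeartbeats 2000000 in
lemma fnat_lt (p N : ℕ) (hp : 3 ≤ p) (hN1 : 3*p+1 ≤ N) (i : ℕ) (hi : i < 2*N) :
    fnat p N i < 2*N := by
  unfold fnat
  split_ifs <;> omega

set_option maxHeartbeats 2000000 in
lemma fnat_inj (p N : ℕ) (hp : 3 ≤ p) (hN1 : 3*p+1 ≤ N) (i j : ℕ)
    (hi : i < 2*N) (hj : j < 2*N) (h : fnat p N i = fnat p N j) : i = j := by
  unfold fnat at h
  split_ifs at h <;> omega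

lemma partB (p : ℕ) (hp : 3 ≤ p) (N : ℕ) (hN : N = p ^ 2 + 1)
    (X Y : ℕ → ℝ)
    (hX : ∀ i, 1 ≤ i → i ≤ N →
      X i = if i ≤ p then (p : ℝ) - 1 else if i = p + 1 then 2 else 1)
    (hY : ∀ i, 1 ≤ i → i ≤ N → Y i = if i ≤ p - 1 then (p : ℝ) else 1) :
    ∃ ρ : Equiv.Perm (Fin (2 * N)),
      ∀ t : Fin (2 * N),
        0 ≤ (∑ i ∈ Finset.univ.filter (· ≤ t),
          (if ((ρ i : ℕ)) < N then X ((ρ i : ℕ) + 1) else -Y ((ρ i : ℕ) - N + 1))) ∧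
        (∑ i ∈ Finset.univ.filter (· ≤ t),
          (if ((ρ i : ℕ)) < N then X ((ρ i : ℕ) + 1) else -Y ((ρ i : ℕ) - N + 1)))
          ≤ (p : ℝ) := by
  classical
  have hN1 : 3*p+1 ≤ N := by nlinarith
  have hf_lt : ∀ i : Fin (2*N), fnat p N (i:ℕ) < 2*N :=
    fun i => fnat_lt p N hp hN1 i i.isLt
  set f : Fin (2*N) → Fin (2*N) := fun i => ⟨fnat p N (i:ℕ), hf_lt i⟩ with hfdef
  have hinj : Function.Injective f := by
    intro i j h
    exact Fin.ext (fnat_inj p N hp hN1 i j i.isLt j.isLt (congrArg Fin.val h))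
  have hbij : Function.Bijective f := Finite.injective_iff_bijective.mp hinj
  refine ⟨Equiv.ofBijective f hbij, ?_⟩
  intro t
  set ρ : Equiv.Perm (Fin (2*N)) := Equiv.ofBijective f hbij with hρ
  have hρval : ∀ i : Fin (2*N), (ρ i : ℕ) = fnat p N (i:ℕ) := fun i => rfl
  set g : Fin (2*N) → ℝ := fun i =>
    if ((ρ i : ℕ)) < N then X ((ρ i : ℕ) + 1) else -Y ((ρ i : ℕ) - N + 1) with hg
  have hval : ∀ m, m < 2*N → extz g m = ((wz p m : ℤ) : ℝ) := by
    intro m hm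
    have hgm : extz g m
        = (if fnat p N m < N then X (fnat p N m + 1) else -Y (fnat p N m - N + 1)) := by
      simp only [extz, dif_pos hm, hg]
      rfl
    rw [hgm]
    by_cases c1 : m + 3 < 3*p
    · rcases (show m % 3 = 0 ∨ m % 3 = 1 ∨ m % 3 = 2 from by omega) with c2|c2|c2
      · have hf1 : fnat p N m = m/3 := by
          unfold fnat; rw [if_pos c1, if_pos c2]
        have hw1 : wz p m = (p:ℤ)-1 := by
          unfold wz; rw [if_pos c1, if_pos c2]
        rw [hf1, hw1, if_pos (show m/3 < N by omega), hX _ (by omega) (by omega),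
          if_pos (show m/3 + 1 ≤ p by omega)]
        push_cast; ring
      · have hf1 : fnat p N m = p+1+m/3 := by
          unfold fnat; rw [if_pos c1, if_neg (show ¬ (m % 3 = 0) by omega), if_pos c2]
        have hw1 : wz p m = 1 := by
          unfold wz; rw [if_pos c1, if_neg (show ¬ (m % 3 = 0) by omega), if_pos c2]
        rw [hf1, hw1, if_pos (show p+1+m/3 < N by omega), hX _ (by omega) (by omega),
          if_neg (show ¬ (p+1+m/3 + 1 ≤ p) by omega),
          if_neg (show ¬ (p+1+m/3 + 1 = p + 1) by omega)]
        norm_num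
      · have hf1 : fnat p N m = N + m/3 := by
          unfold fnat
          rw [if_pos c1, if_neg (show ¬ (m % 3 = 0) by omega),
            if_neg (show ¬ (m % 3 = 1) by omega)]
        have hw1 : wz p m = -(p:ℤ) := by
          unfold wz
          rw [if_pos c1, if_neg (show ¬ (m % 3 = 0) by omega),
            if_neg (show ¬ (m % 3 = 1) by omega)]
        rw [hf1, hw1, if_neg (show ¬ (N + m/3 < N) by omega),
          (show N + m/3 - N + 1 = m/3 + 1 from by omega),
          hY _ (by omega) (by omega), if_pos (show m/3 + 1 ≤ p - 1 by omega)]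
        push_cast; ring
    · by_cases c2 : m + 3 = 3*p
      · have hf1 : fnat p N m = p - 1 := by
          unfold fnat; rw [if_neg c1, if_pos c2]
        have hw1 : wz p m = (p:ℤ)-1 := by
          unfold wz; rw [if_neg c1, if_pos c2]
        rw [hf1, hw1, if_pos (show p - 1 < N by omega), hX _ (by omega) (by omega),
          if_pos (show p - 1 + 1 ≤ p by omega)]
        push_cast; ring
      · by_cases c3 : m + 3 < 4*p
        · have hf1 : fnat p N m = N + (m+1) - 2*p := by
            unfold fnat; rw [if_neg c1, if_neg c2, if_pos c3]
          have hw1 : wz p m = -1 := by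
            unfold wz; rw [if_neg c1, if_neg c2, if_pos c3]
          rw [hf1, hw1, if_neg (show ¬ (N + (m+1) - 2*p < N) by omega),
            (show N + (m+1) - 2*p - N + 1 = m + 2 - 2*p from by omega),
            hY _ (by omega) (by omega), if_neg (show ¬ (m + 2 - 2*p ≤ p - 1) by omega)]
          norm_num
        · by_cases c4 : m + 3 = 4*p
          · have hf1 : fnat p N m = p := by
              unfold fnat; rw [if_neg c1, if_neg c2, if_neg c3, if_pos c4]
            have hw1 : wz p m = 2 := by
              unfold wz; rw [if_neg c1, if_neg c2, if_neg c3, if_pos c4]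
            rw [hf1, hw1, if_pos (show p < N by omega), hX _ (by omega) (by omega),
              if_neg (show ¬ (p + 1 ≤ p) by omega), if_pos rfl]
            norm_num
          · by_cases c5 : m + 2 = 4*p
            · have hf1 : fnat p N m = N + 2*p - 2 := by
                unfold fnat; rw [if_neg c1, if_neg c2, if_neg c3, if_neg c4, if_pos c5]
              have hw1 : wz p m = -1 := by
                unfold wz; rw [if_neg c1, if_neg c2, if_neg c3, if_neg c4, if_pos c5]
              rw [hf1, hw1, if_neg (show ¬ (N + 2*p - 2 < N) by omega),
                (show N + 2*p - 2 - N + 1 = 2*p - 1 from by omega),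
                hY _ (by omega) (by omega), if_neg (show ¬ (2*p - 1 ≤ p - 1) by omega)]
              norm_num
            · by_cases c6 : m + 1 = 4*p
              · have hf1 : fnat p N m = N + 2*p - 1 := by
                  unfold fnat
                  rw [if_neg c1, if_neg c2, if_neg c3, if_neg c4, if_neg c5, if_pos c6]
                have hw1 : wz p m = -1 := by
                  unfold wz
                  rw [if_neg c1, if_neg c2, if_neg c3, if_neg c4, if_neg c5, if_pos c6]
                rw [hf1, hw1, if_neg (show ¬ (N + 2*p - 1 < N) by omega),
                  (show N + 2*p - 1 - N + 1 = 2*p from by omega),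
                  hY _ (by omega) (by omega), if_neg (show ¬ (2*p ≤ p - 1) by omega)]
                norm_num
              · by_cases c7 : (m - 4*p) % 2 = 0
                · have hf1 : fnat p N m = 2*p + (m - 4*p)/2 := by
                    unfold fnat
                    rw [if_neg c1, if_neg c2, if_neg c3, if_neg c4, if_neg c5, if_neg c6,
                      if_pos c7]
                  have hw1 : wz p m = 1 := by
                    unfold wz
                    rw [if_neg c1, if_neg c2, if_neg c3, if_neg c4, if_neg c5, if_neg c6,
                      if_pos c7]
                  rw [hf1, hw1, if_pos (show 2*p + (m - 4*p)/2 < N by omega),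
                    hX _ (by omega) (by omega),
                    if_neg (show ¬ (2*p + (m - 4*p)/2 + 1 ≤ p) by omega),
                    if_neg (show ¬ (2*p + (m - 4*p)/2 + 1 = p + 1) by omega)]
                  norm_num
                · have hf1 : fnat p N m = N + 2*p + (m - 4*p)/2 := by
                    unfold fnat
                    rw [if_neg c1, if_neg c2, if_neg c3, if_neg c4, if_neg c5, if_neg c6,
                      if_neg c7]
                  have hw1 : wz p m = -1 := by
                    unfold wz
                    rw [if_neg c1, if_neg c2, if_neg c3, if_neg c4, if_neg c5, if_neg c6,
                      if_neg c7]
                  rw [hf1, hw1, if_neg (show ¬ (N + 2*p + (m - 4*p)/2 < N) by omega),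
                    (show N + 2*p + (m - 4*p)/2 - N + 1 = 2*p + (m - 4*p)/2 + 1 from by omega),
                    hY _ (by omega) (by omega),
                    if_neg (show ¬ (2*p + (m - 4*p)/2 + 1 ≤ p - 1) by omega)]
                  norm_num
  have hsum : ∑ i ∈ Finset.univ.filter (· ≤ t), g i = ((Cz p ((t:ℕ)+1) : ℤ) : ℝ) := by
    rw [sum_filter_le' g t]
    rw [Finset.sum_congr rfl (fun m hm => hval m (by
      have := Finset.mem_range.mp hm
      omega))]
    rw [← Int.cast_sum, sum_wz p hp]
  constructor
  · rw [hsum]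
    exact_mod_cast (Cz_bound p hp ((t:ℕ)+1)).1
  · rw [hsum]
    exact_mod_cast (Cz_bound p hp ((t:ℕ)+1)).2

/-- **Gap instance between the alternating and ordinary stock size problems.**
For the instance with x-values `p` copies of `p−1`, one `2`, `p(p−1)` copies of `1`
and y-values `p−1` copies of `p`, `p(p−1)+2` copies of `1` (each multiset has
`N = p²+1` elements):
(a) every feasible alternating ordering attains a prefix value at least `2p−3`;
(b) for the ordinary stock size problem there is an ordering of all `2N` values
(x-values positive, y-values negative) with every prefix sum in `[0, p]`. -/
theorem alternating_vs_stock_size_gap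
    (p : ℕ) (hp : 3 ≤ p) (N : ℕ) (hN : N = p ^ 2 + 1)
    (X Y : ℕ → ℝ)
    (hX : ∀ i, 1 ≤ i → i ≤ N →
      X i = if i ≤ p then (p : ℝ) - 1 else if i = p + 1 then 2 else 1)
    (hY : ∀ i, 1 ≤ i → i ≤ N → Y i = if i ≤ p - 1 then (p : ℝ) else 1) :
    (∀ σ ν : Equiv.Perm (Fin N),
      (∀ t : Fin N, 0 ≤ ∑ i ∈ Finset.univ.filter (· ≤ t),
          (X ((σ i : ℕ) + 1) - Y ((ν i : ℕ) + 1))) →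
      ∃ t : Fin N,
        2 * (p : ℝ) - 3 ≤ (∑ i ∈ Finset.univ.filter (· ≤ t), X ((σ i : ℕ) + 1))
          - ∑ i ∈ Finset.univ.filter (· < t), Y ((ν i : ℕ) + 1)) ∧
    (∃ ρ : Equiv.Perm (Fin (2 * N)),
      ∀ t : Fin (2 * N),
        0 ≤ (∑ i ∈ Finset.univ.filter (· ≤ t),
          (if ((ρ i : ℕ)) < N then X ((ρ i : ℕ) + 1) else -Y ((ρ i : ℕ) - N + 1))) ∧
        (∑ i ∈ Finset.univ.filter (· ≤ t),
          (if ((ρ i : ℕ)) < N then X ((ρ i : ℕ) + 1) else -Y ((ρ i : ℕ) - N + 1)))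
          ≤ (p : ℝ)) :=
  ⟨fun σ ν hfeas => partA p hp N hN X Y hX hY σ ν hfeas,
   partB p hp N hN X Y hX hY⟩
end

section
/- Let n be an even positive integer, let x_i = 1 for all i ∈ {1,…,n}, and let y_i = 2 for i ∈ {1,…,n/2} and y_i = 0 for i ∈ {n/2+1,…,n}. Then for every permutation π of {1,…,n}, the value η(π) of the gasoline problem satisfies η(π) ≥ n/2 (for instance for the cyclic interval [n/2+1, n] the discrepancy equals n/2). Hence on this instance the optimal value is at least n/2 while μ = max(max_i x_i, max_i y_i) = 2, so the ratio between the optimum and μ is unbounded. -/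
/-- **Unbounded gap between the optimum of the gasoline problem and μ.**
For the instance `x ≡ 1`, `y_i = 2` for the first `n/2` positions and `y_i = 0`
for the rest (`n` even), every permutation `π` has gasoline value `η(π) ≥ n/2`:
any `η` bounding the discrepancy `|Σ_{i∈[k,ℓ]} x_{π(i)} − Σ_{i∈[k,ℓ−1]} y_i|` of
all cyclic intervals `[k,ℓ]` satisfies `η ≥ n/2`.  (A cyclic interval `[k,ℓ]` is
`{i : k ≤ i ≤ ℓ}` if `k ≤ ℓ` and `{i : k ≤ i ∨ i ≤ ℓ}` otherwise, and `[k,ℓ−1]`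
is `[k,ℓ]` with `ℓ` removed.) -/
theorem gasoline_gap_instance
    (n : ℕ) (hn : 0 < n) (heven : Even n)
    (x y : Fin n → ℝ)
    (hx : ∀ i, x i = 1)
    (hy : ∀ i : Fin n, y i = if (i : ℕ) < n / 2 then 2 else 0)
    (π : Equiv.Perm (Fin n)) (η : ℝ)
    (hη : ∀ k ℓ : Fin n,
      |(∑ i ∈ Finset.univ.filter
          (fun i : Fin n => (k ≤ ℓ ∧ k ≤ i ∧ i ≤ ℓ) ∨ (ℓ < k ∧ (k ≤ i ∨ i ≤ ℓ))),
          x (π i))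
        - (∑ i ∈ Finset.univ.filter
          (fun i : Fin n =>
            ((k ≤ ℓ ∧ k ≤ i ∧ i ≤ ℓ) ∨ (ℓ < k ∧ (k ≤ i ∨ i ≤ ℓ))) ∧ i ≠ ℓ),
          y i)| ≤ η) :
    (n : ℝ) / 2 ≤ η := by
  have hn2 : n / 2 < n := Nat.div_lt_self hn (by norm_num)
  have hn1 : n - 1 < n := by omega
  set k : Fin n := ⟨n / 2, hn2⟩ with hk
  set ℓ : Fin n := ⟨n - 1, hn1⟩ with hℓ
  have h := hη k ℓ
  have hpred : ∀ i : Fin n,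
      ((k ≤ ℓ ∧ k ≤ i ∧ i ≤ ℓ) ∨ (ℓ < k ∧ (k ≤ i ∨ i ≤ ℓ))) ↔ n / 2 ≤ (i : ℕ) := by
    intro i
    have hi := i.isLt
    simp only [Fin.le_def, Fin.lt_def, hk, hℓ]
    omega
  have hxsum : (∑ i ∈ Finset.univ.filter
      (fun i : Fin n => (k ≤ ℓ ∧ k ≤ i ∧ i ≤ ℓ) ∨ (ℓ < k ∧ (k ≤ i ∨ i ≤ ℓ))),
      x (π i)) = ((n - n / 2 : ℕ) : ℝ) := by
    rw [Finset.filter_congr (fun i _ => hpred i)]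
    rw [Finset.sum_congr rfl (fun i _ => hx (π i)), Finset.sum_const, nsmul_eq_mul,
      mul_one]
    congr 1
    have : (Finset.univ.filter (fun i : Fin n => n / 2 ≤ (i : ℕ))) = Finset.Ici k := by
      ext i
      simp [Finset.mem_Ici, Fin.le_def, hk]
    rw [this, Fin.card_Ici]
  have hysum : (∑ i ∈ Finset.univ.filter
      (fun i : Fin n =>
        ((k ≤ ℓ ∧ k ≤ i ∧ i ≤ ℓ) ∨ (ℓ < k ∧ (k ≤ i ∨ i ≤ ℓ))) ∧ i ≠ ℓ),
      y i) = 0 := by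
    apply Finset.sum_eq_zero
    intro i hi
    simp only [Finset.mem_filter] at hi
    have : n / 2 ≤ (i : ℕ) := (hpred i).mp hi.2.1
    rw [hy i, if_neg (by omega)]
  rw [hxsum, hysum, sub_zero] at h
  obtain ⟨m, hm⟩ := heven
  have : ((n - n / 2 : ℕ) : ℝ) = (n : ℝ) / 2 := by
    subst hm
    have : m + m - (m + m) / 2 = m := by omega
    rw [this]
    push_cast
    ring
  rw [this] at h
  calc (n : ℝ) / 2 = |(n : ℝ) / 2| := by
        rw [abs_of_nonneg]; positivity
    _ ≤ η := h
end
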